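/- arXiv:1803.04369 — 5 statements merged into one kernel-verified Lean document; each statement's English description precedes it below -/
import Mathlib

section
/- (Variable order Young integration) Let α, γ : [0,T] → (0,1) be C¹ regularity functions satisfying condition A1, let X ∈ C^{α(·)}([0,T];ℝ^d) and Y ∈ C^{γ(·)}([0,T];ℝ), and assume β := inf_{t∈[0,T]} (α(t) + γ(t)) > 1. Define Ξ(s,t) = Y_s · (X_t − X_s). Then the sewing map applies and produces an integral IΞ = ∫ Y dX satisfying |(IΞ)(s,t) − Y_s X_{s,t}| ≤ C_β ‖Y‖_{γ(·);[s,t]} ‖X‖_{α(·);[s,t]} |t−s|^β. -/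
set_option maxHeartbeats 1000000

open Finset Filter Topology

section Sewing

variable {E : Type*} [NormedAddCommGroup E]

lemma sew_split
    (T β K : ℝ) (hβ : 1 < β) (hK : 0 ≤ K)
    (Ξ : ℝ → ℝ → E) (hΞ0 : ∀ x, Ξ x x = 0)
    (hδ : ∀ s u t : ℝ, 0 ≤ s → s ≤ u → u ≤ t → t ≤ T →
      ‖Ξ s t - Ξ s u - Ξ u t‖ ≤ K * (t - s) ^ β) :
    ∀ m : ℕ, ∀ x0 h t : ℝ, 0 ≤ x0 → 0 < h → x0 + m * h ≤ t →
      t ≤ x0 + (m + 1) * h → t ≤ T →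
      ‖(∑ k ∈ Finset.range m, Ξ (x0 + k * h) (x0 + (k + 1) * h))
        + Ξ (x0 + m * h) t - Ξ x0 t‖
        ≤ (1 - (2/3 : ℝ) ^ (β - 1))⁻¹ * (K * (t - x0) ^ β) := by
  have hθ0 : (0:ℝ) < (2/3 : ℝ) ^ (β - 1) := Real.rpow_pos_of_pos (by norm_num) _
  have hθ1 : (2/3 : ℝ) ^ (β - 1) < 1 :=
    Real.rpow_lt_one (by norm_num) (by norm_num) (by linarith)
  set θ : ℝ := (2/3 : ℝ) ^ (β - 1) with hθ
  set D : ℝ := (1 - θ)⁻¹ with hD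
  have hD0 : 0 < D := by
    rw [hD]; exact inv_pos.mpr (by linarith)
  have hD1 : 1 ≤ D := by
    rw [hD, le_inv_comm₀] <;> nlinarith
  have hDθ : D * θ + 1 = D := by
    rw [hD]
    have h1 : 1 - θ ≠ 0 := ne_of_gt (by linarith)
    field_simp; ring
  intro m
  induction m using Nat.strong_induction_on with
  | _ m ih =>
    intro x0 h t hx0 hh hmt htm htT
    have hmh0 : (0:ℝ) ≤ (m:ℝ) * h := by positivity
    have ht0 : 0 ≤ t - x0 := by linarith
    match m, ih with
    | 0, ih =>
      simp only [Nat.cast_zero, zero_mul, add_zero, Finset.range_zero, Finset.sum_empty,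
        zero_add, sub_self, norm_zero]
      positivity
    | 1, ih =>
      have hs1 : (∑ k ∈ Finset.range 1, Ξ (x0 + k * h) (x0 + (k + 1) * h))
          = Ξ x0 (x0 + h) := by
        rw [Finset.sum_range_one]; norm_num
      rw [hs1]
      have h1 : ‖Ξ x0 (x0 + h) + Ξ (x0 + (1:ℕ) * h) t - Ξ x0 t‖
          = ‖Ξ x0 t - Ξ x0 (x0 + h) - Ξ (x0 + h) t‖ := by
        push_cast; rw [one_mul, ← norm_neg]; congr 1; abel
      rw [h1]
      have hmt' : x0 + h ≤ t := by push_cast at hmt; linarith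
      have hd := hδ x0 (x0 + h) t hx0 (by linarith) hmt' htT
      have hb : K * (t - x0) ^ β ≤ D * (K * (t - x0) ^ β) := by
        nlinarith [Real.rpow_nonneg ht0 β, mul_nonneg hK (Real.rpow_nonneg ht0 β)]
      linarith
    | (n + 2), ih =>
      set m : ℕ := n + 2 with hm
      have hm2 : 2 ≤ m := by omega
      set j : ℕ := (m + 1) / 2 with hj
      have hj1 : 1 ≤ j := by omega
      have hjm : j < m := by omega
      have h3j : 3 * j ≤ 2 * m := by omega
      have hm3j : m + 1 ≤ 3 * j := by omega
      set p : ℝ := x0 + j * h with hp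
      have hmh : (m : ℝ) * h ≤ t - x0 := by linarith
      have htm1 : t - x0 ≤ ((m : ℝ) + 1) * h := by linarith
      have hjh0 : (0:ℝ) ≤ (j:ℝ) * h := by positivity
      have hjm' : (j : ℝ) * h ≤ (m : ℝ) * h := by
        have : (j : ℝ) ≤ (m : ℝ) := by exact_mod_cast hjm.le
        nlinarith
      have hpt : p ≤ t := by rw [hp]; linarith
      have ha23 : (j : ℝ) * h ≤ 2/3 * (t - x0) := by
        have : (3 : ℝ) * j ≤ 2 * m := by exact_mod_cast h3j
        nlinarith
      have hb23 : (t - x0) - (j : ℝ) * h ≤ 2/3 * (t - x0) := by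
        have : (m : ℝ) + 1 ≤ 3 * j := by exact_mod_cast hm3j
        nlinarith
      -- split the sum
      have hsum : (∑ k ∈ Finset.range m, Ξ (x0 + k * h) (x0 + (k + 1) * h))
          = (∑ k ∈ Finset.range j, Ξ (x0 + k * h) (x0 + (k + 1) * h))
            + ∑ i ∈ Finset.range (m - j), Ξ (p + i * h) (p + (i + 1) * h) := by
        conv_lhs => rw [show m = j + (m - j) by omega, Finset.sum_range_add]
        congr 1
        refine Finset.sum_congr rfl fun i _ => ?_
        rw [hp]
        congr 1 <;> push_cast <;> ring
      have hdecomp : (∑ k ∈ Finset.range m, Ξ (x0 + k * h) (x0 + (k + 1) * h))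
            + Ξ (x0 + m * h) t - Ξ x0 t
          = ((∑ k ∈ Finset.range j, Ξ (x0 + k * h) (x0 + (k + 1) * h))
              + Ξ (x0 + j * h) p - Ξ x0 p)
            + ((∑ i ∈ Finset.range (m - j), Ξ (p + i * h) (p + (i + 1) * h))
              + Ξ (p + (m - j : ℕ) * h) t - Ξ p t)
            - (Ξ x0 t - Ξ x0 p - Ξ p t) := by
        rw [hsum]
        have h1 : Ξ (x0 + (j:ℝ) * h) p = 0 := by rw [hp]; exact hΞ0 _
        have h2 : p + ((m - j : ℕ) : ℝ) * h = x0 + m * h := by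
          rw [hp]; push_cast [Nat.cast_sub hjm.le]; ring
        rw [h1, h2]; abel
      rw [hdecomp]
      -- apply induction hypothesis twice and hδ
      have IH1 := ih j hjm x0 h p hx0 hh (le_of_eq (by rw [hp]))
        (by rw [hp]; nlinarith) (by linarith)
      have IH2 := ih (m - j) (by omega) p h t (by rw [hp]; positivity) hh
        (by rw [hp]; push_cast [Nat.cast_sub hjm.le]; push_cast at hmt; linarith)
        (by rw [hp]; push_cast [Nat.cast_sub hjm.le]; push_cast at htm; linarith) htT
      have hδ1 := hδ x0 p t hx0 (by rw [hp]; linarith) hpt htT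
      rw [hp] at IH1
      have IH1' : ‖(∑ k ∈ Finset.range j, Ξ (x0 + k * h) (x0 + (k + 1) * h))
          + Ξ (x0 + j * h) p - Ξ x0 p‖ ≤ D * (K * ((j:ℝ) * h) ^ β) := by
        rw [hp]
        convert IH1 using 4 <;> ring
      -- key scalar inequality
      set a : ℝ := (j:ℝ) * h with hadef
      set b : ℝ := t - p with hbdef
      set L : ℝ := t - x0 with hLdef
      have hL0 : 0 < L := by
        have : (2:ℝ) ≤ (m:ℝ) := by exact_mod_cast hm2
        nlinarith
      have hb0 : 0 ≤ b := by rw [hbdef]; linarith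
      have hab : a + b = L := by rw [hadef, hbdef, hLdef, hp]; ring
      have hb23' : b ≤ 2/3 * L := by rw [hbdef, hLdef, hp]; rw [hLdef] at hb23; linarith
      have hkey : ∀ x : ℝ, 0 ≤ x → x ≤ 2/3 * L → x ^ β ≤ x * (2/3 * L) ^ (β - 1) := by
        intro x hx hxL
        rcases eq_or_lt_of_le hx with hx0 | hx0
        · rw [← hx0, Real.zero_rpow (by linarith), zero_mul]
        · have : x ^ β = x * x ^ (β - 1) := by
            rw [show β = 1 + (β - 1) by ring, Real.rpow_add hx0, Real.rpow_one]
            ring_nf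
          rw [this]
          have := Real.rpow_le_rpow hx hxL (by linarith : (0:ℝ) ≤ β - 1)
          nlinarith [Real.rpow_nonneg hx (β-1)]
      have hsum_ab : a ^ β + b ^ β ≤ θ * L ^ β := by
        have h1 := hkey a hjh0 ha23
        have h2 := hkey b hb0 hb23'
        have h3 : a * (2/3 * L) ^ (β - 1) + b * (2/3 * L) ^ (β - 1)
            = L * ((2/3:ℝ) ^ (β-1) * L ^ (β-1)) := by
          rw [Real.mul_rpow (by norm_num) hL0.le, ← hab]; ring
        have hLb : L ^ β = L * L ^ (β - 1) := by
          have hq := Real.rpow_add hL0 1 (β - 1)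
          rw [show (1:ℝ) + (β - 1) = β by ring, Real.rpow_one] at hq
          exact hq
        have h4 : L * ((2/3:ℝ) ^ (β-1) * L ^ (β-1)) = θ * L ^ β := by
          rw [hθ, hLb]; ring
        linarith
      have hCn : ‖-(Ξ x0 t - Ξ x0 p - Ξ p t)‖ ≤ K * L ^ β := by
        rw [norm_neg]; rw [hLdef]; exact hδ1
      calc ‖((∑ k ∈ Finset.range j, Ξ (x0 + k * h) (x0 + (k + 1) * h))
              + Ξ (x0 + j * h) p - Ξ x0 p)
            + ((∑ i ∈ Finset.range (m - j), Ξ (p + i * h) (p + (i + 1) * h))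
              + Ξ (p + (m - j : ℕ) * h) t - Ξ p t)
            - (Ξ x0 t - Ξ x0 p - Ξ p t)‖
          ≤ ‖((∑ k ∈ Finset.range j, Ξ (x0 + k * h) (x0 + (k + 1) * h))
              + Ξ (x0 + j * h) p - Ξ x0 p)‖
            + ‖((∑ i ∈ Finset.range (m - j), Ξ (p + i * h) (p + (i + 1) * h))
              + Ξ (p + (m - j : ℕ) * h) t - Ξ p t)‖
            + ‖-(Ξ x0 t - Ξ x0 p - Ξ p t)‖ := by
            rw [sub_eq_add_neg]
            exact norm_add₃_le
        _ ≤ D * (K * a ^ β) + D * (K * b ^ β) + K * L ^ β := by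
            refine add_le_add (add_le_add IH1' ?_) hCn
            rw [hbdef]; exact IH2
        _ = D * K * (a ^ β + b ^ β) + K * L ^ β := by ring
        _ ≤ D * K * (θ * L ^ β) + K * L ^ β := by
            have := mul_le_mul_of_nonneg_left hsum_ab (mul_nonneg hD0.le hK)
            linarith
        _ = (D * θ + 1) * (K * L ^ β) := by ring
        _ = D * (K * L ^ β) := by rw [hDθ]
        _ = D * (K * (t - x0) ^ β) := by rw [hLdef]

end Sewing

section SewExists

variable {E : Type*} [NormedAddCommGroup E] [CompleteSpace E]

lemma sewing_exists
    (T β K : ℝ) (hT : 0 < T) (hβ : 1 < β) (hK : 0 ≤ K)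
    (Ξ : ℝ → ℝ → E) (hΞ0 : ∀ x, Ξ x x = 0)
    (hδ : ∀ s u t : ℝ, 0 ≤ s → s ≤ u → u ≤ t → t ≤ T →
      ‖Ξ s t - Ξ s u - Ξ u t‖ ≤ K * (t - s) ^ β) :
    ∃ C > (0:ℝ), ∃ I : ℝ → E, I 0 = 0 ∧ ∀ s t : ℝ, 0 ≤ s → s ≤ t → t ≤ T →
      ‖(I t - I s) - Ξ s t‖ ≤ C * K * (t - s) ^ β := by
  have hθ0 : (0:ℝ) < (2/3 : ℝ) ^ (β - 1) := Real.rpow_pos_of_pos (by norm_num) _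
  have hθ1 : (2/3 : ℝ) ^ (β - 1) < 1 :=
    Real.rpow_lt_one (by norm_num) (by norm_num) (by linarith)
  set D : ℝ := (1 - (2/3 : ℝ) ^ (β - 1))⁻¹ with hD
  have hD0 : 0 < D := inv_pos.mpr (by linarith)
  have key := sew_split T β K hβ hK Ξ hΞ0 hδ
  rw [← hD] at key
  -- the dyadic grid
  set h : ℕ → ℝ := fun n => T / 2 ^ n with hh
  have hhpos : ∀ n, 0 < h n := fun n => by rw [hh]; positivity
  set b : ℕ → ℝ → ℕ := fun n t => ⌊t / h n⌋₊ with hb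
  set J : ℕ → ℝ → E := fun n t =>
    (∑ k ∈ Finset.range (b n t), Ξ (k * h n) ((k + 1) * h n)) + Ξ (b n t * h n) t with hJ
  -- floor facts
  have hfl : ∀ n (t : ℝ), 0 ≤ t → (b n t : ℝ) * h n ≤ t := by
    intro n t ht
    have h1 : (b n t : ℝ) ≤ t / h n := Nat.floor_le (by positivity)
    rw [← le_div_iff₀ (hhpos n)]
    exact h1
  have hfl2 : ∀ n (t : ℝ), t < ((b n t : ℝ) + 1) * h n := by
    intro n t
    have h1 : t / h n < (b n t : ℝ) + 1 := Nat.lt_floor_add_one _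
    rw [← div_lt_iff₀ (hhpos n)]
    exact h1
  have hble : ∀ n (t : ℝ), t ≤ T → b n t ≤ 2 ^ n := by
    intro n t ht
    have h1 : b n t ≤ ⌊T / h n⌋₊ :=
      Nat.floor_le_floor (by apply div_le_div_of_nonneg_right ht (hhpos n).le)
    have h2 : T / h n = ((2 ^ n : ℕ) : ℝ) := by
      rw [hh]; push_cast; field_simp
    rw [h2, Nat.floor_natCast] at h1
    exact h1
  -- pairing identity
  have pair : ∀ (f : ℕ → E) (q : ℕ),
      ∑ k ∈ Finset.range (2 * q), f k = ∑ k ∈ Finset.range q, (f (2 * k) + f (2 * k + 1)) := by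
    intro f q
    induction q with
    | zero => simp
    | succ q ihq =>
      rw [show 2 * (q + 1) = 2 * q + 1 + 1 by omega, Finset.sum_range_succ,
        Finset.sum_range_succ, ihq, Finset.sum_range_succ]
      abel
  -- geometric bound for consecutive terms
  have hgeo : ∀ n (t : ℝ), 0 ≤ t → t ≤ T →
      dist (J n t) (J (n + 1) t) ≤ (2 * K * T ^ β) * ((2:ℝ) ^ (1 - β)) ^ n := by
    intro n t ht0 htT
    have hh2pos := hhpos (n + 1)
    have hhnpos := hhpos n
    have hhn2 : h n = 2 * h (n + 1) := by
      rw [hh]; simp only [pow_succ]; field_simp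
    have hKh0 : 0 ≤ K * (h n) ^ β := mul_nonneg hK (Real.rpow_nonneg (hhpos n).le β)
    have hlow : 2 * b n t ≤ b (n + 1) t := by
      apply Nat.le_floor
      rw [le_div_iff₀ hh2pos]
      have h1 := hfl n t ht0
      rw [hhn2] at h1
      push_cast
      linarith
    have hhigh : b (n + 1) t < 2 * b n t + 2 := by
      rw [Nat.floor_lt (by positivity)]
      rw [div_lt_iff₀ hh2pos]
      have h1 := hfl2 n t
      rw [hhn2] at h1
      push_cast
      linarith
    -- cell-wise bound
    have cell : ∀ k : ℕ, k < b n t →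
        ‖(Ξ (((2*k : ℕ) : ℝ) * h (n+1)) ((((2*k : ℕ) : ℝ) + 1) * h (n+1))
          + Ξ (((2*k+1 : ℕ) : ℝ) * h (n+1)) ((((2*k+1 : ℕ) : ℝ) + 1) * h (n+1)))
          - Ξ ((k : ℝ) * h n) (((k : ℝ) + 1) * h n)‖ ≤ K * (h n) ^ β := by
      intro k hk
      have e1 : ((2 * k : ℕ) : ℝ) * h (n+1) = (k : ℝ) * h n := by
        push_cast; rw [hhn2]; ring
      have e2 : (((2 * k : ℕ) : ℝ) + 1) * h (n+1) = ((2 * k + 1 : ℕ) : ℝ) * h (n+1) := by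
        push_cast; ring
      have e3 : (((2 * k + 1 : ℕ) : ℝ) + 1) * h (n+1) = ((k : ℝ) + 1) * h n := by
        push_cast; rw [hhn2]; ring
      have hk1 : ((k : ℝ) + 1) * h n ≤ t := by
        have hkB : ((k : ℝ) + 1) ≤ ((b n t : ℕ) : ℝ) := by exact_mod_cast hk
        have hBt := hfl n t ht0
        nlinarith [hhnpos.le]
      have hd := hδ ((k : ℝ) * h n) (((2 * k + 1 : ℕ) : ℝ) * h (n+1)) (((k : ℝ) + 1) * h n)
        (by positivity)
        (by push_cast; rw [hhn2]; nlinarith [hh2pos.le])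
        (by push_cast; rw [hhn2]; nlinarith [hh2pos.le])
        (by linarith)
      have enorm : ‖(Ξ (((2*k : ℕ) : ℝ) * h (n+1)) ((((2*k : ℕ) : ℝ) + 1) * h (n+1))
          + Ξ (((2*k+1 : ℕ) : ℝ) * h (n+1)) ((((2*k+1 : ℕ) : ℝ) + 1) * h (n+1)))
          - Ξ ((k : ℝ) * h n) (((k : ℝ) + 1) * h n)‖
          = ‖Ξ ((k : ℝ) * h n) (((k : ℝ) + 1) * h n)
            - Ξ ((k : ℝ) * h n) (((2 * k + 1 : ℕ) : ℝ) * h (n+1))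
            - Ξ (((2 * k + 1 : ℕ) : ℝ) * h (n+1)) (((k : ℝ) + 1) * h n)‖ := by
        rw [e1, e2, e3, ← norm_neg]
        congr 1
        abel
      rw [enorm]
      calc ‖Ξ ((k : ℝ) * h n) (((k : ℝ) + 1) * h n)
            - Ξ ((k : ℝ) * h n) (((2 * k + 1 : ℕ) : ℝ) * h (n+1))
            - Ξ (((2 * k + 1 : ℕ) : ℝ) * h (n+1)) (((k : ℝ) + 1) * h n)‖
          ≤ K * ((((k : ℝ) + 1) * h n) - ((k : ℝ) * h n)) ^ β := hd
        _ = K * (h n) ^ β := by rw [show (((k : ℝ) + 1) * h n) - ((k : ℝ) * h n) = h n by ring]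
    have sumbound : ‖∑ k ∈ Finset.range (b n t),
        ((Ξ (((2*k : ℕ) : ℝ) * h (n+1)) ((((2*k : ℕ) : ℝ) + 1) * h (n+1))
          + Ξ (((2*k+1 : ℕ) : ℝ) * h (n+1)) ((((2*k+1 : ℕ) : ℝ) + 1) * h (n+1)))
          - Ξ ((k : ℝ) * h n) (((k : ℝ) + 1) * h n))‖
        ≤ (b n t : ℝ) * (K * (h n) ^ β) := by
      calc ‖∑ k ∈ Finset.range (b n t), _‖
          ≤ ∑ k ∈ Finset.range (b n t),
            ‖(Ξ (((2*k : ℕ) : ℝ) * h (n+1)) ((((2*k : ℕ) : ℝ) + 1) * h (n+1))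
              + Ξ (((2*k+1 : ℕ) : ℝ) * h (n+1)) ((((2*k+1 : ℕ) : ℝ) + 1) * h (n+1)))
              - Ξ ((k : ℝ) * h n) (((k : ℝ) + 1) * h n)‖ := norm_sum_le _ _
        _ ≤ ∑ k ∈ Finset.range (b n t), K * (h n) ^ β :=
            Finset.sum_le_sum (fun k hk => cell k (Finset.mem_range.mp hk))
        _ = (b n t : ℝ) * (K * (h n) ^ β) := by
            rw [Finset.sum_const, Finset.card_range, nsmul_eq_mul]
    have pairB := pair (fun k : ℕ => Ξ ((k : ℝ) * h (n+1)) (((k : ℝ) + 1) * h (n+1))) (b n t)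
    -- case split
    have hBB : b (n + 1) t = 2 * b n t ∨ b (n + 1) t = 2 * b n t + 1 := by omega
    have hmain : dist (J n t) (J (n + 1) t) ≤ ((b n t : ℝ) + 1) * (K * (h n) ^ β) := by
      rw [dist_eq_norm, norm_sub_rev]
      rcases hBB with hcase | hcase
      · have hid : J (n + 1) t - J n t = ∑ k ∈ Finset.range (b n t),
            ((Ξ (((2*k : ℕ) : ℝ) * h (n+1)) ((((2*k : ℕ) : ℝ) + 1) * h (n+1))
              + Ξ (((2*k+1 : ℕ) : ℝ) * h (n+1)) ((((2*k+1 : ℕ) : ℝ) + 1) * h (n+1)))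
              - Ξ ((k : ℝ) * h n) (((k : ℝ) + 1) * h n)) := by
          rw [hJ]
          simp only []
          rw [hcase, pairB, show ((2 * b n t : ℕ) : ℝ) * h (n+1) = ((b n t : ℕ) : ℝ) * h n by
            push_cast; rw [hhn2]; ring, Finset.sum_sub_distrib]
          abel
        rw [hid]
        have hb0 : (0:ℝ) ≤ (b n t : ℝ) := Nat.cast_nonneg _
        nlinarith [sumbound]
      · have htail : ((2 * b n t + 1 : ℕ) : ℝ) * h (n+1) ≤ t := by
          have h1 := hfl (n+1) t ht0
          rw [hcase] at h1
          exact h1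
        have etail : ((2 * b n t : ℕ) : ℝ) * h (n+1) = ((b n t : ℕ) : ℝ) * h n := by
          push_cast; rw [hhn2]; ring
        have htn : t - ((b n t : ℕ) : ℝ) * h n ≤ h n := by
          have := hfl2 n t
          push_cast
          linarith
        have htb0 : 0 ≤ t - ((b n t : ℕ) : ℝ) * h n := by
          have := hfl n t ht0
          linarith
        have hdtail := hδ (((b n t : ℕ) : ℝ) * h n) (((2 * b n t + 1 : ℕ) : ℝ) * h (n+1)) t
          (by positivity)
          (by rw [← etail]; push_cast; nlinarith [hh2pos.le])
          htail htT
        have htailbound : ‖Ξ (((2*(b n t) : ℕ) : ℝ) * h (n+1)) ((((2*(b n t) : ℕ) : ℝ) + 1) * h (n+1))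
            + Ξ (((2 * b n t + 1 : ℕ) : ℝ) * h (n+1)) t - Ξ (((b n t : ℕ) : ℝ) * h n) t‖
            ≤ K * (h n) ^ β := by
          have e2' : (((2 * (b n t) : ℕ) : ℝ) + 1) * h (n+1)
              = ((2 * b n t + 1 : ℕ) : ℝ) * h (n+1) := by push_cast; ring
          rw [etail, e2', ← norm_neg]
          have : -(Ξ (((b n t : ℕ) : ℝ) * h n) (((2 * b n t + 1 : ℕ) : ℝ) * h (n+1))
              + Ξ (((2 * b n t + 1 : ℕ) : ℝ) * h (n+1)) t - Ξ (((b n t : ℕ) : ℝ) * h n) t)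
              = Ξ (((b n t : ℕ) : ℝ) * h n) t
                - Ξ (((b n t : ℕ) : ℝ) * h n) (((2 * b n t + 1 : ℕ) : ℝ) * h (n+1))
                - Ξ (((2 * b n t + 1 : ℕ) : ℝ) * h (n+1)) t := by abel
          rw [this]
          calc ‖_‖ ≤ K * (t - ((b n t : ℕ) : ℝ) * h n) ^ β := hdtail
            _ ≤ K * (h n) ^ β := by
                apply mul_le_mul_of_nonneg_left _ hK
                exact Real.rpow_le_rpow htb0 htn (by linarith)
        have hid : J (n + 1) t - J n t = (∑ k ∈ Finset.range (b n t),
            ((Ξ (((2*k : ℕ) : ℝ) * h (n+1)) ((((2*k : ℕ) : ℝ) + 1) * h (n+1))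
              + Ξ (((2*k+1 : ℕ) : ℝ) * h (n+1)) ((((2*k+1 : ℕ) : ℝ) + 1) * h (n+1)))
              - Ξ ((k : ℝ) * h n) (((k : ℝ) + 1) * h n)))
            + (Ξ (((2*(b n t) : ℕ) : ℝ) * h (n+1)) ((((2*(b n t) : ℕ) : ℝ) + 1) * h (n+1))
              + Ξ (((2 * b n t + 1 : ℕ) : ℝ) * h (n+1)) t - Ξ (((b n t : ℕ) : ℝ) * h n) t) := by
          rw [hJ]
          simp only []
          rw [hcase, show 2 * b n t + 1 = (2 * b n t) + 1 by rfl, Finset.sum_range_succ, pairB,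
            Finset.sum_sub_distrib]
          push_cast
          abel
        rw [hid]
        have hb0 : (0:ℝ) ≤ (b n t : ℝ) := Nat.cast_nonneg _
        calc ‖_ + _‖ ≤ _ + _ := norm_add_le _ _
          _ ≤ (b n t : ℝ) * (K * (h n) ^ β) + K * (h n) ^ β := add_le_add sumbound htailbound
          _ = ((b n t : ℝ) + 1) * (K * (h n) ^ β) := by ring
    -- numeric: geometric bound
    have hBle : ((b n t : ℕ) : ℝ) ≤ (2:ℝ) ^ n := by exact_mod_cast hble n t htT
    have hone : (1:ℝ) ≤ (2:ℝ) ^ n := one_le_pow₀ one_le_two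
    have hhne : (h n) ^ β = T ^ β * (2:ℝ) ^ (-(n:ℝ) * β) := by
      rw [hh]
      simp only []
      rw [div_eq_mul_inv, ← Real.rpow_natCast (2:ℝ) n, ← Real.rpow_neg (by norm_num),
        Real.mul_rpow hT.le (Real.rpow_nonneg (by norm_num) _), ← Real.rpow_mul (by norm_num)]
    have hrn : ((2:ℝ) ^ (1 - β)) ^ n = (2:ℝ) ^ ((1 - β) * (n:ℝ)) := by
      rw [← Real.rpow_natCast ((2:ℝ) ^ (1-β)) n, ← Real.rpow_mul (by norm_num)]
    calc dist (J n t) (J (n + 1) t) ≤ ((b n t : ℝ) + 1) * (K * (h n) ^ β) := hmain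
      _ ≤ (2 * (2:ℝ) ^ n) * (K * (h n) ^ β) :=
          mul_le_mul_of_nonneg_right (by linarith) hKh0
      _ = 2 * K * T ^ β * ((2:ℝ) ^ ((n:ℝ)) * (2:ℝ) ^ (-(n:ℝ) * β)) := by
          rw [hhne, Real.rpow_natCast]; ring
      _ = 2 * K * T ^ β * (2:ℝ) ^ ((1 - β) * (n:ℝ)) := by
          rw [← Real.rpow_add (by norm_num : (0:ℝ) < 2)]
          congr 1
          ring
      _ = (2 * K * T ^ β) * ((2:ℝ) ^ (1 - β)) ^ n := by rw [hrn]
  -- convergence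
  have hrlt1 : (2:ℝ) ^ (1 - β) < 1 :=
    Real.rpow_lt_one_of_one_lt_of_neg one_lt_two (by linarith)
  have hconv : ∀ t : ℝ, 0 ≤ t → t ≤ T → ∃ L : E, Filter.Tendsto (fun n => J n t)
      Filter.atTop (nhds L) := by
    intro t ht0 htT
    have hc : CauchySeq (fun n => J n t) :=
      cauchySeq_of_le_geometric _ _ hrlt1 (fun n => hgeo n t ht0 htT)
    exact cauchySeq_tendsto_of_complete hc
  classical
  set I : ℝ → E := fun t => if ht : 0 ≤ t ∧ t ≤ T then (hconv t ht.1 ht.2).choose else 0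
    with hI
  have hItend : ∀ t : ℝ, 0 ≤ t → t ≤ T →
      Filter.Tendsto (fun n => J n t) Filter.atTop (nhds (I t)) := by
    intro t ht0 htT
    rw [hI]
    simp only [dif_pos (And.intro ht0 htT)]
    exact (hconv t ht0 htT).choose_spec
  have hJ0 : ∀ n, J n 0 = 0 := by
    intro n
    rw [hJ]
    simp only []
    have hb0 : b n 0 = 0 := by rw [hb]; simp
    rw [hb0]
    simp [hΞ0]
  have hI0 : I 0 = 0 := by
    have h1 := hItend 0 le_rfl hT.le
    simp only [hJ0] at h1
    exact (tendsto_nhds_unique h1 tendsto_const_nhds)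
  refine ⟨D + 1, by linarith, I, hI0, fun s t hs hst htT => ?_⟩
  have ht0 : 0 ≤ t := le_trans hs hst
  -- per-level estimate
  have hper : ∀ n : ℕ, ‖(J n t - J n s) - Ξ s t‖ ≤ (D + 1) * K * ((t - s) + h n) ^ β := by
    intro n
    have hhnpos := hhpos n
    have habn : b n s ≤ b n t := Nat.floor_le_floor (by
      apply div_le_div_of_nonneg_right hst (hhpos n).le)
    have hcast : ((b n t - b n s : ℕ) : ℝ) = (b n t : ℝ) - (b n s : ℝ) :=
      Nat.cast_sub habn
    have hV := key (b n t - b n s) ((b n s : ℝ) * h n) (h n) t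
      (by positivity) hhnpos
      (by rw [hcast]; have := hfl n t ht0; push_cast; nlinarith [hhnpos.le])
      (by rw [hcast]; have := hfl2 n t; push_cast; nlinarith [hhnpos.le]) htT
    -- identify J n t - J n s with the partition sum
    have hid : J n t - J n s
        = ((∑ k ∈ Finset.range (b n t - b n s),
            Ξ ((b n s : ℝ) * h n + (k : ℝ) * h n) ((b n s : ℝ) * h n + ((k : ℝ) + 1) * h n))
            + Ξ ((b n s : ℝ) * h n + ((b n t - b n s : ℕ) : ℝ) * h n) t)
          - Ξ ((b n s : ℝ) * h n) s := by
      rw [hJ]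
      simp only []
      have hsplit : ∑ k ∈ Finset.range (b n t), Ξ ((k : ℝ) * h n) (((k : ℝ) + 1) * h n)
          = (∑ k ∈ Finset.range (b n s), Ξ ((k : ℝ) * h n) (((k : ℝ) + 1) * h n))
            + ∑ k ∈ Finset.range (b n t - b n s),
              Ξ ((b n s : ℝ) * h n + (k : ℝ) * h n) ((b n s : ℝ) * h n + ((k : ℝ) + 1) * h n) := by
        conv_lhs => rw [show b n t = b n s + (b n t - b n s) by omega, Finset.sum_range_add]
        congr 1
        refine Finset.sum_congr rfl fun i _ => ?_
        congr 1 <;> push_cast <;> ring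
      rw [hsplit]
      have e1 : (b n s : ℝ) * h n + ((b n t - b n s : ℕ) : ℝ) * h n = (b n t : ℝ) * h n := by
        rw [hcast]; ring
      rw [e1]
      abel
    have hd2 := hδ ((b n s : ℝ) * h n) s t (by positivity) (hfl n s hs) hst htT
    have hdiff : (J n t - J n s) - Ξ s t
        = ((∑ k ∈ Finset.range (b n t - b n s),
            Ξ ((b n s : ℝ) * h n + (k : ℝ) * h n) ((b n s : ℝ) * h n + ((k : ℝ) + 1) * h n))
            + Ξ ((b n s : ℝ) * h n + ((b n t - b n s : ℕ) : ℝ) * h n) t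
            - Ξ ((b n s : ℝ) * h n) t)
          + (Ξ ((b n s : ℝ) * h n) t - Ξ ((b n s : ℝ) * h n) s - Ξ s t) := by
      rw [hid]
      abel
    rw [hdiff]
    have hbs : 0 ≤ t - (b n s : ℝ) * h n := by
      have := hfl n s hs
      linarith
    have hbs2 : t - (b n s : ℝ) * h n ≤ (t - s) + h n := by
      have := hfl2 n s
      linarith
    have hrp : (t - (b n s : ℝ) * h n) ^ β ≤ ((t - s) + h n) ^ β :=
      Real.rpow_le_rpow hbs hbs2 (by linarith)
    calc ‖_ + _‖ ≤ _ + _ := norm_add_le _ _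
      _ ≤ D * (K * (t - (b n s : ℝ) * h n) ^ β) + K * (t - (b n s : ℝ) * h n) ^ β :=
          add_le_add hV hd2
      _ = (D + 1) * K * (t - (b n s : ℝ) * h n) ^ β := by ring
      _ ≤ (D + 1) * K * ((t - s) + h n) ^ β := by
          apply mul_le_mul_of_nonneg_left hrp
          positivity
  -- pass to the limit
  have hh0 : Filter.Tendsto h Filter.atTop (nhds 0) := by
    rw [hh]
    exact tendsto_const_nhds.div_atTop (tendsto_pow_atTop_atTop_of_one_lt one_lt_two)
  have hlhs : Filter.Tendsto (fun n => ‖(J n t - J n s) - Ξ s t‖) Filter.atTop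
      (nhds ‖(I t - I s) - Ξ s t‖) :=
    (((hItend t ht0 htT).sub (hItend s hs (le_trans hst htT))).sub tendsto_const_nhds).norm
  have hrhs : Filter.Tendsto (fun n => (D + 1) * K * ((t - s) + h n) ^ β) Filter.atTop
      (nhds ((D + 1) * K * (t - s) ^ β)) := by
    have h1 : Filter.Tendsto (fun n => (t - s) + h n) Filter.atTop (nhds (t - s)) := by
      have h0 := hh0.const_add (t - s)
      rw [add_zero] at h0
      exact h0
    have h2 : ContinuousAt (fun x : ℝ => x ^ β) (t - s) :=
      Real.continuousAt_rpow_const _ _ (Or.inr (by linarith))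
    exact (h2.tendsto.comp h1).const_mul _
  exact le_of_tendsto_of_tendsto' hlhs hrhs hper

end SewExists

/-- Young integration of variable order: if the local complementary Young condition
`α(t) + γ(t) ≥ β > 1` holds for all `t`, the Young integral exists with the usual estimate. -/
theorem stmt4 {d : ℕ} (T : ℝ) (hT : 0 < T) (α γ : ℝ → ℝ)
    (hα : ContDiffOn ℝ 1 α (Set.Icc 0 T)) (hγ : ContDiffOn ℝ 1 γ (Set.Icc 0 T))
    (hα01 : ∀ t ∈ Set.Icc (0:ℝ) T, 0 < α t ∧ α t < 1)
    (hγ01 : ∀ t ∈ Set.Icc (0:ℝ) T, 0 < γ t ∧ γ t < 1)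
    (CA : ℝ)
    (hA1α : ∀ t ∈ Set.Icc (0:ℝ) T, ∀ h : ℝ, 0 < |h| → |h| ≤ 1 →
      t + h ∈ Set.Icc (0:ℝ) T → |h| ^ (α t - α (t + h)) ≤ CA)
    (hA1γ : ∀ t ∈ Set.Icc (0:ℝ) T, ∀ h : ℝ, 0 < |h| → |h| ≤ 1 →
      t + h ∈ Set.Icc (0:ℝ) T → |h| ^ (γ t - γ (t + h)) ≤ CA)
    (β : ℝ) (hβ : 1 < β) (hβle : ∀ t ∈ Set.Icc (0:ℝ) T, β ≤ α t + γ t)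
    (X : ℝ → EuclideanSpace ℝ (Fin d)) (Y : ℝ → ℝ)
    (KX KY : ℝ) (hKX : 0 ≤ KX) (hKY : 0 ≤ KY)
    (hX : ∀ s t : ℝ, 0 ≤ s → s < t → t ≤ T → ‖X t - X s‖ ≤ KX * (t - s) ^ α s)
    (hY : ∀ s t : ℝ, 0 ≤ s → s < t → t ≤ T → |Y t - Y s| ≤ KY * (t - s) ^ γ s) :
    ∃ Cβ > (0:ℝ), ∃ I : ℝ → EuclideanSpace ℝ (Fin d), I 0 = 0 ∧
      ∀ s t : ℝ, 0 ≤ s → s ≤ t → t ≤ T →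
        ‖(I t - I s) - Y s • (X t - X s)‖ ≤ Cβ * KY * KX * (t - s) ^ β := by
  set C0 : ℝ := max CA (max T 1) with hC0
  set MT : ℝ := max T 1 with hMT
  have hMT1 : (1:ℝ) ≤ MT := le_max_right _ _
  have hC01 : (1:ℝ) ≤ C0 := le_trans hMT1 (le_max_right _ _)
  set M : ℝ := C0 * MT with hM
  have hM1 : (1:ℝ) ≤ M := one_le_mul_of_one_le_of_one_le hC01 hMT1
  set K : ℝ := M * (KY * KX) with hKdef
  have hK : 0 ≤ K := by
    rw [hKdef]; exact mul_nonneg (by linarith) (mul_nonneg hKY hKX)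
  set Ξ : ℝ → ℝ → EuclideanSpace ℝ (Fin d) := fun s t => Y s • (X t - X s) with hΞ
  have hΞ0 : ∀ x, Ξ x x = 0 := by intro x; rw [hΞ]; simp
  have hδ : ∀ s u t : ℝ, 0 ≤ s → s ≤ u → u ≤ t → t ≤ T →
      ‖Ξ s t - Ξ s u - Ξ u t‖ ≤ K * (t - s) ^ β := by
    intro s u t hs hsu hut htT
    have hst0 : 0 ≤ t - s := by linarith
    have hRHS0 : 0 ≤ K * (t - s) ^ β := mul_nonneg hK (Real.rpow_nonneg hst0 β)
    have heq : Ξ s t - Ξ s u - Ξ u t = (Y s - Y u) • (X t - X u) := by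
      rw [hΞ]
      simp only []
      module
    rw [heq, norm_smul, Real.norm_eq_abs]
    rcases eq_or_lt_of_le hsu with h1 | h1
    · rw [← h1]; simp [hRHS0]
    rcases eq_or_lt_of_le hut with h2 | h2
    · rw [h2]; simp [hRHS0]
    -- now s < u < t
    have hu0 : 0 ≤ u := by linarith
    have hus : 0 < u - s := by linarith
    have htu : 0 < t - u := by linarith
    have hts : 0 < t - s := by linarith
    have hsmem : s ∈ Set.Icc (0:ℝ) T := ⟨hs, by linarith⟩
    have humem : u ∈ Set.Icc (0:ℝ) T := ⟨hu0, by linarith⟩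
    obtain ⟨hγs0, hγs1⟩ := hγ01 s hsmem
    obtain ⟨hγu0, hγu1⟩ := hγ01 u humem
    obtain ⟨hαu0, hαu1⟩ := hα01 u humem
    have hYb : |Y s - Y u| ≤ KY * (u - s) ^ γ s := by
      rw [abs_sub_comm]
      exact hY s u hs h1 (by linarith)
    have hXb : ‖X t - X u‖ ≤ KX * (t - u) ^ α u := hX u t hu0 h2 htT
    -- step A : (u-s)^(γ s) ≤ C0 * (u-s)^(γ u)
    have hstepA : (u - s) ^ γ s ≤ C0 * (u - s) ^ γ u := by
      have hsplit : (u - s) ^ γ s = (u - s) ^ γ u * (u - s) ^ (γ s - γ u) := by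
        rw [← Real.rpow_add hus]; congr 1; ring
      have hbound : (u - s) ^ (γ s - γ u) ≤ C0 := by
        rcases le_or_gt (u - s) 1 with hle | hgt
        · have hh := hA1γ s hsmem (u - s) (by rw [abs_of_pos hus]; exact hus)
            (by rw [abs_of_pos hus]; exact hle)
            (by rw [show s + (u - s) = u by ring]; exact humem)
          rw [abs_of_pos hus, show s + (u - s) = u by ring] at hh
          exact le_trans hh (le_max_left _ _)
        · have h1' : (u - s) ^ (γ s - γ u) ≤ (u - s) ^ (1:ℝ) :=
            Real.rpow_le_rpow_of_exponent_le hgt.le (by linarith)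
          rw [Real.rpow_one] at h1'
          calc (u - s) ^ (γ s - γ u) ≤ u - s := h1'
            _ ≤ T := by linarith
            _ ≤ MT := le_max_left _ _
            _ ≤ C0 := le_max_right _ _
      calc (u - s) ^ γ s = (u - s) ^ (γ s - γ u) * (u - s) ^ γ u := by rw [hsplit]; ring
        _ ≤ C0 * (u - s) ^ γ u :=
            mul_le_mul_of_nonneg_right hbound (Real.rpow_nonneg hus.le _)
    -- step B : monotonicity in the base
    have hstepB1 : (u - s) ^ γ u ≤ (t - s) ^ γ u :=
      Real.rpow_le_rpow hus.le (by linarith) hγu0.le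
    have hstepB2 : (t - u) ^ α u ≤ (t - s) ^ α u :=
      Real.rpow_le_rpow htu.le (by linarith) hαu0.le
    -- step C/D
    have hstepC : (t - s) ^ γ u * (t - s) ^ α u = (t - s) ^ β * (t - s) ^ (γ u + α u - β) := by
      rw [← Real.rpow_add hts, ← Real.rpow_add hts]; congr 1; ring
    have he0 : 0 ≤ γ u + α u - β := by
      have := hβle u humem; linarith
    have hstepD : (t - s) ^ (γ u + α u - β) ≤ MT := by
      rcases le_or_gt (t - s) 1 with hle | hgt
      · calc (t - s) ^ (γ u + α u - β) ≤ 1 := Real.rpow_le_one hts.le hle he0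
          _ ≤ MT := hMT1
      · have h1' : (t - s) ^ (γ u + α u - β) ≤ (t - s) ^ (1:ℝ) :=
          Real.rpow_le_rpow_of_exponent_le hgt.le (by linarith)
        rw [Real.rpow_one] at h1'
        calc (t - s) ^ (γ u + α u - β) ≤ t - s := h1'
          _ ≤ T := by linarith
          _ ≤ MT := le_max_left _ _
    -- combine
    have hC00 : (0:ℝ) ≤ C0 := by linarith
    have hrp : ∀ x e : ℝ, 0 ≤ x → (0:ℝ) ≤ x ^ e := fun x e hx => Real.rpow_nonneg hx e
    calc |Y s - Y u| * ‖X t - X u‖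
        ≤ (KY * (u - s) ^ γ s) * (KX * (t - u) ^ α u) :=
          mul_le_mul hYb hXb (norm_nonneg _) (by positivity)
      _ ≤ (KY * (C0 * (u - s) ^ γ u)) * (KX * (t - u) ^ α u) := by
          apply mul_le_mul_of_nonneg_right _ (by positivity)
          exact mul_le_mul_of_nonneg_left hstepA hKY
      _ ≤ (KY * (C0 * (t - s) ^ γ u)) * (KX * (t - s) ^ α u) := by
          apply mul_le_mul
          · exact mul_le_mul_of_nonneg_left
              (mul_le_mul_of_nonneg_left hstepB1 hC00) hKY
          · exact mul_le_mul_of_nonneg_left hstepB2 hKX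
          · positivity
          · positivity
      _ = KY * KX * C0 * ((t - s) ^ γ u * (t - s) ^ α u) := by ring
      _ = KY * KX * C0 * ((t - s) ^ β * (t - s) ^ (γ u + α u - β)) := by rw [hstepC]
      _ ≤ KY * KX * C0 * ((t - s) ^ β * MT) := by
          apply mul_le_mul_of_nonneg_left _ (by positivity)
          exact mul_le_mul_of_nonneg_left hstepD (hrp _ _ hts.le)
      _ = (C0 * MT * (KY * KX)) * (t - s) ^ β := by ring
      _ = K * (t - s) ^ β := by rw [hKdef, hM]
  obtain ⟨C, hC, I, hI0, hest⟩ := sewing_exists T β K hT hβ hK Ξ hΞ0 hδ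
  refine ⟨C * M, by nlinarith, I, hI0, fun s t hs hst htT => ?_⟩
  have hbound := hest s t hs hst htT
  calc ‖(I t - I s) - Y s • (X t - X s)‖ = ‖(I t - I s) - Ξ s t‖ := by rw [hΞ]
    _ ≤ C * K * (t - s) ^ β := hbound
    _ = C * M * KY * KX * (t - s) ^ β := by rw [hKdef]; ring
end

section
/- (Gluing of local iterated integrals) Let α : [0,T] → (1/3, 1) satisfy A1, X ∈ C^{α(·)}([0,T];ℝ^d), and let P = {[ρ₀,ρ₁],...,[ρ_{N−1},ρ_N]} be a partition of [0,T]. Suppose on each square [ρ_i, ρ_{i+1}]² there exists X^{|[ρ_i,ρ_{i+1}]} : [ρ_i,ρ_{i+1}]² → ℝ^{d×d} satisfying Chen's relation δ(𝕏)(s,u,t) = X_{s,u} ⊗ X_{u,t} and the bound |𝕏(s,t)| ≲ |t−s|^{2α(s)∧1} locally. Define for s ∈ [ρ_i,ρ_{i+1}], t ∈ [ρ_j,ρ_{j+1}], i ≤ j: 𝕏(s,t) := Σ_{[u,v] ∈ P∩[s,t]} (𝕏^{|[u,v]}(u,v) + X_{s,u} ⊗ X_{u,v}). Then the global 𝕏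 satisfies Chen's relation δ(𝕏)(s,r,t) = X_{s,r} ⊗ X_{r,t} for all s < r < t in [0,T], and ‖𝕏‖_{2α(·)∧1;[0,T]} < ∞, so (X, 𝕏) is a variable order rough path in 𝒞^{α(·)}([0,T];ℝ^d). -/
noncomputable def tensor {d : ℕ} (a b : EuclideanSpace ℝ (Fin d)) :
    EuclideanSpace ℝ (Fin d × Fin d) :=
  (WithLp.equiv 2 (Fin d × Fin d → ℝ)).symm fun p => a p.1 * b p.2

namespace Stmt8Aux

lemma tensor_apply {d : ℕ} (a b : EuclideanSpace ℝ (Fin d)) (p : Fin d × Fin d) :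
    tensor a b p = a p.1 * b p.2 := rfl

lemma sub_apply {d : ℕ} {ι : Type*} [Fintype ι] (a b : EuclideanSpace ℝ ι) (p : ι) :
    (a - b) p = a p - b p := rfl

lemma add_apply {d : ℕ} {ι : Type*} [Fintype ι] (a b : EuclideanSpace ℝ ι) (p : ι) :
    (a + b) p = a p + b p := rfl

lemma zero_apply {ι : Type*} [Fintype ι] (p : ι) : (0 : EuclideanSpace ℝ ι) p = 0 := rfl

lemma norm_tensor {d : ℕ} (a b : EuclideanSpace ℝ (Fin d)) :
    ‖tensor a b‖ = ‖a‖ * ‖b‖ := by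
  rw [EuclideanSpace.norm_eq, EuclideanSpace.norm_eq, EuclideanSpace.norm_eq,
    ← Real.sqrt_mul (by positivity)]
  congr 1
  simp only [Real.norm_eq_abs, sq_abs, tensor_apply, Fintype.sum_prod_type, mul_pow]
  rw [← Finset.sum_mul_sum]

lemma min_one_sub_min_one {a b : ℝ} (h : b ≤ a) : min a 1 - min b 1 ≤ a - b := by
  rcases le_total a 1 with h1 | h1 <;> rcases le_total b 1 with h2 | h2 <;>
    simp [min_eq_left, min_eq_right, *] <;> linarith

lemma rpow_anti {x y c : ℝ} (hx : 0 < x) (hxy : x ≤ y) (hc : c ≤ 0) : y ^ c ≤ x ^ c := by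
  rw [← neg_neg c, Real.rpow_neg (le_of_lt hx), Real.rpow_neg (by linarith)]
  exact inv_anti₀ (Real.rpow_pos_of_pos hx _)
    (Real.rpow_le_rpow hx.le hxy (by linarith))

lemma rpow_le_max {T x e : ℝ} (h0 : 0 ≤ x) (hT : x ≤ T) (he0 : 0 < e) (he1 : e ≤ 1) :
    x ^ e ≤ max 1 T := by
  rcases le_total x 1 with h | h
  · exact le_trans (Real.rpow_le_one h0 h he0.le) (le_max_left _ _)
  · calc x ^ e ≤ x ^ (1:ℝ) := Real.rpow_le_rpow_of_exponent_le h he1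
      _ = x := Real.rpow_one x
      _ ≤ max 1 T := le_trans hT (le_max_right _ _)

lemma le_rpow {δ z e : ℝ} (hδ0 : 0 < δ) (hδ1 : δ ≤ 1) (hδz : δ ≤ z) (he0 : 0 < e)
    (he1 : e ≤ 1) : δ ≤ z ^ e := by
  rcases le_total z 1 with h | h
  · calc δ = δ ^ (1:ℝ) := (Real.rpow_one δ).symm
      _ ≤ z ^ (1:ℝ) := Real.rpow_le_rpow hδ0.le hδz (by norm_num)
      _ ≤ z ^ e := Real.rpow_le_rpow_of_exponent_ge (by linarith) h he1
  · exact le_trans hδ1 (Real.one_le_rpow h he0.le)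

lemma exists_piece : ∀ {N : ℕ} (ρ : Fin (N+1) → ℝ), StrictMono ρ → ∀ x : ℝ,
    ρ 0 ≤ x → x < ρ (Fin.last N) → ∃ i : Fin N, ρ i.castSucc ≤ x ∧ x < ρ i.succ := by
  intro N
  induction N with
  | zero =>
      intro ρ _ x h0 hN
      have : Fin.last 0 = 0 := rfl
      rw [this] at hN
      exact absurd (h0.trans_lt hN) (lt_irrefl _)
  | succ n ih =>
    intro ρ hmono x h0 hN
    by_cases h : ρ (Fin.last n).castSucc ≤ x
    · refine ⟨Fin.last n, h, ?_⟩
      simpa [Fin.succ_last] using hN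
    · push_neg at h
      obtain ⟨i, h1, h2⟩ := ih (ρ ∘ Fin.castSucc) (hmono.comp Fin.strictMono_castSucc) x
        (by simpa using h0) (by simpa using h)
      exact ⟨i.castSucc, by simpa using h1,
        by simpa [← Fin.succ_castSucc] using h2⟩

lemma key1 {αs αr CA e e' x y : ℝ} (hCA : 1 ≤ CA) (hαs : 0 < αs) (hαr : 0 < αr)
    (he : e = min (2*αs) 1) (he' : e' = min (2*αr) 1)
    (hx : 0 < x) (hy : 0 < y) (hxy1 : x + y ≤ 1)
    (hCAx : x ^ (αr - αs) ≤ CA) :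
    y ^ e' ≤ CA^2 * (x+y) ^ e := by
  have hz : 0 < x + y := by linarith
  have hy1 : y ≤ 1 := by linarith
  have hx1 : x ≤ 1 := by linarith
  have he0 : 0 < e := by rw [he]; exact lt_min (by linarith) one_pos
  have he'0 : 0 < e' := by rw [he']; exact lt_min (by linarith) one_pos
  have hCA2 : 1 ≤ CA^2 := by nlinarith
  rcases le_or_gt αs αr with h | h
  · have hee' : e ≤ e' := by rw [he, he']; exact min_le_min (by linarith) le_rfl
    calc y ^ e' ≤ y ^ e := Real.rpow_le_rpow_of_exponent_ge hy hy1 hee'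
      _ ≤ (x+y) ^ e := Real.rpow_le_rpow hy.le (by linarith) he0.le
      _ ≤ CA^2 * (x+y) ^ e := le_mul_of_one_le_left (Real.rpow_nonneg hz.le _) hCA2
  · have hEd : e - e' ≤ 2*(αs - αr) := by
      rw [he, he']; have := min_one_sub_min_one (show 2*αr ≤ 2*αs by linarith); linarith
    have hxneg : x ^ (-(2*(αs-αr))) ≤ CA^2 := by
      have hrw : x ^ (-(2*(αs-αr))) = (x ^ (αr-αs))^2 := by
        rw [← Real.rpow_natCast (x ^ (αr-αs)) 2, ← Real.rpow_mul hx.le]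
        norm_num; ring_nf
      rw [hrw]
      exact pow_le_pow_left₀ (Real.rpow_nonneg hx.le _) hCAx 2
    have key : ∀ w : ℝ, 0 < w → w ≤ 1 → x ≤ w → w ≤ x + y →
        w ^ e' ≤ CA^2 * (x+y) ^ e := by
      intro w hw hw1 hxw hwz
      have h1 : w ^ e' = w ^ e * w ^ (e' - e) := by
        rw [← Real.rpow_add hw]; ring_nf
      have h2 : w ^ (e' - e) ≤ w ^ (-(2*(αs-αr))) :=
        Real.rpow_le_rpow_of_exponent_ge hw hw1 (by linarith)
      have h3 : w ^ (-(2*(αs-αr))) ≤ x ^ (-(2*(αs-αr))) :=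
        rpow_anti hx hxw (by linarith)
      have h4 : w ^ e ≤ (x+y) ^ e := Real.rpow_le_rpow hw.le hwz he0.le
      calc w ^ e' = w ^ e * w ^ (e' - e) := h1
        _ ≤ (x+y) ^ e * CA^2 := by
            apply mul_le_mul h4 (le_trans h2 (le_trans h3 hxneg))
              (Real.rpow_nonneg hw.le _) (Real.rpow_nonneg hz.le _)
        _ = CA^2 * (x+y) ^ e := by ring
    rcases le_total x y with hxy | hxy
    · exact key y hy hy1 hxy (by linarith)
    · calc y ^ e' ≤ x ^ e' := Real.rpow_le_rpow hy.le hxy he'0.le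
        _ ≤ CA^2 * (x+y) ^ e := key x hx hx1 le_rfl (by linarith)

lemma key2 {αs αr CA e x y : ℝ} (hCA : 1 ≤ CA) (hαs : 0 < αs) (hαr : 0 < αr)
    (he : e = min (2*αs) 1)
    (hx : 0 < x) (hy : 0 < y) (hxy1 : x + y ≤ 1)
    (hCAx : x ^ (αr - αs) ≤ CA) :
    x ^ αs * y ^ αr ≤ CA * (x+y) ^ e := by
  have hz : 0 < x + y := by linarith
  have hy1 : y ≤ 1 := by linarith
  have hx1 : x ≤ 1 := by linarith
  have hz1 : x + y ≤ 1 := hxy1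
  have h2z : (x+y) ^ (2*αs) ≤ (x+y) ^ e := by
    apply Real.rpow_le_rpow_of_exponent_ge hz hz1
    rw [he]; exact min_le_left _ _
  have hmul : ∀ a b : ℝ, 0 ≤ a → a ≤ x + y → 0 ≤ b → b ≤ x + y →
      a ^ αs * b ^ αs ≤ (x+y) ^ (2*αs) := by
    intro a b ha haz hb hbz
    calc a ^ αs * b ^ αs ≤ (x+y) ^ αs * (x+y) ^ αs := by
          apply mul_le_mul (Real.rpow_le_rpow ha haz hαs.le)
            (Real.rpow_le_rpow hb hbz hαs.le) (Real.rpow_nonneg hb _)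
            (Real.rpow_nonneg hz.le _)
      _ = (x+y) ^ (2*αs) := by rw [← Real.rpow_add hz]; ring_nf
  rcases le_or_gt αs αr with h | h
  · have hyr : y ^ αr ≤ y ^ αs := Real.rpow_le_rpow_of_exponent_ge hy hy1 h
    calc x ^ αs * y ^ αr ≤ x ^ αs * y ^ αs := by
          apply mul_le_mul_of_nonneg_left hyr (Real.rpow_nonneg hx.le _)
      _ ≤ (x+y) ^ (2*αs) := hmul x y hx.le (by linarith) hy.le (by linarith)
      _ ≤ (x+y) ^ e := h2z
      _ ≤ CA * (x+y) ^ e := le_mul_of_one_le_left (Real.rpow_nonneg hz.le _) hCA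
  · have hkey : ∀ w : ℝ, 0 < w → x ≤ w → w ≤ x + y → y ^ αr ≤ CA * w ^ αs → True := fun _ _ _ _ _ => trivial
    have main : y ^ αr ≤ CA * (max x y) ^ αs := by
      rcases le_total x y with hxy | hxy
      · rw [max_eq_right hxy]
        have h1 : y ^ αr = y ^ αs * y ^ (αr - αs) := by rw [← Real.rpow_add hy]; ring_nf
        have h2 : y ^ (αr - αs) ≤ x ^ (αr - αs) := rpow_anti hx hxy (by linarith)
        calc y ^ αr = y ^ αs * y ^ (αr - αs) := h1
          _ ≤ y ^ αs * CA := mul_le_mul_of_nonneg_left (le_trans h2 hCAx) (Real.rpow_nonneg hy.le _)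
          _ = CA * y ^ αs := by ring
      · rw [max_eq_left hxy]
        have h1 : y ^ αr ≤ x ^ αr := Real.rpow_le_rpow hy.le hxy hαr.le
        have h2 : x ^ αr = x ^ αs * x ^ (αr - αs) := by rw [← Real.rpow_add hx]; ring_nf
        calc y ^ αr ≤ x ^ αr := h1
          _ = x ^ αs * x ^ (αr - αs) := h2
          _ ≤ x ^ αs * CA := mul_le_mul_of_nonneg_left hCAx (Real.rpow_nonneg hx.le _)
          _ = CA * x ^ αs := by ring
    have hmax : (0:ℝ) ≤ max x y := le_max_of_le_left hx.le
    calc x ^ αs * y ^ αr ≤ x ^ αs * (CA * (max x y) ^ αs) :=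
          mul_le_mul_of_nonneg_left main (Real.rpow_nonneg hx.le _)
      _ = CA * (x ^ αs * (max x y) ^ αs) := by ring
      _ ≤ CA * (x+y) ^ (2*αs) := by
          apply mul_le_mul_of_nonneg_left _ (by linarith)
          exact hmul x (max x y) hx.le (by linarith) hmax
            (max_le (by linarith) (by linarith))
      _ ≤ CA * (x+y) ^ e := mul_le_mul_of_nonneg_left h2z (by linarith)

end Stmt8Aux


set_option maxHeartbeats 2000000 in
/-- Gluing local iterated integrals to a variable order rough path: if on each square of a
partition there is a local iterated integral satisfying Chen's relation and the analytic
bound, then there is a global iterated integral extending them, satisfying Chen's relation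
and the variable order bound `|𝕏(s,t)| ≲ |t−s|^{2α(s)∧1}` on all of `[0,T]`. -/
theorem stmt8 {d N : ℕ} (hN : 0 < N) (T : ℝ) (hT : 0 < T)
    (α : ℝ → ℝ) (hα : ∀ t ∈ Set.Icc (0:ℝ) T, 1/3 < α t ∧ α t < 1)
    (CA : ℝ)
    (hA1 : ∀ t ∈ Set.Icc (0:ℝ) T, ∀ h : ℝ, 0 < |h| → |h| ≤ 1 →
      t + h ∈ Set.Icc (0:ℝ) T → |h| ^ (α t - α (t + h)) ≤ CA)
    (X : ℝ → EuclideanSpace ℝ (Fin d))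
    (KX : ℝ)
    (hX : ∀ s t : ℝ, 0 ≤ s → s < t → t ≤ T → ‖X t - X s‖ ≤ KX * (t - s) ^ α s)
    (ρ : Fin (N + 1) → ℝ) (hρmono : StrictMono ρ) (hρ0 : ρ 0 = 0) (hρN : ρ (Fin.last N) = T)
    (XXloc : Fin N → ℝ → ℝ → EuclideanSpace ℝ (Fin d × Fin d))
    (hChenLoc : ∀ i : Fin N, ∀ s u t : ℝ,
      ρ i.castSucc ≤ s → s ≤ u → u ≤ t → t ≤ ρ i.succ →
      XXloc i s t - XXloc i s u - XXloc i u t = tensor (X u - X s) (X t - X u))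
    (Kloc : ℝ)
    (hBoundLoc : ∀ i : Fin N, ∀ s t : ℝ, ρ i.castSucc ≤ s → s < t → t ≤ ρ i.succ →
      ‖XXloc i s t‖ ≤ Kloc * (t - s) ^ min (2 * α s) 1) :
    ∃ XX : ℝ → ℝ → EuclideanSpace ℝ (Fin d × Fin d),
      (∀ i : Fin N, ∀ s t : ℝ, ρ i.castSucc ≤ s → s ≤ t → t ≤ ρ i.succ →
        XX s t = XXloc i s t) ∧
      (∀ s u t : ℝ, 0 ≤ s → s ≤ u → u ≤ t → t ≤ T →
        XX s t - XX s u - XX u t = tensor (X u - X s) (X t - X u)) ∧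
      (∃ K : ℝ, ∀ s t : ℝ, 0 ≤ s → s < t → t ≤ T →
        ‖XX s t‖ ≤ K * (t - s) ^ min (2 * α s) 1) := by
  classical
  open Stmt8Aux in
  have hρle : ∀ j : Fin (N+1), 0 ≤ ρ j ∧ ρ j ≤ T := by
    intro j
    constructor
    · rw [← hρ0]; exact hρmono.monotone (Fin.zero_le j)
    · rw [← hρN]; exact hρmono.monotone (Fin.le_last j)
  have hρlt : ∀ i : Fin N, ρ i.castSucc < ρ i.succ :=
    fun i => hρmono (Fin.castSucc_lt_succ : i.castSucc < i.succ)
  have hα3 : ∀ s, 0 ≤ s → s ≤ T → 1/3 < α s ∧ α s < 1 := fun s h1 h2 => hα s ⟨h1, h2⟩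
  have hKX0 : 0 ≤ KX := by
    have h1 := hX 0 T le_rfl hT le_rfl
    have h2 : (0:ℝ) < (T - 0) ^ α 0 := Real.rpow_pos_of_pos (by linarith) _
    nlinarith [norm_nonneg (X T - X 0)]
  have hKloc0 : 0 ≤ Kloc := by
    set i0 : Fin N := ⟨0, hN⟩
    have h1 := hBoundLoc i0 (ρ i0.castSucc) (ρ i0.succ) le_rfl (hρlt i0) le_rfl
    have h2 : (0:ℝ) < (ρ i0.succ - ρ i0.castSucc) ^ min (2 * α (ρ i0.castSucc)) 1 :=
      Real.rpow_pos_of_pos (by linarith [hρlt i0]) _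
    nlinarith [norm_nonneg (XXloc i0 (ρ i0.castSucc) (ρ i0.succ))]
  set MT := max (1:ℝ) T with hMTdef
  have hMT1 : (1:ℝ) ≤ MT := le_max_left _ _
  have hXd : ∀ u v, 0 ≤ u → u ≤ v → v ≤ T → ‖X v - X u‖ ≤ KX * MT := by
    intro u v h1 h2 h3
    rcases eq_or_lt_of_le h2 with h | h
    · rw [h]; simp; nlinarith
    · have hαu := hα3 u h1 (le_trans h2 h3)
      calc ‖X v - X u‖ ≤ KX * (v - u) ^ α u := hX u v h1 h h3
        _ ≤ KX * MT := by
            apply mul_le_mul_of_nonneg_left _ hKX0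
            exact Stmt8Aux.rpow_le_max (by linarith) (by linarith) (by linarith [hαu.1]) hαu.2.le
  set BX := ‖X 0‖ + KX * MT with hBXdef
  have hBX0 : 0 ≤ BX := by have := norm_nonneg (X 0); nlinarith
  have hXb : ∀ u, 0 ≤ u → u ≤ T → ‖X u‖ ≤ BX := by
    intro u h1 h2
    have h3 := hXd 0 u le_rfl h1 h2
    have h4 := norm_sub_norm_le (X u) (X 0)
    rw [hBXdef]; linarith
  have hXX0 : ∀ (i : Fin N) (r : ℝ), ρ i.castSucc ≤ r → r ≤ ρ i.succ → XXloc i r r = 0 := by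
    intro i r h1 h2
    have hc := hChenLoc i r r r h1 le_rfl le_rfl h2
    have hz : tensor (X r - X r) (X r - X r) = 0 := by
      ext p
      simp [Stmt8Aux.tensor_apply, Stmt8Aux.sub_apply]
    rw [hz] at hc
    simpa [sub_self, zero_sub, neg_eq_zero] using hc
  have hXXlocB : ∀ (i : Fin N) u, ρ i.castSucc ≤ u → u ≤ ρ i.succ →
      ‖XXloc i (ρ i.castSucc) u‖ ≤ Kloc * MT := by
    intro i u h1 h2
    rcases eq_or_lt_of_le h1 with h | h
    · rw [← h, hXX0 i (ρ i.castSucc) le_rfl (hρlt i).le]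
      simp
      nlinarith
    · have hm := hρle i.castSucc
      have hm2 := hρle i.succ
      have hαr := hα3 (ρ i.castSucc) hm.1 hm.2
      have hE1 : 0 < min (2 * α (ρ i.castSucc)) 1 := lt_min (by linarith [hαr.1]) one_pos
      calc ‖XXloc i (ρ i.castSucc) u‖
          ≤ Kloc * (u - ρ i.castSucc) ^ min (2 * α (ρ i.castSucc)) 1 :=
            hBoundLoc i _ u le_rfl h h2
        _ ≤ Kloc * MT := by
            apply mul_le_mul_of_nonneg_left _ hKloc0
            exact Stmt8Aux.rpow_le_max (by linarith) (by linarith [hm.1, hm2.2])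
              hE1 (min_le_right _ _)
  set Fi : Fin N → ℝ → EuclideanSpace ℝ (Fin d × Fin d) :=
    fun i u => XXloc i (ρ i.castSucc) u + tensor (X (ρ i.castSucc)) (X u) with hFidef
  set cl : Fin N → ℝ → ℝ := fun i u => max (ρ i.castSucc) (min u (ρ i.succ)) with hcldef
  have hclmem : ∀ (i : Fin N) (u : ℝ), ρ i.castSucc ≤ cl i u ∧ cl i u ≤ ρ i.succ := by
    intro i u
    exact ⟨le_max_left _ _, max_le (hρlt i).le (min_le_right _ _)⟩
  set F : ℝ → EuclideanSpace ℝ (Fin d × Fin d) :=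
    fun u => ∑ i : Fin N, (Fi i (cl i u) - Fi i (ρ i.castSucc)) with hFdef
  set XX : ℝ → ℝ → EuclideanSpace ℝ (Fin d × Fin d) :=
    fun s t => F t - F s - tensor (X s) (X t - X s) with hXXdef
  have hFdiff : ∀ (i : Fin N) (s t : ℝ), ρ i.castSucc ≤ s → s ≤ t → t ≤ ρ i.succ →
      F t - F s = Fi i t - Fi i s := by
    intro i s t h1 h2 h3
    rw [hFdef]
    simp only
    rw [← Finset.sum_sub_distrib]
    have hcong : ∀ j : Fin N,
        (Fi j (cl j t) - Fi j (ρ j.castSucc)) - (Fi j (cl j s) - Fi j (ρ j.castSucc))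
          = Fi j (cl j t) - Fi j (cl j s) := by intro j; abel
    rw [Finset.sum_congr rfl (fun j _ => hcong j)]
    rw [Finset.sum_eq_single i]
    · have hclt : cl i t = t := by
        rw [hcldef]; simp only
        rw [min_eq_left h3, max_eq_right (le_trans h1 h2)]
      have hcls : cl i s = s := by
        rw [hcldef]; simp only
        rw [min_eq_left (le_trans h2 h3), max_eq_right h1]
      rw [hclt, hcls]
    · intro j _ hji
      have hsame : cl j t = cl j s := by
        rcases lt_or_gt_of_ne hji with h | h
        · have hle : ρ j.succ ≤ ρ i.castSucc := by
            apply hρmono.monotone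
            rw [Fin.le_def]
            simp only [Fin.val_succ, Fin.coe_castSucc]
            simp only [gt_iff_lt, Fin.lt_def] at h
            omega
          have h4 : ρ j.succ ≤ s := le_trans hle h1
          rw [hcldef]; simp only
          rw [min_eq_right (le_trans h4 h2), min_eq_right h4]
        · have hle : ρ i.succ ≤ ρ j.castSucc := by
            apply hρmono.monotone
            rw [Fin.le_def]
            simp only [Fin.val_succ, Fin.coe_castSucc]
            simp only [gt_iff_lt, Fin.lt_def] at h
            omega
          have h4 : t ≤ ρ j.castSucc := le_trans h3 hle
          have h5 : ρ j.castSucc ≤ ρ j.succ := (hρlt j).le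
          rw [hcldef]; simp only
          rw [min_eq_left (le_trans h4 h5), min_eq_left (le_trans (le_trans h2 h4) h5),
            max_eq_left h4, max_eq_left (le_trans h2 h4)]
      rw [hsame, sub_self]
    · intro h; exact absurd (Finset.mem_univ i) h
  have hExt : ∀ (i : Fin N) (s t : ℝ), ρ i.castSucc ≤ s → s ≤ t → t ≤ ρ i.succ →
      XX s t = XXloc i s t := by
    intro i s t h1 h2 h3
    have hc := hChenLoc i (ρ i.castSucc) s t le_rfl h1 h2 h3
    rw [hXXdef]
    simp only
    rw [hFdiff i s t h1 h2 h3, hFidef]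
    simp only
    ext p
    have hcp := congrArg (fun z => z p) hc
    simp only [Stmt8Aux.sub_apply, Stmt8Aux.add_apply, Stmt8Aux.tensor_apply] at hcp ⊢
    linear_combination hcp
  have hChen : ∀ s u t : ℝ, XX s t - XX s u - XX u t = tensor (X u - X s) (X t - X u) := by
    intro s u t
    rw [hXXdef]
    simp only
    ext p
    simp only [Stmt8Aux.sub_apply, Stmt8Aux.tensor_apply]
    ring
  -- global bound on F
  have hC1 : ∀ (i : Fin N) (u : ℝ), ‖Fi i (cl i u) - Fi i (ρ i.castSucc)‖
      ≤ Kloc * MT + BX * (KX * MT) := by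
    intro i u
    have hm := hclmem i u
    have hm1 := hρle i.castSucc
    have hm2 := hρle i.succ
    have h1 : Fi i (cl i u) - Fi i (ρ i.castSucc)
        = XXloc i (ρ i.castSucc) (cl i u)
          + tensor (X (ρ i.castSucc)) (X (cl i u) - X (ρ i.castSucc)) := by
      rw [hFidef]
      simp only
      rw [hXX0 i (ρ i.castSucc) le_rfl (hρlt i).le]
      ext p
      simp only [Stmt8Aux.sub_apply, Stmt8Aux.add_apply, Stmt8Aux.zero_apply, Stmt8Aux.tensor_apply]
      ring
    rw [h1]
    have h2 := hXXlocB i (cl i u) hm.1 hm.2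
    have h3 : ‖tensor (X (ρ i.castSucc)) (X (cl i u) - X (ρ i.castSucc))‖
        ≤ BX * (KX * MT) := by
      rw [Stmt8Aux.norm_tensor]
      apply mul_le_mul (hXb _ hm1.1 hm1.2)
        (hXd (ρ i.castSucc) (cl i u) hm1.1 hm.1 (le_trans hm.2 hm2.2))
        (norm_nonneg _) hBX0
    calc ‖_ + _‖ ≤ ‖XXloc i (ρ i.castSucc) (cl i u)‖
          + ‖tensor (X (ρ i.castSucc)) (X (cl i u) - X (ρ i.castSucc))‖ := norm_add_le _ _
      _ ≤ Kloc * MT + BX * (KX * MT) := add_le_add h2 h3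
  have hFb : ∀ u : ℝ, ‖F u‖ ≤ N * (Kloc * MT + BX * (KX * MT)) := by
    intro u
    rw [hFdef]
    simp only
    calc ‖∑ i : Fin N, (Fi i (cl i u) - Fi i (ρ i.castSucc))‖
        ≤ ∑ i : Fin N, ‖Fi i (cl i u) - Fi i (ρ i.castSucc)‖ := norm_sum_le _ _
      _ ≤ ∑ _i : Fin N, (Kloc * MT + BX * (KX * MT)) :=
          Finset.sum_le_sum (fun i _ => hC1 i u)
      _ = N * (Kloc * MT + BX * (KX * MT)) := by
          rw [Finset.sum_const, Finset.card_univ, Fintype.card_fin, nsmul_eq_mul]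
  haveI : Nonempty (Fin N) := ⟨⟨0, hN⟩⟩
  set δ0 := Finset.univ.inf' Finset.univ_nonempty
    (fun i : Fin N => ρ i.succ - ρ i.castSucc) with hδ0def
  have hδ0pos : 0 < δ0 := by
    rw [hδ0def, Finset.lt_inf'_iff]
    intro i _
    linarith [hρlt i]
  set δ := min δ0 1 with hδdef
  have hδpos : 0 < δ := lt_min hδ0pos one_pos
  have hδ1 : δ ≤ 1 := min_le_right _ _
  have hδle : ∀ i : Fin N, δ ≤ ρ i.succ - ρ i.castSucc := fun i =>
    le_trans (min_le_left _ _) (Finset.inf'_le _ (Finset.mem_univ i))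
  set CA' := max CA 1 with hCA'def
  have hCA'1 : (1:ℝ) ≤ CA' := le_max_right _ _
  set CG := 2 * ((N : ℝ) * (Kloc * MT + BX * (KX * MT))) + BX * (KX * MT) with hCGdef
  have hterm0 : 0 ≤ Kloc * MT + BX * (KX * MT) := by
    have h1 : 0 ≤ Kloc * MT := mul_nonneg hKloc0 (by linarith)
    have h2 : 0 ≤ BX * (KX * MT) := mul_nonneg hBX0 (mul_nonneg hKX0 (by linarith))
    linarith
  have hCG0 : 0 ≤ CG := by
    have h3 : (0:ℝ) ≤ (N : ℝ) := Nat.cast_nonneg N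
    have h2 : 0 ≤ BX * (KX * MT) := mul_nonneg hBX0 (mul_nonneg hKX0 (by linarith))
    nlinarith
  have hKB0 : 0 ≤ Kloc + Kloc * CA' ^ 2 + KX ^ 2 * CA' := by
    have h1 : 0 ≤ CA' := by linarith
    have h2 : 0 ≤ Kloc * CA' ^ 2 := by positivity
    have h3 : 0 ≤ KX ^ 2 * CA' := by positivity
    linarith
  have hCGδ0 : 0 ≤ CG / δ := div_nonneg hCG0 hδpos.le
  refine ⟨XX, hExt, fun s u t _ _ _ _ => hChen s u t,
    CG / δ + (Kloc + Kloc * CA' ^ 2 + KX ^ 2 * CA'), ?_⟩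
  intro s t hs0 hst htT
  have hsT : s ≤ T := le_trans hst.le htT
  have hαs := hα3 s hs0 hsT
  have hEs0 : 0 < min (2 * α s) 1 := lt_min (by linarith [hαs.1]) one_pos
  have hEs1 : min (2 * α s) 1 ≤ 1 := min_le_right _ _
  have hrp0 : 0 ≤ (t - s) ^ min (2 * α s) 1 := Real.rpow_nonneg (by linarith) _
  obtain ⟨i, his, hit⟩ := Stmt8Aux.exists_piece ρ hρmono s (by rw [hρ0]; exact hs0)
    (by rw [hρN]; exact lt_of_lt_of_le hst htT)
  rcases lt_or_ge (t - s) δ with hsmall | hbig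
  · rcases le_or_gt t (ρ i.succ) with hcase | hcase
    · -- same piece
      rw [hExt i s t his hst.le hcase]
      calc ‖XXloc i s t‖ ≤ Kloc * (t - s) ^ min (2 * α s) 1 := hBoundLoc i s t his hst hcase
        _ ≤ (CG / δ + (Kloc + Kloc * CA' ^ 2 + KX ^ 2 * CA')) * (t - s) ^ min (2 * α s) 1 := by
            apply mul_le_mul_of_nonneg_right _ hrp0
            have h2 : 0 ≤ Kloc * CA' ^ 2 := by positivity
            have h3 : 0 ≤ KX ^ 2 * CA' := by positivity
            linarith
    · -- straddling one partition point r = ρ i.succ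
      have hsr : s < ρ i.succ := hit
      have hrt : ρ i.succ < t := hcase
      have hrm := hρle i.succ
      have hne : i.succ ≠ Fin.last N := by
        intro h
        rw [h, hρN] at hrt
        linarith
      set j := (i.succ).castPred hne with hjdef
      have hjc : j.castSucc = i.succ := Fin.castSucc_castPred _ hne
      have hδj := hδle j
      have hrρ : ρ j.castSucc = ρ i.succ := by rw [hjc]
      have htj : t ≤ ρ j.succ := by
        have h6 : t - s < ρ j.succ - ρ j.castSucc := lt_of_lt_of_le hsmall hδj
        rw [hrρ] at h6
        linarith
      have hXsr : XX s (ρ i.succ) = XXloc i s (ρ i.succ) := hExt i s (ρ i.succ) his hsr.le le_rfl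
      have hXrt : XX (ρ i.succ) t = XXloc j (ρ i.succ) t :=
        hExt j (ρ i.succ) t (le_of_eq hrρ) hrt.le htj
      have hch := hChen s (ρ i.succ) t
      have hXst : XX s t = XXloc i s (ρ i.succ) + XXloc j (ρ i.succ) t
          + tensor (X (ρ i.succ) - X s) (X t - X (ρ i.succ)) := by
        calc XX s t = (XX s t - XX s (ρ i.succ) - XX (ρ i.succ) t)
              + XX s (ρ i.succ) + XX (ρ i.succ) t := by abel
          _ = _ := by rw [hch, hXsr, hXrt]; abel
      rw [hXst]
      -- now the analytic estimates
      have hαr := hα3 (ρ i.succ) hrm.1 hrm.2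
      have hx : (0:ℝ) < ρ i.succ - s := by linarith
      have hy : (0:ℝ) < t - ρ i.succ := by linarith
      have hts1 : t - s ≤ 1 := by linarith
      have hCAx : (ρ i.succ - s) ^ (α (ρ i.succ) - α s) ≤ CA' := by
        have hmem : ρ i.succ ∈ Set.Icc (0:ℝ) T := ⟨hrm.1, hrm.2⟩
        have habs : |s - ρ i.succ| = ρ i.succ - s := by
          rw [abs_of_neg (by linarith : s - ρ i.succ < 0)]; ring
        have h7 := hA1 (ρ i.succ) hmem (s - ρ i.succ)
          (by rw [habs]; linarith)
          (by rw [habs]; linarith)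
          (by rw [show ρ i.succ + (s - ρ i.succ) = s by ring]; exact ⟨hs0, hsT⟩)
        rw [habs, show ρ i.succ + (s - ρ i.succ) = s by ring] at h7
        exact le_trans h7 (le_max_left _ _)
      have hk1 := Stmt8Aux.key1 (αs := α s) (αr := α (ρ i.succ)) (CA := CA')
        (e := min (2 * α s) 1) (e' := min (2 * α (ρ i.succ)) 1)
        hCA'1 (by linarith [hαs.1]) (by linarith [hαr.1]) rfl rfl hx hy
        (by linarith) hCAx
      rw [show ρ i.succ - s + (t - ρ i.succ) = t - s by ring] at hk1
      have hk2 := Stmt8Aux.key2 (αs := α s) (αr := α (ρ i.succ)) (CA := CA')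
        (e := min (2 * α s) 1)
        hCA'1 (by linarith [hαs.1]) (by linarith [hαr.1]) rfl hx hy
        (by linarith) hCAx
      rw [show ρ i.succ - s + (t - ρ i.succ) = t - s by ring] at hk2
      have e1 : ‖XXloc i s (ρ i.succ)‖ ≤ Kloc * (t - s) ^ min (2 * α s) 1 := by
        calc ‖XXloc i s (ρ i.succ)‖ ≤ Kloc * (ρ i.succ - s) ^ min (2 * α s) 1 :=
              hBoundLoc i s (ρ i.succ) his hsr le_rfl
          _ ≤ Kloc * (t - s) ^ min (2 * α s) 1 := by
              apply mul_le_mul_of_nonneg_left _ hKloc0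
              exact Real.rpow_le_rpow (by linarith) (by linarith) hEs0.le
      have e2 : ‖XXloc j (ρ i.succ) t‖ ≤ Kloc * CA' ^ 2 * (t - s) ^ min (2 * α s) 1 := by
        have h8 : ‖XXloc j (ρ i.succ) t‖
            ≤ Kloc * (t - ρ i.succ) ^ min (2 * α (ρ i.succ)) 1 := by
          exact hBoundLoc j (ρ i.succ) t (le_of_eq hrρ) hrt htj
        calc ‖XXloc j (ρ i.succ) t‖ ≤ Kloc * (t - ρ i.succ) ^ min (2 * α (ρ i.succ)) 1 := h8
          _ ≤ Kloc * (CA' ^ 2 * (t - s) ^ min (2 * α s) 1) :=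
              mul_le_mul_of_nonneg_left hk1 hKloc0
          _ = Kloc * CA' ^ 2 * (t - s) ^ min (2 * α s) 1 := by ring
      have e3 : ‖tensor (X (ρ i.succ) - X s) (X t - X (ρ i.succ))‖
          ≤ KX ^ 2 * CA' * (t - s) ^ min (2 * α s) 1 := by
        rw [Stmt8Aux.norm_tensor]
        have ha := hX s (ρ i.succ) hs0 hsr hrm.2
        have hb := hX (ρ i.succ) t hrm.1 hrt htT
        have hge : 0 ≤ KX * (t - ρ i.succ) ^ α (ρ i.succ) :=
          mul_nonneg hKX0 (Real.rpow_nonneg hy.le _)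
        calc ‖X (ρ i.succ) - X s‖ * ‖X t - X (ρ i.succ)‖
            ≤ (KX * (ρ i.succ - s) ^ α s) * (KX * (t - ρ i.succ) ^ α (ρ i.succ)) :=
              mul_le_mul ha hb (norm_nonneg _) (mul_nonneg hKX0 (Real.rpow_nonneg hx.le _))
          _ = KX ^ 2 * ((ρ i.succ - s) ^ α s * (t - ρ i.succ) ^ α (ρ i.succ)) := by ring
          _ ≤ KX ^ 2 * (CA' * (t - s) ^ min (2 * α s) 1) :=
              mul_le_mul_of_nonneg_left hk2 (sq_nonneg KX)
          _ = KX ^ 2 * CA' * (t - s) ^ min (2 * α s) 1 := by ring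
      have hsum : ‖XXloc i s (ρ i.succ) + XXloc j (ρ i.succ) t
          + tensor (X (ρ i.succ) - X s) (X t - X (ρ i.succ))‖
          ≤ ‖XXloc i s (ρ i.succ)‖ + ‖XXloc j (ρ i.succ) t‖
            + ‖tensor (X (ρ i.succ) - X s) (X t - X (ρ i.succ))‖ := by
        calc ‖_ + _ + _‖ ≤ ‖XXloc i s (ρ i.succ) + XXloc j (ρ i.succ) t‖
              + ‖tensor (X (ρ i.succ) - X s) (X t - X (ρ i.succ))‖ := norm_add_le _ _
          _ ≤ _ := by linarith [norm_add_le (XXloc i s (ρ i.succ)) (XXloc j (ρ i.succ) t)]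
      have hfin : (CG / δ + (Kloc + Kloc * CA' ^ 2 + KX ^ 2 * CA')) * (t - s) ^ min (2 * α s) 1
          = CG / δ * (t - s) ^ min (2 * α s) 1
            + Kloc * (t - s) ^ min (2 * α s) 1
            + Kloc * CA' ^ 2 * (t - s) ^ min (2 * α s) 1
            + KX ^ 2 * CA' * (t - s) ^ min (2 * α s) 1 := by ring
      have h9 : 0 ≤ CG / δ * (t - s) ^ min (2 * α s) 1 := mul_nonneg hCGδ0 hrp0
      rw [hfin]
      linarith
  · -- big gap: use global bound
    have hnorm : ‖XX s t‖ ≤ CG := by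
      rw [hXXdef]
      simp only
      have h1 : ‖F t - F s - tensor (X s) (X t - X s)‖
          ≤ ‖F t‖ + ‖F s‖ + ‖tensor (X s) (X t - X s)‖ := by
        calc ‖F t - F s - tensor (X s) (X t - X s)‖
            ≤ ‖F t - F s‖ + ‖tensor (X s) (X t - X s)‖ := norm_sub_le _ _
          _ ≤ _ := by linarith [norm_sub_le (F t) (F s)]
      have h2 : ‖tensor (X s) (X t - X s)‖ ≤ BX * (KX * MT) := by
        rw [Stmt8Aux.norm_tensor]
        exact mul_le_mul (hXb s hs0 hsT) (hXd s t hs0 hst.le htT) (norm_nonneg _) hBX0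
      have h3 := hFb t
      have h4 := hFb s
      rw [hCGdef]
      linarith
    have hδrp : δ ≤ (t - s) ^ min (2 * α s) 1 := Stmt8Aux.le_rpow hδpos hδ1 hbig hEs0 hEs1
    have hKBrp : 0 ≤ (Kloc + Kloc * CA' ^ 2 + KX ^ 2 * CA') * (t - s) ^ min (2 * α s) 1 :=
      mul_nonneg hKB0 hrp0
    calc ‖XX s t‖ ≤ CG := hnorm
      _ = CG / δ * δ := by field_simp
      _ ≤ CG / δ * (t - s) ^ min (2 * α s) 1 := mul_le_mul_of_nonneg_left hδrp hCGδ0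
      _ ≤ (CG / δ + (Kloc + Kloc * CA' ^ 2 + KX ^ 2 * CA')) * (t - s) ^ min (2 * α s) 1 := by
          nlinarith
end

section
/- (Variable order rough integration) Let α : [0,T] → (1/3, 1), (X,𝕏) ∈ 𝒞^{α(·)}([0,T];ℝ^d) a variable order rough path, and (Y,Y′) ∈ D_X^{α(·)}([0,T];ℝⁿ) a controlled path. Setting Ξ(s,t) = Y_s X_{s,t} + Y′_s 𝕏_{s,t}, the sewing lemma applies (since δΞ(s,u,t) = Y′_{s,u} 𝕏_{u,t} + R^Y_{s,u} X_{u,t} has local order 3α(s) > 1), and the resulting rough integral satisfies |∫_s^t Y_r dX_r − Y_s X_{s,t} − Y′_s 𝕏_{s,t}| ≤ C |t−s|^β (‖X‖_{α(·)} + ‖𝕏‖_{2α(·)∧1}) ‖Y,Y′‖_{X,α(·)}, where β = inf_t 3α(t) ∧ (1 + inf α) > 1. -/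
open Finset
namespace Sew13
set_option linter.unusedSectionVars false
variable {E : Type*} [NormedAddCommGroup E] [NormedSpace ℝ E]

def gsum (Ξ : ℝ → ℝ → E) (p : ℕ → ℝ) (N : ℕ) : E := ∑ i ∈ Finset.range N, Ξ (p i) (p (i+1))

lemma gsum_merge (Ξ : ℝ → ℝ → E) (p : ℕ → ℝ) (M : ℕ) :
    gsum Ξ p (2*M) = gsum Ξ (fun j => p (2*j)) M +
      ∑ j ∈ Finset.range M,
        (Ξ (p (2*j)) (p (2*j+1)) + Ξ (p (2*j+1)) (p (2*j+2)) - Ξ (p (2*j)) (p (2*j+2))) := by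
  induction M with
  | zero => simp [gsum]
  | succ M ih =>
    have h2 : 2*(M+1) = (2*M+1)+1 := by ring
    rw [h2, gsum, Finset.sum_range_succ, Finset.sum_range_succ, ← gsum, ih]
    simp only [gsum, Finset.sum_range_succ]
    have e1 : 2*M+1+1 = 2*(M+1) := by ring
    have e2 : 2*M+2 = 2*(M+1) := by ring
    rw [e1]
    abel


-- helper: c^β ≤ d^(β-1) * c  for 0 ≤ c ≤ d, 1 < β
lemma rpow_split {c d β : ℝ} (hβ : 1 < β) (hc : 0 ≤ c) (hcd : c ≤ d) :
    c ^ β ≤ d ^ (β - 1) * c := by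
  rcases eq_or_lt_of_le hc with h | h
  · rw [← h, Real.zero_rpow (by linarith), mul_zero]
  · have : c ^ β = c ^ (β - 1) * c ^ (1:ℝ) := by
      rw [← Real.rpow_add h]; ring_nf
    rw [this, Real.rpow_one]
    gcongr

-- helper: x^e ≤ (1+T)^(2:ℝ) * x^β for 0 ≤ x ≤ T, 1 < β ≤ e ≤ 3
lemma rpow_exp_le {T x β e : ℝ} (hT : 0 < T) (hx : 0 ≤ x) (hxT : x ≤ T)
    (hβ : 1 < β) (hβe : β ≤ e) (he : e ≤ 3) :
    x ^ e ≤ (1+T) ^ (2:ℝ) * x ^ β := by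
  have h1T : (1:ℝ) ≤ 1 + T := by linarith
  have hpow1 : (1:ℝ) ≤ (1+T) ^ (2:ℝ) := Real.one_le_rpow h1T (by norm_num)
  rcases eq_or_lt_of_le hx with h | h
  · rw [← h, Real.zero_rpow (by linarith), Real.zero_rpow (by linarith)]
    simp
  rcases le_or_gt x 1 with hx1 | hx1
  · calc x ^ e ≤ x ^ β := Real.rpow_le_rpow_of_exponent_ge h hx1 hβe
    _ ≤ (1+T) ^ (2:ℝ) * x ^ β := by
        nlinarith [Real.rpow_nonneg hx β]
  · have : x ^ e = x ^ β * x ^ (e - β) := by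
      rw [← Real.rpow_add h]; ring_nf
    rw [this]
    have h2 : x ^ (e - β) ≤ x ^ (2:ℝ) := Real.rpow_le_rpow_of_exponent_le hx1.le (by linarith)
    have h3 : x ^ (2:ℝ) ≤ (1+T) ^ (2:ℝ) := Real.rpow_le_rpow (by linarith) (by linarith) (by norm_num)
    nlinarith [Real.rpow_nonneg hx β, Real.rpow_nonneg hx (e-β)]

-- clamp lipschitz helpers
lemma max_lip (s a b : ℝ) (hab : a ≤ b) : max s b ≤ max s a + (b - a) := by
  apply max_le
  · linarith [le_max_left s a]
  · linarith [le_max_right s a]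

lemma min_lip (t a b : ℝ) (hab : a ≤ b) : min b t ≤ min a t + (b - a) := by
  rcases le_total a t with h | h
  · rw [min_eq_left h]
    rcases le_total b t with h2 | h2
    · rw [min_eq_left h2]; linarith
    · rw [min_eq_right h2]; linarith
  · rw [min_eq_right h]
    rcases le_total b t with h2 | h2
    · rw [min_eq_left h2]; linarith
    · rw [min_eq_right h2]; linarith


lemma sew_key (Ξ : ℝ → ℝ → E) (T A β : ℝ) (hβ : 1 < β) (hA : 0 ≤ A)
    (hδ : ∀ s u t : ℝ, 0 ≤ s → s ≤ u → u ≤ t → t ≤ T →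
      ‖Ξ s t - Ξ s u - Ξ u t‖ ≤ A * (t-s)^β)
    (hdiag : ∀ x : ℝ, 0 ≤ x → x ≤ T → Ξ x x = 0) :
    ∀ (k : ℕ) (h : ℝ), 0 ≤ h → ∀ (N : ℕ), N ≤ 2^k → ∀ (p : ℕ → ℝ), Monotone p →
      0 ≤ p 0 → p N ≤ T → (∀ i, p (i+1) - p i ≤ h) → (∀ i, N ≤ i → p i = p N) →
      ‖gsum Ξ p N - Ξ (p 0) (p N)‖ ≤
        A * (p N - p 0) * ∑ r ∈ Finset.range k, ((2:ℝ)^(r+1) * h)^(β-1) := by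
  intro k
  induction k with
  | zero =>
    intro h hh N hN p hp hp0 hpT hstep hconst
    interval_cases N
    · simp [gsum, hdiag (p 0) hp0 hpT]
    · simp [gsum]
  | succ k ih =>
    intro h hh N hN p hp hp0 hpT hstep hconst
    have hRHS0 : 0 ≤ A * (p N - p 0) * ∑ r ∈ Finset.range (k+1), ((2:ℝ)^(r+1) * h)^(β-1) := by
      apply mul_nonneg (mul_nonneg hA (by linarith [hp (Nat.zero_le N)]))
      apply Finset.sum_nonneg
      intro r _
      exact Real.rpow_nonneg (by positivity) _
    by_cases hN1 : N ≤ 1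
    · interval_cases N
      · simpa [gsum, hdiag (p 0) hp0 hpT] using hRHS0
      · simpa [gsum] using hRHS0
    push_neg at hN1
    -- merged partition
    set M := (N+1)/2 with hM
    have hNM : N ≤ 2*M ∧ 2*M ≤ N+1 ∧ 1 ≤ M := by omega
    have hMk : M ≤ 2^k := by
      have h2 : (2:ℕ)^(k+1) = 2*2^k := by ring
      omega
    set q' : ℕ → ℝ := fun i => p (min i N) with hq'
    set q : ℕ → ℝ := fun j => p (min (2*j) N) with hq
    -- basic bounds on p
    have hp0le : ∀ i, 0 ≤ p i := fun i => le_trans hp0 (hp (Nat.zero_le i))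
    have hpleT : ∀ i, i ≤ N → p i ≤ T := fun i hi => le_trans (hp hi) hpT
    -- (1) gsum p N = gsum q' (2M)
    have h1 : gsum Ξ q' (2*M) = gsum Ξ p N := by
      rw [gsum, gsum]
      rw [← Finset.sum_subset (Finset.range_subset_range.2 hNM.1)]
      · apply Finset.sum_congr rfl
        intro i hi
        have : i < N := Finset.mem_range.1 hi
        simp only [hq']
        rw [min_eq_left this.le, min_eq_left (by omega)]
      · intro i _ hi
        have hiN : N ≤ i := by simpa using hi
        simp only [hq']
        have e1 : min i N = N := min_eq_right hiN
        have e2 : min (i+1) N = N := min_eq_right (by omega)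
        rw [e1, e2]
        exact hdiag (p N) (hp0le N) hpT
    -- (2) merge
    have h2 := gsum_merge Ξ q' M
    have hqq : (fun j => q' (2*j)) = q := rfl
    rw [hqq, h1] at h2
    -- step bounds for q'
    have hq'mono : Monotone q' := fun a b hab => hp (min_le_min hab (le_refl N))
    have hq'2 : ∀ j, q' (2*j+2) - q' (2*j) ≤ 2*h := by
      intro j
      have e1 : min (2*j+2) N ≤ min (2*j) N + 2 := by omega
      have := hp e1
      have s1 := hstep (min (2*j) N)
      have s2 := hstep (min (2*j) N + 1)
      simp only [hq']
      calc p (min (2*j+2) N) - p (min (2*j) N) ≤ p (min (2*j) N + 2) - p (min (2*j) N) := by linarith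
        _ ≤ 2*h := by linarith
    have hq'T : ∀ i, q' i ≤ T := by
      intro i
      exact hpleT _ (min_le_right _ _)
    -- (3) delta-term bound
    have h3 : ‖∑ j ∈ Finset.range M,
        (Ξ (q' (2*j)) (q' (2*j+1)) + Ξ (q' (2*j+1)) (q' (2*j+2)) - Ξ (q' (2*j)) (q' (2*j+2)))‖
        ≤ A * (2*h)^(β-1) * (p N - p 0) := by
      calc ‖∑ j ∈ Finset.range M, (Ξ (q' (2*j)) (q' (2*j+1)) + Ξ (q' (2*j+1)) (q' (2*j+2)) - Ξ (q' (2*j)) (q' (2*j+2)))‖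
          ≤ ∑ j ∈ Finset.range M, ‖Ξ (q' (2*j)) (q' (2*j+1)) + Ξ (q' (2*j+1)) (q' (2*j+2)) - Ξ (q' (2*j)) (q' (2*j+2))‖ :=
            norm_sum_le _ _
        _ ≤ ∑ j ∈ Finset.range M, A * (2*h)^(β-1) * (q' (2*(j+1)) - q' (2*j)) := by
            apply Finset.sum_le_sum
            intro j _
            have hab : q' (2*j) ≤ q' (2*j+1) := hq'mono (by omega)
            have hbc : q' (2*j+1) ≤ q' (2*j+2) := hq'mono (by omega)
            have hnorm : ‖Ξ (q' (2*j)) (q' (2*j+1)) + Ξ (q' (2*j+1)) (q' (2*j+2)) - Ξ (q' (2*j)) (q' (2*j+2))‖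
                = ‖Ξ (q' (2*j)) (q' (2*j+2)) - Ξ (q' (2*j)) (q' (2*j+1)) - Ξ (q' (2*j+1)) (q' (2*j+2))‖ := by
              rw [← norm_neg]; congr 1; abel
            rw [hnorm]
            calc ‖Ξ (q' (2*j)) (q' (2*j+2)) - Ξ (q' (2*j)) (q' (2*j+1)) - Ξ (q' (2*j+1)) (q' (2*j+2))‖
                ≤ A * (q' (2*j+2) - q' (2*j))^β :=
                  hδ _ _ _ (hp0le _) hab hbc (hq'T _)
              _ ≤ A * ((2*h)^(β-1) * (q' (2*j+2) - q' (2*j))) := by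
                  apply mul_le_mul_of_nonneg_left _ hA
                  exact rpow_split hβ (by linarith) (hq'2 j)
              _ = A * (2*h)^(β-1) * (q' (2*(j+1)) - q' (2*j)) := by
                  rw [show 2*(j+1) = 2*j+2 from by ring]; ring
        _ = A * (2*h)^(β-1) * ∑ j ∈ Finset.range M, ((fun j => q' (2*j)) (j+1) - (fun j => q' (2*j)) j) := by
            rw [Finset.mul_sum]
        _ = A * (2*h)^(β-1) * (q' (2*M) - q' 0) := by
            have tele := Finset.sum_range_sub (fun j => q' (2*j)) M
            rw [tele]
        _ = A * (2*h)^(β-1) * (p N - p 0) := by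
            simp only [hq']
            rw [min_eq_right (by omega), min_eq_left (Nat.zero_le N)]
    -- (4) IH for q
    have hqmono : Monotone q := fun a b hab => hp (min_le_min (by omega) (le_refl N))
    have hq0 : q 0 = p 0 := by simp [hq]
    have hqM : q M = p N := by simp only [hq]; rw [min_eq_right (by omega)]
    have h4 := ih (2*h) (by linarith) M hMk q hqmono
      (by rw [hq0]; exact hp0) (by rw [hqM]; exact hpT)
      (fun j => by
        simp only [hq]
        have := hq'2 j
        simp only [hq'] at this
        calc p (min (2*(j+1)) N) - p (min (2*j) N)
            = p (min (2*j+2) N) - p (min (2*j) N) := by rw [show 2*(j+1) = 2*j+2 from by ring]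
          _ ≤ 2*h := this)
      (fun j hj => by
        simp only [hq]
        rw [min_eq_right (by omega), min_eq_right (by omega)])
    rw [hq0, hqM] at h4
    -- combine
    have hcomb : gsum Ξ p N - Ξ (p 0) (p N) =
        (gsum Ξ q M - Ξ (p 0) (p N)) +
        ∑ j ∈ Finset.range M,
          (Ξ (q' (2*j)) (q' (2*j+1)) + Ξ (q' (2*j+1)) (q' (2*j+2)) - Ξ (q' (2*j)) (q' (2*j+2))) := by
      rw [h2]; abel
    rw [hcomb]
    calc ‖(gsum Ξ q M - Ξ (p 0) (p N)) + ∑ j ∈ Finset.range M, (Ξ (q' (2*j)) (q' (2*j+1)) + Ξ (q' (2*j+1)) (q' (2*j+2)) - Ξ (q' (2*j)) (q' (2*j+2)))‖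
        ≤ ‖gsum Ξ q M - Ξ (p 0) (p N)‖ + ‖∑ j ∈ Finset.range M, (Ξ (q' (2*j)) (q' (2*j+1)) + Ξ (q' (2*j+1)) (q' (2*j+2)) - Ξ (q' (2*j)) (q' (2*j+2)))‖ :=
          norm_add_le _ _
      _ ≤ A * (p N - p 0) * ∑ r ∈ Finset.range k, ((2:ℝ)^(r+1) * (2*h))^(β-1)
          + A * (2*h)^(β-1) * (p N - p 0) := add_le_add h4 h3
      _ = A * (p N - p 0) * ∑ r ∈ Finset.range (k+1), ((2:ℝ)^(r+1) * h)^(β-1) := by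
          rw [Finset.sum_range_succ' (fun r => ((2:ℝ)^(r+1) * h)^(β-1)) k]
          have : ∀ r : ℕ, ((2:ℝ)^(r+1) * (2*h))^(β-1) = ((2:ℝ)^(r+1+1) * h)^(β-1) := by
            intro r; congr 1; ring
          simp only [this]
          norm_num
          ring

set_option maxHeartbeats 2000000 in
theorem sewing [CompleteSpace E] (T β : ℝ) (hT : 0 < T) (hβ : 1 < β) (A : ℝ) (hA : 0 ≤ A)
    (Ξ : ℝ → ℝ → E)
    (hδ : ∀ s u t : ℝ, 0 ≤ s → s ≤ u → u ≤ t → t ≤ T →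
      ‖Ξ s t - Ξ s u - Ξ u t‖ ≤ A * (t - s) ^ β) :
    ∃ C > (0:ℝ), ∃ I : ℝ → E, I 0 = 0 ∧ ∀ s t : ℝ, 0 ≤ s → s ≤ t → t ≤ T →
      ‖(I t - I s) - Ξ s t‖ ≤ C * A * (t - s) ^ β := by
  have hβ0 : β ≠ 0 := by linarith
  have hβ10 : 0 ≤ β - 1 := by linarith
  have hdiag : ∀ x : ℝ, 0 ≤ x → x ≤ T → Ξ x x = 0 := by
    intro x hx hxT
    have h0 := hδ x x x hx le_rfl le_rfl hxT
    have e : Ξ x x - Ξ x x - Ξ x x = -(Ξ x x) := by abel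
    rw [e, norm_neg, sub_self, Real.zero_rpow hβ0, mul_zero] at h0
    exact norm_le_zero_iff.1 h0
  -- the grid partial sums
  set S : ℕ → ℝ → E := fun n t => gsum Ξ (fun i : ℕ => min ((i:ℝ) * (T/2^n)) t) (2^n) with hS
  have hh0 : ∀ n : ℕ, 0 < T/2^n := fun n => by positivity
  have hhT : ∀ n : ℕ, T/2^n ≤ T := fun n => by
    apply div_le_self hT.le
    exact one_le_pow₀ (by norm_num)
  -- grid points are monotone etc.
  have hPmono : ∀ (n : ℕ) (t : ℝ), Monotone (fun i : ℕ => min ((i:ℝ) * (T/2^n)) t) := by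
    intro n t a b hab
    exact min_le_min (mul_le_mul_of_nonneg_right (by exact_mod_cast hab) (hh0 n).le) le_rfl
  have hPstep : ∀ (n : ℕ) (t : ℝ) (i : ℕ),
      min (((i:ℕ)+1:ℝ) * (T/2^n)) t - min ((i:ℝ) * (T/2^n)) t ≤ T/2^n := by
    intro n t i
    have := min_lip t ((i:ℝ) * (T/2^n)) (((i:ℝ)+1) * (T/2^n))
      (by nlinarith [(hh0 n).le])
    have e : ((i:ℝ)+1) * (T/2^n) - (i:ℝ) * (T/2^n) = T/2^n := by ring
    linarith [this]
  -- Cauchy estimate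
  have hr1 : (2:ℝ)^((1:ℝ)-β) < 1 := Real.rpow_lt_one_of_one_lt_of_neg one_lt_two (by linarith)
  have hcau : ∀ t : ℝ, 0 ≤ t → t ≤ T → ∀ n : ℕ,
      ‖S (n+1) t - S n t‖ ≤ (A * T^β) * ((2:ℝ)^((1:ℝ)-β))^n := by
    intro t ht htT n
    have hmerge := gsum_merge Ξ (fun i : ℕ => min ((i:ℝ) * (T/2^(n+1))) t) (2^n)
    have h2pow : 2 * 2^n = 2^(n+1) := by ring
    rw [h2pow] at hmerge
    have hPP : (fun j : ℕ => min (((2*j : ℕ):ℝ) * (T/2^(n+1))) t)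
        = (fun i : ℕ => min ((i:ℝ) * (T/2^n)) t) := by
      funext j
      congr 1
      push_cast
      ring
    rw [hPP] at hmerge
    have : S (n+1) t - S n t = ∑ j ∈ Finset.range (2^n),
        (Ξ (min (((2*j : ℕ):ℝ) * (T/2^(n+1))) t) (min (((2*j+1 : ℕ):ℝ) * (T/2^(n+1))) t)
          + Ξ (min (((2*j+1 : ℕ):ℝ) * (T/2^(n+1))) t) (min (((2*j+2 : ℕ):ℝ) * (T/2^(n+1))) t)
          - Ξ (min (((2*j : ℕ):ℝ) * (T/2^(n+1))) t) (min (((2*j+2 : ℕ):ℝ) * (T/2^(n+1))) t)) := by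
      rw [hS]; simp only []
      rw [hmerge]
      abel
    rw [this]
    calc ‖∑ j ∈ Finset.range (2^n), _‖ ≤ ∑ j ∈ Finset.range (2^n), (A * (T/2^n)^β) := by
          apply norm_sum_le_of_le
          intro j _
          set a := min (((2*j : ℕ):ℝ) * (T/2^(n+1))) t with ha
          set u := min (((2*j+1 : ℕ):ℝ) * (T/2^(n+1))) t with hu
          set b := min (((2*j+2 : ℕ):ℝ) * (T/2^(n+1))) t with hb
          have hmono := hPmono (n+1) t
          have hau : a ≤ u := hmono (by omega)
          have hub : u ≤ b := hmono (by omega)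
          have ha0 : 0 ≤ a := le_min (by positivity) ht
          have hbT : b ≤ T := le_trans (min_le_right _ _) htT
          have hba : b - a ≤ T/2^n := by
            rcases le_total (((2*j : ℕ):ℝ) * (T/2^(n+1))) t with hc | hc
            · have ha' : a = ((2*j : ℕ):ℝ) * (T/2^(n+1)) := min_eq_left hc
              have hb' : b ≤ ((2*j+2 : ℕ):ℝ) * (T/2^(n+1)) := min_le_left _ _
              have e : ((2*j+2 : ℕ):ℝ) * (T/2^(n+1)) - ((2*j : ℕ):ℝ) * (T/2^(n+1)) = T/2^n := by
                push_cast
                rw [pow_succ]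
                field_simp
                ring
              rw [ha']
              linarith
            · have ha' : a = t := min_eq_right hc
              have hb' : b ≤ t := min_le_right _ _
              rw [ha']
              linarith [(hh0 n).le]
          have e : Ξ a u + Ξ u b - Ξ a b = -(Ξ a b - Ξ a u - Ξ u b) := by abel
          rw [e, norm_neg]
          calc ‖Ξ a b - Ξ a u - Ξ u b‖ ≤ A * (b-a)^β := hδ a u b ha0 hau hub hbT
            _ ≤ A * (T/2^n)^β := by
                gcongr
                · linarith
        _ = (A * T^β) * ((2:ℝ)^((1:ℝ)-β))^n := by
          rw [Finset.sum_const, Finset.card_range, nsmul_eq_mul]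
          push_cast
          have h1 : ((2:ℝ)^((1:ℝ)-β))^n = (2:ℝ)^(((1:ℝ)-β)*n) := by
            rw [← Real.rpow_natCast ((2:ℝ)^((1:ℝ)-β)) n, ← Real.rpow_mul (by norm_num)]
          have h2 : ((T/2^n):ℝ)^β = T^β / (2:ℝ)^((n:ℝ)*β) := by
            rw [Real.div_rpow hT.le (by positivity), ← Real.rpow_natCast (2:ℝ) n,
              ← Real.rpow_mul (by norm_num)]
          have h3 : ((2:ℝ)^n) = (2:ℝ)^((n:ℝ)) := (Real.rpow_natCast 2 n).symm
          rw [h1, h2, h3]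
          rw [show ((1:ℝ)-β)*(n:ℝ) = (n:ℝ) - (n:ℝ)*β by ring]
          rw [Real.rpow_sub (by norm_num : (0:ℝ) < 2)]
          have hne : (2:ℝ)^((n:ℝ)*β) ≠ 0 := (Real.rpow_pos_of_pos (by norm_num) _).ne'
          field_simp
  -- limits exist
  have hex : ∀ t : ℝ, 0 ≤ t ∧ t ≤ T → ∃ a : E, Filter.Tendsto (fun n => S n t) Filter.atTop (nhds a) := by
    intro t ht
    apply cauchySeq_tendsto_of_complete
    apply cauchySeq_of_le_geometric ((2:ℝ)^((1:ℝ)-β)) (A * T^β) hr1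
    intro n
    rw [dist_eq_norm, norm_sub_rev]
    exact hcau t ht.1 ht.2 n
  set I : ℝ → E := fun t => if ht : 0 ≤ t ∧ t ≤ T then (hex t ht).choose else 0 with hI
  have hItend : ∀ t : ℝ, ∀ ht : 0 ≤ t ∧ t ≤ T,
      Filter.Tendsto (fun n => S n t) Filter.atTop (nhds (I t)) := by
    intro t ht
    rw [hI]
    simp only [dif_pos ht]
    exact (hex t ht).choose_spec
  have hI0 : I 0 = 0 := by
    have hz : ∀ n, S n 0 = 0 := by
      intro n
      rw [hS]
      simp only []
      rw [gsum]
      apply Finset.sum_eq_zero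
      intro i _
      have e : ∀ m : ℕ, min ((m:ℝ) * (T/2^n)) 0 = 0 := fun m =>
        min_eq_right (by positivity)
      rw [e i, e (i+1)]
      exact hdiag 0 le_rfl hT.le
    have h1 := hItend 0 ⟨le_rfl, hT.le⟩
    have h2 : Filter.Tendsto (fun n => S n 0) Filter.atTop (nhds 0) := by
      simp only [hz]
      exact tendsto_const_nhds
    exact (tendsto_nhds_unique h1 h2)
  -- constant
  set x : ℝ := (2:ℝ)^(β-1) with hxdef
  have hx1 : (1:ℝ) < x := by
    rw [hxdef, show (1:ℝ) = (2:ℝ)^(0:ℝ) from (Real.rpow_zero 2).symm]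
    exact Real.rpow_lt_rpow_of_exponent_lt one_lt_two (by linarith)
  have hxpos : 0 < x := by linarith
  have hCpos : 0 < x*x/(x-1) + 1 := by
    have : 0 < x*x/(x-1) := div_pos (by nlinarith) (by linarith)
    linarith
  refine ⟨x*x/(x-1) + 1, hCpos, I, hI0, ?_⟩
  intro s t hs hst htT
  rcases eq_or_lt_of_le hst with rfl | hst'
  · rw [hdiag s hs htT]
    simp [Real.zero_rpow hβ0]
  -- main case s < t
  have hsT : s < T := lt_of_lt_of_le hst' htT
  have htb : 0 ≤ t := le_trans hs hst
  have key : ∀ n : ℕ, ‖(S n t - S n s) - Ξ s t‖ ≤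
      A*(t-s)*(x/(x-1)) * (2*(t-s)+4*(T/2^n))^(β-1) + A*(T^(β-1)*(T/2^n)) := by
    intro n
    set h := T/2^n with hh
    have hh0' : 0 < h := hh0 n
    have hSn : ∀ r : ℝ, S n r = gsum Ξ (fun i : ℕ => min ((i:ℝ)*h) r) (2^n) := by
      intro r; rw [hS, hh]
    set u : ℕ → ℝ := fun i => max s (min ((i:ℝ)*h) t) with hu
    set i0 := Nat.floor (s/h) with hi0
    set i1 := min (Nat.ceil (t/h)) (2^n) with hi1
    set N := i1 - i0 with hNdef
    have hT2n : ((2^n:ℕ):ℝ)*h = T := by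
      rw [hh]; push_cast; field_simp
    -- grid facts
    have hi0le : (i0:ℝ)*h ≤ s := by
      have h1 := Nat.floor_le (show 0 ≤ s/h by positivity)
      calc (i0:ℝ)*h ≤ (s/h)*h := mul_le_mul_of_nonneg_right h1 hh0'.le
        _ = s := by field_simp
    have hslt : s < ((i0:ℝ)+1)*h := by
      have h1 := Nat.lt_floor_add_one (s/h)
      calc s = (s/h)*h := by field_simp
        _ < ((i0:ℝ)+1)*h := by
          apply mul_lt_mul_of_pos_right _ hh0'
          exact_mod_cast h1
    have hi0lt : i0 < 2^n := by
      have h1 : (i0:ℝ)*h < ((2^n:ℕ):ℝ)*h := by rw [hT2n]; linarith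
      have h2 : (i0:ℝ) < ((2^n:ℕ):ℝ) := lt_of_mul_lt_mul_right h1 hh0'.le
      exact_mod_cast h2
    have hceil : ∀ i : ℕ, i1 ≤ i → t ≤ (i:ℝ)*h := by
      intro i hi
      rcases le_total (Nat.ceil (t/h)) (2^n) with hc | hc
      · have e : i1 = Nat.ceil (t/h) := min_eq_left hc
        rw [e] at hi
        have h1 : t/h ≤ (i:ℝ) := by
          have := Nat.ceil_le.1 hi
          exact_mod_cast this
        calc t = (t/h)*h := by field_simp
          _ ≤ (i:ℝ)*h := mul_le_mul_of_nonneg_right h1 hh0'.le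
      · have e : i1 = 2^n := min_eq_right hc
        rw [e] at hi
        have h1 : ((2^n:ℕ):ℝ) ≤ (i:ℝ) := by exact_mod_cast hi
        calc t ≤ T := htT
          _ = ((2^n:ℕ):ℝ)*h := hT2n.symm
          _ ≤ (i:ℝ)*h := mul_le_mul_of_nonneg_right h1 hh0'.le
    have huit : ∀ i : ℕ, i1 ≤ i → u i = t := by
      intro i hi
      rw [hu]
      simp only []
      rw [min_eq_right (hceil i hi)]
      exact max_eq_right hst
    have huis : ∀ i : ℕ, i ≤ i0 → u i = s := by
      intro i hi
      rw [hu]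
      simp only []
      apply max_eq_left
      apply le_trans (min_le_left _ _)
      calc (i:ℝ)*h ≤ (i0:ℝ)*h := by
            apply mul_le_mul_of_nonneg_right _ hh0'.le
            exact_mod_cast hi
        _ ≤ s := hi0le
    have hi12n : i1 ≤ 2^n := min_le_right _ _
    have hi0lt1 : i0 < i1 := by
      by_contra hcon
      push_neg at hcon
      have e1 := huis i1 hcon
      have e2 := huit i1 le_rfl
      rw [e1] at e2
      linarith
    have hN1 : 1 ≤ N := by omega
    have humono : Monotone u := by
      intro a b hab
      apply max_le_max le_rfl
      apply min_le_min _ le_rfl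
      apply mul_le_mul_of_nonneg_right _ hh0'.le
      exact_mod_cast hab
    have hustep : ∀ i : ℕ, u (i+1) - u i ≤ h := by
      intro i
      have hm0 : ((i:ℝ))*h ≤ ((i:ℝ)+1)*h := by nlinarith [hh0'.le]
      have hm := min_lip t ((i:ℝ)*h) (((i:ℝ)+1)*h) hm0
      have hmab : min ((i:ℝ)*h) t ≤ min (((i:ℝ)+1)*h) t := min_le_min hm0 le_rfl
      have h2 := max_lip s _ _ hmab
      rw [hu]
      simp only []
      push_cast
      have e : ((i:ℝ)+1)*h - (i:ℝ)*h = h := by ring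
      linarith
    -- D terms
    set D : ℕ → E := fun i =>
      (Ξ (min ((i:ℝ)*h) t) (min (((i+1:ℕ):ℝ)*h) t)
        - Ξ (min ((i:ℝ)*h) s) (min (((i+1:ℕ):ℝ)*h) s)) - Ξ (u i) (u (i+1)) with hD
    have hstep1 : ∀ i : ℕ, ((i:ℝ))*h ≤ ((i+1:ℕ):ℝ)*h := by
      intro i; push_cast; nlinarith [hh0'.le]
    have hDz1 : ∀ i : ℕ, s ≤ (i:ℝ)*h → D i = 0 := by
      intro i hsi
      have h1 : min ((i:ℝ)*h) s = s := min_eq_right hsi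
      have h2 : min (((i+1:ℕ):ℝ)*h) s = s := min_eq_right (le_trans hsi (hstep1 i))
      have h3 : u i = min ((i:ℝ)*h) t := by
        rw [hu]; exact max_eq_right (le_min hsi hst)
      have h4 : u (i+1) = min (((i+1:ℕ):ℝ)*h) t := by
        rw [hu]; exact max_eq_right (le_min (le_trans hsi (hstep1 i)) hst)
      rw [hD]
      simp only []
      rw [h1, h2, h3, h4, hdiag s hs (le_trans hst htT)]
      abel
    have hDz2 : ∀ i : ℕ, ((i+1:ℕ):ℝ)*h ≤ s → D i = 0 := by
      intro i his
      have his' : (i:ℝ)*h ≤ s := le_trans (hstep1 i) his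
      have h1 : min ((i:ℝ)*h) s = (i:ℝ)*h := min_eq_left his'
      have h2 : min (((i+1:ℕ):ℝ)*h) s = ((i+1:ℕ):ℝ)*h := min_eq_left his
      have h1t : min ((i:ℝ)*h) t = (i:ℝ)*h := min_eq_left (le_trans his' hst)
      have h2t : min (((i+1:ℕ):ℝ)*h) t = ((i+1:ℕ):ℝ)*h := min_eq_left (le_trans his hst)
      have h3 : u i = s := by
        rw [hu]; exact max_eq_left (le_trans (min_le_left _ _) his')
      have h4 : u (i+1) = s := by
        rw [hu]; exact max_eq_left (le_trans (min_le_left _ _) his)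
      rw [hD]
      simp only []
      rw [h1, h2, h1t, h2t, h3, h4, hdiag s hs (le_trans hst htT)]
      abel
    have hDi0 : ‖D i0‖ ≤ A * h^β := by
      rcases le_or_gt s ((i0:ℝ)*h) with hc | hc
      · rw [hDz1 i0 hc, norm_zero]
        positivity
      · have hcast : ((i0+1:ℕ):ℝ) = (i0:ℝ)+1 := by push_cast; ring
        set a := (i0:ℝ)*h with hadef
        set b := min (((i0+1:ℕ):ℝ)*h) t with hbdef
        have hsb : s ≤ b := by
          apply le_min _ hst
          rw [hcast]; exact hslt.le
        have h1 : min ((i0:ℝ)*h) t = a := min_eq_left (le_trans hc.le hst)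
        have h2 : min ((i0:ℝ)*h) s = a := min_eq_left hc.le
        have h3 : min (((i0+1:ℕ):ℝ)*h) s = s := by
          apply min_eq_right
          rw [hcast]; exact hslt.le
        have h4 : u i0 = s := by
          rw [hu]; exact max_eq_left (le_trans (min_le_left _ _) hc.le)
        have h5 : u (i0+1) = b := by
          rw [hu]; exact max_eq_right hsb
        rw [hD]
        simp only []
        rw [h1, h2, h3, h4, h5]
        have e : Ξ a b - Ξ a s - Ξ s b = (Ξ a b - Ξ a s) - Ξ s b := by abel
        calc ‖Ξ a b - Ξ a s - Ξ s b‖ ≤ A * (b - a)^β := by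
              apply hδ a s b (by positivity) hc.le hsb
              exact le_trans (min_le_right _ _) htT
          _ ≤ A * h^β := by
              gcongr
              · linarith
              · have hba : b ≤ a + h := by
                  apply le_trans (min_le_left _ _)
                  rw [hcast, hadef]; ring_nf
                  exact le_rfl
                linarith
    have hDsum : ∑ i ∈ Finset.range (2^n), D i = D i0 := by
      apply Finset.sum_eq_single_of_mem i0 (Finset.mem_range.2 hi0lt)
      intro i _ hne
      rcases lt_or_gt_of_ne hne with hlt | hgt
      · apply hDz2
        calc ((i+1:ℕ):ℝ)*h ≤ (i0:ℝ)*h := by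
              apply mul_le_mul_of_nonneg_right _ hh0'.le
              exact_mod_cast hlt
          _ ≤ s := hi0le
      · apply hDz1
        calc s ≤ ((i0:ℝ)+1)*h := hslt.le
          _ ≤ (i:ℝ)*h := by
              apply mul_le_mul_of_nonneg_right _ hh0'.le
              have : (i0+1:ℕ) ≤ i := hgt
              exact_mod_cast this
    -- split sums
    have hsplit : S n t - S n s = (∑ i ∈ Finset.range (2^n), Ξ (u i) (u (i+1)))
        + ∑ i ∈ Finset.range (2^n), D i := by
      rw [hSn t, hSn s]
      simp only [gsum, hD]
      rw [← Finset.sum_add_distrib, ← Finset.sum_sub_distrib]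
      apply Finset.sum_congr rfl
      intro i _
      abel
    -- the clamped partition
    set p : ℕ → ℝ := fun j => u (i0 + j) with hpdef
    have hp0s : p 0 = s := by
      rw [hpdef]
      simp only [Nat.add_zero]
      exact huis i0 le_rfl
    have hpNt : p N = t := by
      rw [hpdef]
      simp only []
      apply huit
      omega
    have husum : ∑ i ∈ Finset.range (2^n), Ξ (u i) (u (i+1)) = gsum Ξ p N := by
      rw [Finset.range_eq_Ico,
        ← Finset.sum_Ico_consecutive (fun i => Ξ (u i) (u (i+1))) (Nat.zero_le i0)
          (le_trans hi0lt1.le hi12n),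
        ← Finset.sum_Ico_consecutive (fun i => Ξ (u i) (u (i+1))) hi0lt1.le hi12n]
      have z1 : ∑ i ∈ Finset.Ico 0 i0, Ξ (u i) (u (i+1)) = 0 := by
        apply Finset.sum_eq_zero
        intro i hi
        have hi' := (Finset.mem_Ico.1 hi).2
        rw [huis i (by omega), huis (i+1) (by omega)]
        exact hdiag s hs (le_trans hst htT)
      have z2 : ∑ i ∈ Finset.Ico i1 (2^n), Ξ (u i) (u (i+1)) = 0 := by
        apply Finset.sum_eq_zero
        intro i hi
        have hi' := (Finset.mem_Ico.1 hi).1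
        rw [huit i (by omega), huit (i+1) (by omega)]
        exact hdiag t htb htT
      rw [z1, z2, Finset.sum_Ico_eq_sum_range]
      rw [zero_add, add_zero, gsum]
      apply Finset.sum_congr rfl
      intro j _
      rfl
    -- apply the key estimate
    set k := Nat.log 2 N + 1 with hk
    have hNk : N ≤ 2^k := (Nat.lt_pow_succ_log_self one_lt_two N).le
    have hk2N : (2:ℕ)^k ≤ 2*N := by
      rw [hk, pow_succ]
      have := Nat.pow_log_le_self 2 (show N ≠ 0 by omega)
      omega
    have hpmono : Monotone p := fun a b hab => humono (by omega)
    have hpstep : ∀ j, p (j+1) - p j ≤ h := by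
      intro j
      rw [hpdef]
      simp only []
      rw [show i0 + (j+1) = (i0+j)+1 from by omega]
      exact hustep (i0+j)
    have hpconst : ∀ j, N ≤ j → p j = p N := by
      intro j hj
      rw [hpdef]
      simp only []
      rw [huit (i0+j) (by omega), huit (i0+N) (by omega)]
    have hkey := sew_key Ξ T A β hβ hA hδ hdiag k h hh0'.le N hNk p hpmono
      (by rw [hp0s]; exact hs) (by rw [hpNt]; exact htT) hpstep hpconst
    rw [hp0s, hpNt] at hkey
    -- geometric sum bound
    have hpow2 : ∀ m : ℕ, ((2:ℝ)^m)^(β-1) = x^m := by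
      intro m
      rw [hxdef, ← Real.rpow_natCast (2:ℝ) m, ← Real.rpow_mul (by norm_num), mul_comm,
        Real.rpow_mul (by norm_num), Real.rpow_natCast]
    have hNh : (N:ℝ)*h ≤ (t-s) + 2*h := by
      have hi1le : (i1:ℝ) ≤ t/h + 1 := by
        have h1 : (i1:ℕ) ≤ Nat.ceil (t/h) := min_le_left _ _
        have h2 : ((Nat.ceil (t/h)):ℝ) < t/h + 1 := Nat.ceil_lt_add_one (by positivity)
        have h3 : (i1:ℝ) ≤ ((Nat.ceil (t/h)):ℝ) := by exact_mod_cast h1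
        linarith
      have hi0ge : s/h - 1 ≤ (i0:ℝ) := by
        have := Nat.lt_floor_add_one (s/h)
        linarith
      have hNcast : (N:ℝ) = (i1:ℝ) - (i0:ℝ) := by
        rw [hNdef]
        push_cast [Nat.cast_sub hi0lt1.le]
        ring
      have hNle : (N:ℝ) ≤ (t-s)/h + 2 := by
        rw [hNcast]
        have e1 : (t-s)/h = t/h - s/h := by ring
        linarith
      calc (N:ℝ)*h ≤ ((t-s)/h + 2)*h := mul_le_mul_of_nonneg_right hNle hh0'.le
        _ = (t-s) + 2*h := by field_simp
    have hgeo : ∑ r ∈ Finset.range k, ((2:ℝ)^(r+1)*h)^(β-1)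
        ≤ (x/(x-1)) * (2*(t-s)+4*h)^(β-1) := by
      have hterm : ∀ r : ℕ, ((2:ℝ)^(r+1)*h)^(β-1) = x^(r+1) * h^(β-1) := fun r => by
        rw [Real.mul_rpow (by positivity) hh0'.le, hpow2]
      calc ∑ r ∈ Finset.range k, ((2:ℝ)^(r+1)*h)^(β-1)
          = (∑ r ∈ Finset.range k, x^(r+1)) * h^(β-1) := by
            rw [Finset.sum_mul]
            exact Finset.sum_congr rfl (fun r _ => hterm r)
        _ ≤ (x^(k+1)/(x-1)) * h^(β-1) := by
            apply mul_le_mul_of_nonneg_right _ (Real.rpow_nonneg hh0'.le _)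
            have hgs : ∑ r ∈ Finset.range k, x^r = (x^k - 1)/(x-1) := geom_sum_eq (by linarith) k
            have e1 : ∑ r ∈ Finset.range k, x^(r+1) = x * ((x^k-1)/(x-1)) := by
              rw [← hgs, Finset.mul_sum]
              exact Finset.sum_congr rfl (fun r _ => by ring)
            rw [e1]
            rw [mul_div_assoc'] at *
            apply div_le_div_of_nonneg_right ?_ (by linarith)
            · nlinarith [pow_pos hxpos k, pow_succ x k]
        _ ≤ (x/(x-1)) * (2*(t-s)+4*h)^(β-1) := by
            have e2 : x^(k+1)/(x-1) * h^(β-1) = (x/(x-1)) * (x^k * h^(β-1)) := by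
              rw [pow_succ]
              ring
            rw [e2]
            apply mul_le_mul_of_nonneg_left _ (le_of_lt (div_pos hxpos (by linarith)))
            have e3 : x^k * h^(β-1) = (((2:ℕ)^k:ℝ)*h)^(β-1) := by
              rw [Real.mul_rpow (by positivity) hh0'.le]
              push_cast
              rw [hpow2]
            rw [e3]
            apply Real.rpow_le_rpow (by positivity) _ hβ10
            have h2k : ((2:ℕ)^k:ℝ) ≤ 2*(N:ℝ) := by exact_mod_cast hk2N
            nlinarith [hh0'.le]
    -- assemble
    have hdecomp : (S n t - S n s) - Ξ s t = (gsum Ξ p N - Ξ s t) + D i0 := by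
      rw [hsplit, husum, hDsum]
      abel
    rw [hdecomp]
    calc ‖(gsum Ξ p N - Ξ s t) + D i0‖ ≤ ‖gsum Ξ p N - Ξ s t‖ + ‖D i0‖ := norm_add_le _ _
      _ ≤ A*(t-s) * ∑ r ∈ Finset.range k, ((2:ℝ)^(r+1)*h)^(β-1) + A*h^β := add_le_add hkey hDi0
      _ ≤ A*(t-s) * ((x/(x-1)) * (2*(t-s)+4*h)^(β-1)) + A*(T^(β-1)*h) := by
          apply add_le_add
          · apply mul_le_mul_of_nonneg_left hgeo (by nlinarith)
          · apply mul_le_mul_of_nonneg_left _ hA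
            exact rpow_split hβ hh0'.le (hhT n)
      _ = A*(t-s)*(x/(x-1)) * (2*(t-s)+4*h)^(β-1) + A*(T^(β-1)*h) := by ring
  -- take the limit n → ∞
  have hlimh : Filter.Tendsto (fun n : ℕ => T/2^n) Filter.atTop (nhds 0) := by
    have e : (fun n : ℕ => T/2^n) = fun n : ℕ => T * (1/2:ℝ)^n := by
      funext n
      rw [one_div, inv_pow, ← div_eq_mul_inv]
    rw [e]
    have := (tendsto_pow_atTop_nhds_zero_of_lt_one (by norm_num : (0:ℝ) ≤ 1/2)
      (by norm_num : (1/2:ℝ) < 1)).const_mul T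
    simpa using this
  have hlimf : Filter.Tendsto (fun n => ‖(S n t - S n s) - Ξ s t‖) Filter.atTop
      (nhds ‖(I t - I s) - Ξ s t‖) :=
    (((hItend t ⟨htb, htT⟩).sub (hItend s ⟨hs, le_trans hst htT⟩)).sub tendsto_const_nhds).norm
  have hts2 : (0:ℝ) < 2*(t-s) := by linarith
  have hlimg : Filter.Tendsto
      (fun n : ℕ => A*(t-s)*(x/(x-1)) * (2*(t-s)+4*(T/2^n))^(β-1) + A*(T^(β-1)*(T/2^n)))
      Filter.atTop (nhds (A*(t-s)*(x/(x-1)) * (2*(t-s))^(β-1) + 0)) := by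
    apply Filter.Tendsto.add
    · apply Filter.Tendsto.const_mul
      have hbase : Filter.Tendsto (fun n : ℕ => 2*(t-s)+4*(T/2^n)) Filter.atTop
          (nhds (2*(t-s))) := by
        have h4 := hlimh.const_mul (4:ℝ)
        have := (tendsto_const_nhds : Filter.Tendsto (fun _ : ℕ => 2*(t-s)) Filter.atTop _).add h4
        simpa using this
      have hcont : ContinuousAt (fun y : ℝ => y^(β-1)) (2*(t-s)) :=
        Real.continuousAt_rpow_const _ _ (Or.inl hts2.ne')
      exact (hcont.tendsto.comp hbase : _)
    · have := hlimh.const_mul (A*(T^(β-1)))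
      simp only [mul_zero] at this
      convert this using 2 with n
      ring
  have hle := le_of_tendsto_of_tendsto' hlimf hlimg key
  -- conclude
  have e2 : (2*(t-s))^(β-1) = x * (t-s)^(β-1) := by
    rw [Real.mul_rpow (by norm_num) (by linarith), hxdef]
  have e3 : (t-s)^β = (t-s)^(β-1) * (t-s) := by
    nth_rewrite 1 [show β = (β-1)+1 from by ring]
    rw [Real.rpow_add (by linarith : (0:ℝ) < t-s), Real.rpow_one]
  have e4 : A*(t-s)*(x/(x-1)) * (2*(t-s))^(β-1) + 0 = (x*x/(x-1)) * A * (t-s)^β := by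
    rw [e2, e3]
    field_simp
    ring
  rw [e4] at hle
  have hnn : 0 ≤ A * (t-s)^β := mul_nonneg hA (Real.rpow_nonneg (by linarith) _)
  calc ‖(I t - I s) - Ξ s t‖ ≤ (x*x/(x-1)) * A * (t-s)^β := hle
    _ ≤ (x*x/(x-1) + 1) * A * (t-s)^β := by nlinarith
end Sew13

set_option maxHeartbeats 1000000


/-- Variable order rough integration of a controlled path against a variable order rough
path: the compensated Riemann–Stieltjes germ `Ξ(s,t) = Y_s X_{s,t} + Y′_s 𝕏_{s,t}` can be
sewn, with the usual rough integral estimate of variable order. -/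
theorem stmt13 {d n : ℕ} (T : ℝ) (hT : 0 < T)
    (α : ℝ → ℝ) (hα : ∀ t ∈ Set.Icc (0:ℝ) T, 1/3 < α t ∧ α t < 1)
    (β : ℝ) (hβ : 1 < β)
    (hβle : ∀ t ∈ Set.Icc (0:ℝ) T, β ≤ 3 * α t ∧ β ≤ 1 + α t)
    (X : ℝ → EuclideanSpace ℝ (Fin d))
    (XX : ℝ → ℝ → EuclideanSpace ℝ (Fin d × Fin d))
    (KX KXX : ℝ) (hKX : 0 ≤ KX) (hKXX : 0 ≤ KXX)
    (hX : ∀ s t : ℝ, 0 ≤ s → s < t → t ≤ T → ‖X t - X s‖ ≤ KX * (t - s) ^ α s)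
    (hXX : ∀ s t : ℝ, 0 ≤ s → s < t → t ≤ T →
      ‖XX s t‖ ≤ KXX * (t - s) ^ min (2 * α s) 1)
    (hChen : ∀ s u t : ℝ, 0 ≤ s → s ≤ u → u ≤ t → t ≤ T →
      XX s t - XX s u - XX u t = tensor (X u - X s) (X t - X u))
    (Y : ℝ → (EuclideanSpace ℝ (Fin d) →L[ℝ] EuclideanSpace ℝ (Fin n)))
    (Y' : ℝ → (EuclideanSpace ℝ (Fin d × Fin d) →L[ℝ] EuclideanSpace ℝ (Fin n)))
    (R : ℝ → ℝ → (EuclideanSpace ℝ (Fin d) →L[ℝ] EuclideanSpace ℝ (Fin n)))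
    (hctrl : ∀ s t : ℝ, 0 ≤ s → s ≤ t → t ≤ T → ∀ v : EuclideanSpace ℝ (Fin d),
      Y t v - Y s v = Y' s (tensor (X t - X s) v) + R s t v)
    (KY : ℝ) (hKY : 0 ≤ KY)
    (hY' : ∀ s t : ℝ, 0 ≤ s → s < t → t ≤ T → ‖Y' t - Y' s‖ ≤ KY * (t - s) ^ α s)
    (hR : ∀ s t : ℝ, 0 ≤ s → s < t → t ≤ T → ‖R s t‖ ≤ KY * (t - s) ^ (2 * α s)) :
    ∃ C > (0:ℝ), ∃ I : ℝ → EuclideanSpace ℝ (Fin n), I 0 = 0 ∧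
      ∀ s t : ℝ, 0 ≤ s → s ≤ t → t ≤ T →
        ‖(I t - I s) - (Y s (X t - X s) + Y' s (XX s t))‖ ≤
          C * (t - s) ^ β * (KX + KXX) * KY := by
  have htensor0 : ∀ v : EuclideanSpace ℝ (Fin d), tensor 0 v = 0 := by
    intro v
    ext p
    simp [tensor]
  have hXX0 : ∀ r : ℝ, 0 ≤ r → r ≤ T → XX r r = 0 := by
    intro r hr hrT
    have h1 := hChen r r r hr le_rfl le_rfl hrT
    rw [sub_self (X r), htensor0] at h1
    have e : XX r r - XX r r - XX r r = -(XX r r) := by abel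
    rw [e, neg_eq_zero] at h1
    exact h1
  have hR0 : ∀ r : ℝ, 0 ≤ r → r ≤ T → ∀ v, R r r v = 0 := by
    intro r hr hrT v
    have h1 := hctrl r r hr le_rfl hrT v
    rw [sub_self, sub_self, htensor0, map_zero, zero_add] at h1
    exact h1.symm
  set Ξ : ℝ → ℝ → EuclideanSpace ℝ (Fin n) :=
    fun s t => Y s (X t - X s) + Y' s (XX s t) with hΞ
  set A : ℝ := (1+T)^(2:ℝ) * ((KX + KXX) * KY) with hAdef
  have hTpow : 0 < (1+T)^(2:ℝ) := Real.rpow_pos_of_pos (by linarith) _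
  have hAnn : 0 ≤ A := by
    rw [hAdef]
    have : 0 ≤ (KX + KXX) * KY := mul_nonneg (by linarith) hKY
    positivity
  have hδ : ∀ s u t : ℝ, 0 ≤ s → s ≤ u → u ≤ t → t ≤ T →
      ‖Ξ s t - Ξ s u - Ξ u t‖ ≤ A * (t - s)^β := by
    intro s u t hs hsu hut htT
    have huT : u ≤ T := le_trans hut htT
    have hu0 : 0 ≤ u := le_trans hs hsu
    have hsT' : s ≤ T := le_trans hsu huT
    have expand : Ξ s t - Ξ s u - Ξ u t = (Y' s - Y' u) (XX u t) - R s u (X t - X u) := by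
      have h1 := hctrl s u hs hsu huT (X t - X u)
      have h2 := hChen s u t hs hsu hut htT
      rw [hΞ]
      simp only [ContinuousLinearMap.sub_apply]
      have e1 : X t - X s = (X t - X u) + (X u - X s) := by abel
      have e2 : XX s t = XX s u + XX u t + tensor (X u - X s) (X t - X u) := by
        rw [← h2]; abel
      rw [e1, e2, map_add, map_add, map_add]
      have h1' : Y u (X t - X u) =
          Y' s (tensor (X u - X s) (X t - X u)) + R s u (X t - X u) + Y s (X t - X u) :=
        eq_add_of_sub_eq h1
      rw [h1']
      abel
    have hrpnn : 0 ≤ A * (t-s)^β :=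
      mul_nonneg hAnn (Real.rpow_nonneg (by linarith) _)
    rcases eq_or_lt_of_le hsu with rfl | hsu'
    · rw [expand, sub_self, hR0 s hs huT]
      simp only [ContinuousLinearMap.zero_apply, sub_zero, norm_zero]
      exact hrpnn
    rcases eq_or_lt_of_le hut with rfl | hut'
    · rw [expand, sub_self (X u), map_zero, hXX0 u hu0 htT, map_zero]
      simp only [sub_zero, norm_zero]
      exact hrpnn
    -- main case s < u < t
    obtain ⟨hαs1, hαs2⟩ := hα s ⟨hs, hsT'⟩
    obtain ⟨hαu1, hαu2⟩ := hα u ⟨hu0, huT⟩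
    obtain ⟨hβs1, hβs2⟩ := hβle s ⟨hs, hsT'⟩
    obtain ⟨hβu1, hβu2⟩ := hβle u ⟨hu0, huT⟩
    have hts : 0 < t - s := by linarith
    have hmnn : 0 ≤ min (2*α u) 1 := le_min (by linarith) (by norm_num)
    have hb1 : ‖(Y' s - Y' u) (XX u t)‖
        ≤ (KY * (u-s)^(α s)) * (KXX * (t-u)^(min (2*α u) 1)) := by
      calc ‖(Y' s - Y' u) (XX u t)‖ ≤ ‖Y' s - Y' u‖ * ‖XX u t‖ :=
            ContinuousLinearMap.le_opNorm _ _
        _ ≤ _ := by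
            apply mul_le_mul _ (hXX u t hu0 hut' htT) (norm_nonneg _)
              (mul_nonneg hKY (Real.rpow_nonneg (by linarith) _))
            rw [norm_sub_rev]
            exact hY' s u hs hsu' huT
    have hb2 : ‖R s u (X t - X u)‖
        ≤ (KY * (u-s)^(2*α s)) * (KX * (t-u)^(α u)) := by
      calc ‖R s u (X t - X u)‖ ≤ ‖R s u‖ * ‖X t - X u‖ :=
            ContinuousLinearMap.le_opNorm _ _
        _ ≤ _ := by
            apply mul_le_mul (hR s u hs hsu' huT) (hX u t hu0 hut' htT) (norm_nonneg _)
              (mul_nonneg hKY (Real.rpow_nonneg (by linarith) _))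
    have m1 : (u-s)^(α s) ≤ (t-s)^(α s) :=
      Real.rpow_le_rpow (by linarith) (by linarith) (by linarith)
    have m2 : (u-s)^(2*α s) ≤ (t-s)^(2*α s) :=
      Real.rpow_le_rpow (by linarith) (by linarith) (by linarith)
    have m3 : (t-u)^(α u) ≤ (t-s)^(α u) :=
      Real.rpow_le_rpow (by linarith) (by linarith) (by linarith)
    have m4 : (t-u)^(min (2*α u) 1) ≤ (t-s)^(min (2*α u) 1) :=
      Real.rpow_le_rpow (by linarith) (by linarith) hmnn
    have mul1 : (t-s)^(α s) * (t-s)^(min (2*α u) 1) = (t-s)^(α s + min (2*α u) 1) :=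
      (Real.rpow_add hts _ _).symm
    have mul2 : (t-s)^(2*α s) * (t-s)^(α u) = (t-s)^(2*α s + α u) :=
      (Real.rpow_add hts _ _).symm
    have ex1 : β ≤ α s + min (2*α u) 1 := by
      rcases min_cases (2*α u) 1 with ⟨e, he⟩ | ⟨e, he⟩ <;> rw [e] <;> linarith
    have ex1' : α s + min (2*α u) 1 ≤ 3 := by
      have := min_le_right (2*α u) 1
      linarith
    have ex2 : β ≤ 2*α s + α u := by linarith
    have ex2' : 2*α s + α u ≤ 3 := by linarith
    have big1 : (t-s)^(α s + min (2*α u) 1) ≤ (1+T)^(2:ℝ) * (t-s)^β :=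
      Sew13.rpow_exp_le hT (by linarith) (by linarith) hβ ex1 ex1'
    have big2 : (t-s)^(2*α s + α u) ≤ (1+T)^(2:ℝ) * (t-s)^β :=
      Sew13.rpow_exp_le hT (by linarith) (by linarith) hβ ex2 ex2'
    have hrpnn2 : 0 ≤ (t-s)^β := Real.rpow_nonneg (by linarith) _
    calc ‖Ξ s t - Ξ s u - Ξ u t‖
        = ‖(Y' s - Y' u) (XX u t) - R s u (X t - X u)‖ := by rw [expand]
      _ ≤ ‖(Y' s - Y' u) (XX u t)‖ + ‖R s u (X t - X u)‖ := norm_sub_le _ _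
      _ ≤ (KY * (u-s)^(α s)) * (KXX * (t-u)^(min (2*α u) 1))
          + (KY * (u-s)^(2*α s)) * (KX * (t-u)^(α u)) := add_le_add hb1 hb2
      _ ≤ KY*KXX*((1+T)^(2:ℝ)*(t-s)^β) + KY*KX*((1+T)^(2:ℝ)*(t-s)^β) := by
          apply add_le_add
          · calc (KY * (u-s)^(α s)) * (KXX * (t-u)^(min (2*α u) 1))
                = KY*KXX*((u-s)^(α s) * (t-u)^(min (2*α u) 1)) := by ring
              _ ≤ KY*KXX*((t-s)^(α s) * (t-s)^(min (2*α u) 1)) := by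
                  apply mul_le_mul_of_nonneg_left _ (mul_nonneg hKY hKXX)
                  exact mul_le_mul m1 m4 (Real.rpow_nonneg (by linarith) _)
                    (Real.rpow_nonneg (by linarith) _)
              _ = KY*KXX*((t-s)^(α s + min (2*α u) 1)) := by rw [mul1]
              _ ≤ KY*KXX*((1+T)^(2:ℝ)*(t-s)^β) :=
                  mul_le_mul_of_nonneg_left big1 (mul_nonneg hKY hKXX)
          · calc (KY * (u-s)^(2*α s)) * (KX * (t-u)^(α u))
                = KY*KX*((u-s)^(2*α s) * (t-u)^(α u)) := by ring
              _ ≤ KY*KX*((t-s)^(2*α s) * (t-s)^(α u)) := by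
                  apply mul_le_mul_of_nonneg_left _ (mul_nonneg hKY hKX)
                  exact mul_le_mul m2 m3 (Real.rpow_nonneg (by linarith) _)
                    (Real.rpow_nonneg (by linarith) _)
              _ = KY*KX*((t-s)^(2*α s + α u)) := by rw [mul2]
              _ ≤ KY*KX*((1+T)^(2:ℝ)*(t-s)^β) :=
                  mul_le_mul_of_nonneg_left big2 (mul_nonneg hKY hKX)
      _ = A * (t-s)^β := by rw [hAdef]; ring
  obtain ⟨C', hC', I, hI0, hIb⟩ := Sew13.sewing T β hT hβ A hAnn Ξ hδ
  refine ⟨C' * (1+T)^(2:ℝ), mul_pos hC' hTpow, I, hI0, ?_⟩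
  intro s t hs hst htT
  calc ‖(I t - I s) - Ξ s t‖ ≤ C' * A * (t-s)^β := hIb s t hs hst htT
    _ = C' * (1+T)^(2:ℝ) * (t-s)^β * (KX + KXX) * KY := by rw [hAdef]; ring
end

section
/- Let α : [0,T] → (1/3,1), X ∈ C^{α(·)}([0,T];ℝ^d), f ∈ C²_b(ℝⁿ;ℝⁿ), and (Y,Y′) ∈ D_X^{α(·)}([0,T];ℝⁿ). Then (f(Y), Df(Y)Y′) ∈ D_X^{α(·)}([0,T];ℝⁿ), and there is a constant C depending on ‖f‖_{C²_b}, α, T, ‖X‖_{α(·)} such that ‖f(Y), Df(Y)Y′‖_{X,α(·)} ≤ C (|Y₀| + |Y′₀| + ‖Y,Y′‖_{X,α(·)}). -/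
private lemma rpow_le_max1 (p a T : ℝ) (hp : 0 < p) (hpT : p ≤ T)
    (ha0 : 0 < a) (ha1 : a ≤ 1) : p ^ a ≤ max 1 T := by
  rcases le_or_gt p 1 with h | h
  · exact le_trans (Real.rpow_le_one hp.le h ha0.le) (le_max_left _ _)
  · calc p ^ a ≤ p ^ (1:ℝ) := Real.rpow_le_rpow_of_exponent_le h.le ha1
      _ = p := Real.rpow_one p
      _ ≤ max 1 T := le_trans hpT (le_max_right _ _)

set_option maxHeartbeats 2000000 in
/-- Stability of variable order controlled paths under `C²_b` functions:
`(f(Y), Df(Y)Y′)` is again controlled by `X`, with semi-norm bounded by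
`C (|Y₀| + |Y′₀| + ‖Y,Y′‖_{X,α(·)})`. -/
theorem stmt14 {d n : ℕ} (T : ℝ) (hT : 0 < T)
    (α : ℝ → ℝ) (hα : ∀ t ∈ Set.Icc (0:ℝ) T, 1/3 < α t ∧ α t < 1)
    (X : ℝ → EuclideanSpace ℝ (Fin d))
    (KX : ℝ) (hKX : 0 ≤ KX)
    (hX : ∀ s t : ℝ, 0 ≤ s → s < t → t ≤ T → ‖X t - X s‖ ≤ KX * (t - s) ^ α s)
    (f : EuclideanSpace ℝ (Fin n) → EuclideanSpace ℝ (Fin n))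
    (Kf : ℝ) (hf : ContDiff ℝ 2 f)
    (hfb : ∀ x, ‖f x‖ ≤ Kf ∧ ‖fderiv ℝ f x‖ ≤ Kf ∧ ‖iteratedFDeriv ℝ 2 f x‖ ≤ Kf)
    (Y : ℝ → EuclideanSpace ℝ (Fin n))
    (Y' : ℝ → (EuclideanSpace ℝ (Fin d) →L[ℝ] EuclideanSpace ℝ (Fin n)))
    (R : ℝ → ℝ → EuclideanSpace ℝ (Fin n))
    (hctrl : ∀ s t : ℝ, 0 ≤ s → s ≤ t → t ≤ T →
      Y t - Y s = Y' s (X t - X s) + R s t)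
    (KY : ℝ) (hKY : 0 ≤ KY)
    (hY' : ∀ s t : ℝ, 0 ≤ s → s < t → t ≤ T → ‖Y' t - Y' s‖ ≤ KY * (t - s) ^ α s)
    (hR : ∀ s t : ℝ, 0 ≤ s → s < t → t ≤ T → ‖R s t‖ ≤ KY * (t - s) ^ (2 * α s)) :
    ∃ C > (0:ℝ), ∃ Rf : ℝ → ℝ → EuclideanSpace ℝ (Fin n),
      (∀ s t : ℝ, 0 ≤ s → s ≤ t → t ≤ T →
        f (Y t) - f (Y s) = ((fderiv ℝ f (Y s)).comp (Y' s)) (X t - X s) + Rf s t) ∧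
      (∀ s t : ℝ, 0 ≤ s → s < t → t ≤ T →
        ‖Rf s t‖ ≤ C * (‖Y 0‖ + ‖Y' 0‖ + KY) * (t - s) ^ (2 * α s)) ∧
      (∀ s t : ℝ, 0 ≤ s → s < t → t ≤ T →
        ‖(fderiv ℝ f (Y t)).comp (Y' t) - (fderiv ℝ f (Y s)).comp (Y' s)‖ ≤
          C * (‖Y 0‖ + ‖Y' 0‖ + KY) * (t - s) ^ α s) := by
  have hfd : Differentiable ℝ f := hf.differentiable (by norm_num)
  have hKf : 0 ≤ Kf := le_trans (norm_nonneg _) (hfb 0).1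
  set M : ℝ := max 1 T with hM
  have hM1 : (1:ℝ) ≤ M := le_max_left _ _
  have hM0 : (0:ℝ) ≤ M := by linarith
  set C1 : ℝ := ‖Y' 0‖ + KY * M with hC1
  have hC10 : 0 ≤ C1 := add_nonneg (norm_nonneg _) (mul_nonneg hKY hM0)
  set A : ℝ := C1 * KX + KY * M with hA
  have hA0 : 0 ≤ A := add_nonneg (mul_nonneg hC10 hKX) (mul_nonneg hKY hM0)
  set N : ℝ := Kf * (A * A) + Kf * KY + Kf * (A * C1) with hN
  have hN0 : 0 ≤ N := by positivity
  -- Lipschitz bound on fderiv f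
  have hdf : Differentiable ℝ (fderiv ℝ f) :=
    (hf.fderiv_right (m := 1) (by norm_num)).differentiable one_ne_zero
  have hDDbd : ∀ x, ‖fderiv ℝ (fderiv ℝ f) x‖ ≤ Kf := by
    intro x
    calc ‖fderiv ℝ (fderiv ℝ f) x‖
        = ‖iteratedFDeriv ℝ 0 (fderiv ℝ (fderiv ℝ f)) x‖ := (norm_iteratedFDeriv_zero (f := fderiv ℝ (fderiv ℝ f)) (x := x)).symm
      _ = ‖iteratedFDeriv ℝ 1 (fderiv ℝ f) x‖ := norm_iteratedFDeriv_fderiv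
      _ = ‖iteratedFDeriv ℝ 2 f x‖ := norm_iteratedFDeriv_fderiv
      _ ≤ Kf := (hfb x).2.2
  have hDlip : ∀ a b, ‖fderiv ℝ f b - fderiv ℝ f a‖ ≤ Kf * ‖b - a‖ := fun a b =>
    Convex.norm_image_sub_le_of_norm_fderiv_le (fun x _ => hdf x)
      (fun x _ => hDDbd x) convex_univ trivial trivial
  -- second order Taylor estimate
  have htaylor : ∀ a b, ‖f b - f a - fderiv ℝ f a (b - a)‖ ≤ Kf * ‖b - a‖ * ‖b - a‖ := by
    intro a b
    refine Convex.norm_image_sub_le_of_norm_fderiv_le' (fun x _ => hfd x) ?_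
      (convex_closedBall a ‖b - a‖) (Metric.mem_closedBall_self (norm_nonneg _)) ?_
    · intro x hx
      have h1 : ‖fderiv ℝ f x - fderiv ℝ f a‖ ≤ Kf * ‖x - a‖ := hDlip a x
      have h2 : ‖x - a‖ ≤ ‖b - a‖ := by
        simpa [dist_eq_norm] using hx
      nlinarith [norm_nonneg (x - a)]
    · simp [Metric.mem_closedBall, dist_eq_norm]
  -- bound on Y'
  have hY'bd : ∀ s, 0 ≤ s → s ≤ T → ‖Y' s‖ ≤ C1 := by
    intro s hs hsT
    rcases eq_or_lt_of_le hs with h | h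
    · rw [← h]; exact le_add_of_nonneg_right (mul_nonneg hKY hM0)
    · have hb := hY' 0 s le_rfl h hsT
      have ha0 := hα 0 ⟨le_rfl, hT.le⟩
      have hsM : (s - 0) ^ α 0 ≤ M := by
        apply rpow_le_max1 _ _ _ (by linarith) (by linarith) (by linarith) (by linarith)
      have h3 : ‖Y' s‖ - ‖Y' 0‖ ≤ ‖Y' s - Y' 0‖ := norm_sub_norm_le _ _
      have h4 : KY * ((s - 0) ^ α 0) ≤ KY * M := mul_le_mul_of_nonneg_left hsM hKY
      rw [hC1]; linarith
  -- increment bound on Y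
  have hYbd : ∀ s t, 0 ≤ s → s < t → t ≤ T → ‖Y t - Y s‖ ≤ A * (t - s) ^ α s := by
    intro s t hs hst htT
    have hp : (0:ℝ) < t - s := by linarith
    have has := hα s ⟨hs, by linarith⟩
    have hq0 : (0:ℝ) ≤ (t - s) ^ α s := Real.rpow_nonneg hp.le _
    have hqM : (t - s) ^ α s ≤ M :=
      rpow_le_max1 _ _ _ hp (by linarith) (by linarith) (by linarith)
    have h2 : (t - s) ^ (2 * α s) = (t - s) ^ α s * (t - s) ^ α s := by
      rw [← Real.rpow_add hp]; ring_nf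
    rw [hctrl s t hs hst.le htT]
    have hXb := hX s t hs hst htT
    have hRb := hR s t hs hst htT
    have hY's := hY'bd s hs (by linarith)
    calc ‖Y' s (X t - X s) + R s t‖
        ≤ ‖Y' s (X t - X s)‖ + ‖R s t‖ := norm_add_le _ _
      _ ≤ ‖Y' s‖ * ‖X t - X s‖ + KY * (t - s) ^ (2 * α s) :=
          add_le_add (ContinuousLinearMap.le_opNorm _ _) hRb
      _ ≤ A * (t - s) ^ α s := by
          rw [h2, hA]
          nlinarith [mul_le_mul hY's hXb (norm_nonneg _) hC10,
            mul_le_mul_of_nonneg_left (mul_le_mul_of_nonneg_right hqM hq0) hKY]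
  -- the remainder
  have claim1 : ∀ s t, 0 ≤ s → s < t → t ≤ T →
      ‖f (Y t) - f (Y s) - ((fderiv ℝ f (Y s)).comp (Y' s)) (X t - X s)‖
        ≤ N * (t - s) ^ (2 * α s) := by
    intro s t hs hst htT
    have hp : (0:ℝ) < t - s := by linarith
    have has := hα s ⟨hs, by linarith⟩
    have hq0 : (0:ℝ) ≤ (t - s) ^ α s := Real.rpow_nonneg hp.le _
    have h2 : (t - s) ^ (2 * α s) = (t - s) ^ α s * (t - s) ^ α s := by
      rw [← Real.rpow_add hp]; ring_nf
    have hsplit : f (Y t) - f (Y s) - ((fderiv ℝ f (Y s)).comp (Y' s)) (X t - X s)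
        = (f (Y t) - f (Y s) - fderiv ℝ f (Y s) (Y t - Y s))
        + fderiv ℝ f (Y s) (R s t) := by
      have hmap : fderiv ℝ f (Y s) (Y t - Y s)
          = fderiv ℝ f (Y s) (Y' s (X t - X s)) + fderiv ℝ f (Y s) (R s t) := by
        rw [hctrl s t hs hst.le htT, map_add]
      rw [hmap, ContinuousLinearMap.comp_apply]
      abel
    have h1 := htaylor (Y s) (Y t)
    have hYb := hYbd s t hs hst htT
    have hRb := hR s t hs hst htT
    have hDb := (hfb (Y s)).2.1
    rw [h2] at hRb
    calc ‖f (Y t) - f (Y s) - ((fderiv ℝ f (Y s)).comp (Y' s)) (X t - X s)‖ ≤ ‖f (Y t) - f (Y s) - fderiv ℝ f (Y s) (Y t - Y s)‖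
          + ‖fderiv ℝ f (Y s) (R s t)‖ := by rw [hsplit]; exact norm_add_le _ _
      _ ≤ Kf * ‖Y t - Y s‖ * ‖Y t - Y s‖ + ‖fderiv ℝ f (Y s)‖ * ‖R s t‖ :=
          add_le_add h1 (ContinuousLinearMap.le_opNorm _ _)
      _ ≤ N * (t - s) ^ (2 * α s) := by
          rw [h2, hN]
          nlinarith [mul_le_mul hDb hRb (norm_nonneg _) hKf,
            mul_le_mul_of_nonneg_left
              (mul_self_le_mul_self (norm_nonneg (Y t - Y s)) hYb) hKf,
            mul_nonneg (mul_nonneg (mul_nonneg hKf hA0) hC10) (mul_nonneg hq0 hq0)]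
  have claim2 : ∀ s t, 0 ≤ s → s < t → t ≤ T →
      ‖(fderiv ℝ f (Y t)).comp (Y' t) - (fderiv ℝ f (Y s)).comp (Y' s)‖
        ≤ N * (t - s) ^ α s := by
    intro s t hs hst htT
    have hp : (0:ℝ) < t - s := by linarith
    have hq0 : (0:ℝ) ≤ (t - s) ^ α s := Real.rpow_nonneg hp.le _
    have key : (fderiv ℝ f (Y t)).comp (Y' t) - (fderiv ℝ f (Y s)).comp (Y' s)
        = (fderiv ℝ f (Y t) - fderiv ℝ f (Y s)).comp (Y' t)
          + (fderiv ℝ f (Y s)).comp (Y' t - Y' s) := by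
      rw [ContinuousLinearMap.sub_comp, ContinuousLinearMap.comp_sub]
      abel
    have h1 : ‖fderiv ℝ f (Y t) - fderiv ℝ f (Y s)‖ ≤ Kf * ‖Y t - Y s‖ := hDlip _ _
    have hYb := hYbd s t hs hst htT
    have hY'b := hY' s t hs hst htT
    have hY't := hY'bd t (by linarith) htT
    have hDb := (hfb (Y s)).2.1
    calc ‖(fderiv ℝ f (Y t)).comp (Y' t) - (fderiv ℝ f (Y s)).comp (Y' s)‖
        ≤ ‖(fderiv ℝ f (Y t) - fderiv ℝ f (Y s)).comp (Y' t)‖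
          + ‖(fderiv ℝ f (Y s)).comp (Y' t - Y' s)‖ := by rw [key]; exact norm_add_le _ _
      _ ≤ ‖fderiv ℝ f (Y t) - fderiv ℝ f (Y s)‖ * ‖Y' t‖
          + ‖fderiv ℝ f (Y s)‖ * ‖Y' t - Y' s‖ :=
          add_le_add (ContinuousLinearMap.opNorm_comp_le _ _)
            (ContinuousLinearMap.opNorm_comp_le _ _)
      _ ≤ N * (t - s) ^ α s := by
          rw [hN]
          nlinarith [norm_nonneg (Y' t), norm_nonneg (Y t - Y s),
            norm_nonneg (fderiv ℝ f (Y t) - fderiv ℝ f (Y s)),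
            norm_nonneg (fderiv ℝ f (Y s)), norm_nonneg (Y' t - Y' s),
            mul_le_mul hDb hY'b (norm_nonneg _) hKf,
            mul_le_mul h1 hY't (norm_nonneg _) (by positivity : (0:ℝ) ≤ Kf * ‖Y t - Y s‖),
            mul_le_mul (mul_le_mul_of_nonneg_left hYb hKf) hY't (norm_nonneg _)
              (by positivity : (0:ℝ) ≤ Kf * (A * (t - s) ^ α s)),
            mul_nonneg (mul_nonneg hKf (mul_nonneg hA0 hq0)) hC10,
            mul_nonneg hKf (mul_nonneg hA0 hA0)]
  set B : ℝ := ‖Y 0‖ + ‖Y' 0‖ + KY with hB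
  have hB0 : 0 ≤ B := by positivity
  obtain ⟨C, hC, hCB⟩ : ∃ C > (0:ℝ), N ≤ C * B := by
    rcases eq_or_lt_of_le hB0 with h | h
    · refine ⟨1, one_pos, ?_⟩
      have h1 : ‖Y' 0‖ = 0 := by
        have := norm_nonneg (Y 0); have := norm_nonneg (Y' 0); rw [hB] at h; linarith
      have h2 : KY = 0 := by
        have := norm_nonneg (Y 0); have := norm_nonneg (Y' 0); rw [hB] at h; linarith
      have hA' : A = 0 := by rw [hA, hC1, h1, h2]; ring
      rw [hN, hA', hC1, h1, h2, ← h]; ring_nf; rfl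
    · refine ⟨(N + 1) / B, div_pos (by linarith) h, ?_⟩
      rw [div_mul_cancel₀ _ (ne_of_gt h)]; linarith
  refine ⟨C, hC, fun s t =>
    f (Y t) - f (Y s) - ((fderiv ℝ f (Y s)).comp (Y' s)) (X t - X s), ?_, ?_, ?_⟩
  · intro s t _ _ _
    show f (Y t) - f (Y s) = ((fderiv ℝ f (Y s)).comp (Y' s)) (X t - X s)
        + (f (Y t) - f (Y s) - ((fderiv ℝ f (Y s)).comp (Y' s)) (X t - X s))
    abel
  · intro s t hs hst htT
    have := claim1 s t hs hst htT
    have hpw : (0:ℝ) ≤ (t - s) ^ (2 * α s) := Real.rpow_nonneg (by linarith) _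
    calc ‖f (Y t) - f (Y s) - ((fderiv ℝ f (Y s)).comp (Y' s)) (X t - X s)‖ ≤ N * (t - s) ^ (2 * α s) := this
      _ ≤ C * B * (t - s) ^ (2 * α s) := mul_le_mul_of_nonneg_right hCB hpw
      _ = C * (‖Y 0‖ + ‖Y' 0‖ + KY) * (t - s) ^ (2 * α s) := by rw [hB]
  · intro s t hs hst htT
    have := claim2 s t hs hst htT
    have hpw : (0:ℝ) ≤ (t - s) ^ α s := Real.rpow_nonneg (by linarith) _
    calc ‖(fderiv ℝ f (Y t)).comp (Y' t) - (fderiv ℝ f (Y s)).comp (Y' s)‖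
        ≤ N * (t - s) ^ α s := this
      _ ≤ C * B * (t - s) ^ α s := mul_le_mul_of_nonneg_right hCB hpw
      _ = C * (‖Y 0‖ + ‖Y' 0‖ + KY) * (t - s) ^ α s := by rw [hB]
end

section
/- (Variable order Garsia–Rodemich–Rumsey / Besov embedding) Let f : [0,T] → ℝ be continuous, p ≥ 1, and γ : [0,T] → (1/p, 1] measurable with sup_{t,s} |t−s|^{γ(t)−γ(s)} ≤ C. Set α(t) = γ(t) − 1/p. If the double integral ∫₀^T ∫₀^T |f(x) − f(y)|^p / |x−y|^{1 + max(γ(x),γ(y)) p} dx dy is finite, then f ∈ C^{α(·)}([0,T]) and sup_{t≠s} |f(t) − f(s)|/|t−s|^{max(α(t),α(s))} ≤ C_{T,α} (∫₀^T ∫₀^T |f(x)−f(y)|^p / |x−y|^{1+max(γ(x),γ(y))p} dx dy)^{1/p}. -/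
open MeasureTheory

section GRRAux

variable {T p : ℝ} {γ : ℝ → ℝ} {C0 : ℝ} {f : ℝ → ℝ}

lemma grr_holder {α : Type*} [MeasurableSpace α] (μ : Measure α) [IsFiniteMeasure μ]
    {G : α → ℝ} (hGm : AEStronglyMeasurable G μ) {M : ℝ}
    (hM : ∀ᵐ a ∂μ, ‖G a‖ ≤ M) {r : ℝ} (hr : 1 ≤ r) :
    ∫ a, |G a| ∂μ ≤ (∫ a, |G a| ^ r ∂μ) ^ (1 / r) *
      ((μ Set.univ).toReal) ^ (1 - 1 / r) := by
  rcases eq_or_lt_of_le hr with h1 | h1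
  · subst h1
    simp [Real.rpow_one]
  · set q := Real.conjExponent r with hq
    have hpq : r.HolderConjugate q := Real.HolderConjugate.conjExponent h1
    have hfmem : MemLp G (ENNReal.ofReal r) μ := MemLp.of_bound hGm M hM
    have hgmem : MemLp (fun _ : α => (1 : ℝ)) (ENNReal.ofReal q) μ := memLp_const 1
    have := integral_mul_norm_le_Lp_mul_Lq (μ := μ) hpq hfmem hgmem
    simp only [norm_one, mul_one, Real.one_rpow, Real.norm_eq_abs] at this
    rw [integral_const, smul_eq_mul, mul_one] at this
    have hq1 : (1 : ℝ) / q = 1 - 1 / r := by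
      have := hpq.inv_add_inv_eq_one
      rw [one_div, one_div]
      linarith
    rwa [hq1] at this


lemma grr_gap (hT : 0 < T)
    (hγ : ∀ t ∈ Set.Icc (0:ℝ) T, 1 / p < γ t)
    (hA1 : ∀ t ∈ Set.Icc (0:ℝ) T, ∀ s ∈ Set.Icc (0:ℝ) T, s ≠ t →
      |t - s| ^ (γ t - γ s) ≤ C0) :
    ∃ m : ℝ, 1 / p < m ∧ ∀ t ∈ Set.Icc (0:ℝ) T, m ≤ γ t := by
  by_contra h
  push_neg at h
  have hsel : ∀ n : ℕ, ∃ t ∈ Set.Icc (0:ℝ) T, γ t < 1 / p + 1 / (n + 1) := by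
    intro n
    obtain ⟨t, ht, hlt⟩ := h (1 / p + 1 / (n + 1))
      (by nlinarith [show (0:ℝ) < 1 / ((n:ℝ) + 1) by positivity])
    exact ⟨t, ht, hlt⟩
  choose g hg hglt using hsel
  obtain ⟨a, ha, φ, hφ, hconv⟩ := (isCompact_Icc (a := (0:ℝ)) (b := T)).tendsto_subseq hg
  have hδpos : 0 < γ a - 1 / p := by linarith [hγ a ha]
  have hC0 : 0 < C0 := by
    have h0 := hA1 0 (Set.left_mem_Icc.2 hT.le) T (Set.right_mem_Icc.2 hT.le) hT.ne'
    calc (0:ℝ) < |(0:ℝ) - T| ^ (γ 0 - γ T) := by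
          apply Real.rpow_pos_of_pos; rw [abs_sub_comm, sub_zero, abs_of_pos hT]; exact hT
      _ ≤ C0 := h0
  have hcpos : 0 < min (1/2) (C0 ^ (-(2/(γ a - 1/p)))) :=
    lt_min (by norm_num) (Real.rpow_pos_of_pos hC0 _)
  have h1 : ∀ᶠ n in Filter.atTop, |g (φ n) - a| < min (1/2) (C0 ^ (-(2/(γ a - 1/p)))) := by
    have habs : Filter.Tendsto (fun n : ℕ => |g (φ n) - a|) Filter.atTop (nhds |a - a|) :=
      (hconv.sub (tendsto_const_nhds (x := a))).abs
    rw [sub_self, abs_zero] at habs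
    exact habs.eventually_lt_const hcpos
  have h2 : ∀ᶠ n in Filter.atTop, γ (g (φ n)) - γ a < -((γ a - 1/p)/2) := by
    have hn : Filter.Tendsto (fun n : ℕ => 1 / ((φ n : ℝ) + 1)) Filter.atTop (nhds 0) := by
      apply Filter.Tendsto.comp (tendsto_one_div_add_atTop_nhds_zero_nat)
      exact hφ.tendsto_atTop
    filter_upwards [hn.eventually_lt_const (half_pos hδpos)] with n hn1
    have := hglt (φ n)
    linarith
  obtain ⟨n, hn1, hn2⟩ := (h1.and h2).exists
  have hne : g (φ n) ≠ a := by
    intro he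
    rw [he] at hn2
    linarith [half_pos hδpos]
  have hdpos : 0 < |g (φ n) - a| := abs_pos.2 (sub_ne_zero.2 hne)
  have hA := hA1 (g (φ n)) (hg _) a ha (Ne.symm hne)
  have hlow : |g (φ n) - a| ^ (-((γ a - 1/p)/2)) ≤ |g (φ n) - a| ^ (γ (g (φ n)) - γ a) := by
    apply Real.rpow_le_rpow_of_exponent_ge hdpos
    · exact le_trans (le_of_lt (lt_of_lt_of_le hn1 (min_le_left _ _))) (by norm_num)
    · linarith
  have hbig : C0 < |g (φ n) - a| ^ (-((γ a - 1/p)/2)) := by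
    have h3 : |g (φ n) - a| < C0 ^ (-(2/(γ a - 1/p))) := lt_of_lt_of_le hn1 (min_le_right _ _)
    have h4 : (C0 ^ (-(2/(γ a - 1/p)))) ^ (-((γ a - 1/p)/2)) <
        |g (φ n) - a| ^ (-((γ a - 1/p)/2)) :=
      Real.rpow_lt_rpow_of_neg hdpos h3 (neg_lt_zero.mpr (half_pos hδpos))
    calc C0 = C0 ^ ((-(2/(γ a - 1/p))) * (-((γ a - 1/p)/2))) := by
          rw [show (-(2/(γ a - 1/p))) * (-((γ a - 1/p)/2)) = 1 by
            rw [neg_mul_neg]; field_simp, Real.rpow_one]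
      _ = (C0 ^ (-(2/(γ a - 1/p)))) ^ (-((γ a - 1/p)/2)) := Real.rpow_mul hC0.le _ _
      _ < _ := h4
  linarith [hbig.trans_le (hlow.trans hA)]


lemma grr_key (hT : 0 < T) (hp : 1 ≤ p) (hC0 : 1 ≤ C0)
    (hγ : ∀ t ∈ Set.Icc (0:ℝ) T, 1 / p < γ t ∧ γ t ≤ 1)
    (hA1 : ∀ t ∈ Set.Icc (0:ℝ) T, ∀ s ∈ Set.Icc (0:ℝ) T, s ≠ t →
      |t - s| ^ (γ t - γ s) ≤ C0)
    {z u ℓ : ℝ} (hz : z ∈ Set.Icc (0:ℝ) T) (hu : u ∈ Set.Icc (0:ℝ) T)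
    (hℓ0 : 0 < ℓ) (hℓT : ℓ ≤ T) (hzu : |z - u| ≤ ℓ) :
    ℓ ^ (γ z - γ u) ≤ max 1 T * C0 := by
  have hp0 : 0 < p := lt_of_lt_of_le one_pos hp
  have h1p : 0 < 1 / p := by positivity
  have hgz := hγ z hz
  have hgu := hγ u hu
  have hmax : (1:ℝ) ≤ max 1 T := le_max_left _ _
  rcases le_or_gt 1 ℓ with h1 | h1
  · calc ℓ ^ (γ z - γ u) ≤ ℓ ^ (1:ℝ) :=
          Real.rpow_le_rpow_of_exponent_le h1 (by linarith)
      _ = ℓ := Real.rpow_one ℓ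
      _ ≤ max 1 T := le_trans hℓT (le_max_right _ _)
      _ ≤ max 1 T * C0 := le_mul_of_one_le_right (by linarith) hC0
  · rcases le_or_gt (γ u) (γ z) with h2 | h2
    · calc ℓ ^ (γ z - γ u) ≤ 1 :=
            Real.rpow_le_one hℓ0.le h1.le (by linarith)
        _ ≤ max 1 T * C0 := one_le_mul_of_one_le_of_one_le hmax hC0
    · have hne : z ≠ u := by intro he; rw [he] at h2; exact lt_irrefl _ h2
      have hd0 : 0 < |z - u| := abs_pos.2 (sub_ne_zero.2 hne)
      calc ℓ ^ (γ z - γ u) ≤ |z - u| ^ (γ z - γ u) :=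
            Real.rpow_le_rpow_of_nonpos hd0 hzu (by linarith)
        _ ≤ C0 := hA1 z hz u hu (Ne.symm hne)
        _ ≤ max 1 T * C0 := le_mul_of_one_le_left (by linarith) hmax

lemma grr_step (hT : 0 < T) (hp : 1 ≤ p) (hC0 : 1 ≤ C0)
    (hγ : ∀ t ∈ Set.Icc (0:ℝ) T, 1 / p < γ t ∧ γ t ≤ 1)
    (hA1 : ∀ t ∈ Set.Icc (0:ℝ) T, ∀ s ∈ Set.Icc (0:ℝ) T, s ≠ t →
      |t - s| ^ (γ t - γ s) ≤ C0)
    (hf : ContinuousOn f (Set.Icc 0 T))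
    (hInt : IntegrableOn
      (fun q : ℝ × ℝ => |f q.1 - f q.2| ^ p / |q.1 - q.2| ^ (1 + max (γ q.1) (γ q.2) * p))
      (Set.Icc 0 T ×ˢ Set.Icc 0 T))
    {u a b c d : ℝ} (hu : u ∈ Set.Icc a b)
    (hab : Set.Icc a b ⊆ Set.Icc 0 T) (hcd : Set.Icc c d ⊆ Set.Icc a b)
    (hcd' : c < d) (hbT : b - a ≤ T) :
    |(∫ x in Set.Icc c d, f x) / (d - c) - (∫ x in Set.Icc a b, f x) / (b - a)| ≤
      (max 1 T * C0) *
      (∫ q in Set.Icc (0:ℝ) T ×ˢ Set.Icc (0:ℝ) T,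
          |f q.1 - f q.2| ^ p / |q.1 - q.2| ^ (1 + max (γ q.1) (γ q.2) * p)) ^ (1 / p) *
      ((b - a) ^ (1 + γ u * p) / ((d - c) * (b - a))) ^ (1 / p) := by
  have hp0 : 0 < p := lt_of_lt_of_le one_pos hp
  have hsub : c ∈ Set.Icc a b := hcd ⟨le_refl c, hcd'.le⟩
  have hsub' : d ∈ Set.Icc a b := hcd ⟨hcd'.le, le_refl d⟩
  have hab' : a < b := lt_of_le_of_lt hsub.1 (lt_of_lt_of_le hcd' hsub'.2)
  set ℓ₁ : ℝ := d - c with hℓ₁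
  set ℓ₂ : ℝ := b - a with hℓ₂
  have hℓ₁0 : 0 < ℓ₁ := sub_pos.2 hcd'
  have hℓ₂0 : 0 < ℓ₂ := sub_pos.2 hab'
  set A : Set ℝ := Set.Icc c d with hA
  set B : Set ℝ := Set.Icc a b with hB
  set S : Set (ℝ × ℝ) := A ×ˢ B with hS
  have hSm : MeasurableSet S := (measurableSet_Icc).prod measurableSet_Icc
  have hScomp : IsCompact S := (isCompact_Icc).prod isCompact_Icc
  have hSsub : S ⊆ Set.Icc (0:ℝ) T ×ˢ Set.Icc (0:ℝ) T :=
    Set.prod_mono (fun x hx => hab (hcd hx)) hab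
  -- continuity of (x,y) ↦ f x - f y on S
  have hfS : ContinuousOn (fun z : ℝ × ℝ => f z.1 - f z.2) S := by
    apply ContinuousOn.sub
    · exact hf.comp continuous_fst.continuousOn (fun z hz => hab (hcd hz.1))
    · exact hf.comp continuous_snd.continuousOn (fun z hz => hab hz.2)
  have hvolS : volume S = ENNReal.ofReal ℓ₁ * ENNReal.ofReal ℓ₂ := by
    rw [hS, Measure.volume_eq_prod, Measure.prod_prod, hA, hB, Real.volume_Icc, Real.volume_Icc]
  haveI : IsFiniteMeasure (volume.restrict S) :=
    ⟨by rw [Measure.restrict_apply_univ]; exact hScomp.measure_lt_top⟩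
  obtain ⟨M, hMb⟩ := (isCompact_Icc (a := (0:ℝ)) (b := T)).exists_bound_of_continuousOn hf
  have hint1 : IntegrableOn (fun z : ℝ × ℝ => f z.1) S volume :=
    (hf.comp continuous_fst.continuousOn (fun z hz => hab (hcd hz.1))).integrableOn_compact hScomp
  have hint2 : IntegrableOn (fun z : ℝ × ℝ => f z.2) S volume :=
    (hf.comp continuous_snd.continuousOn (fun z hz => hab hz.2)).integrableOn_compact hScomp
  have hfst : ∫ z in S, f z.1 = (∫ x in A, f x) * ℓ₂ := by
    rw [hS, Measure.volume_eq_prod]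
    have h := setIntegral_prod_mul (μ := (volume : Measure ℝ)) (ν := (volume : Measure ℝ))
      f (fun _ => (1:ℝ)) A B
    simp only [mul_one] at h
    rw [h, setIntegral_const, hB, Real.volume_real_Icc_of_le hab'.le, smul_eq_mul, mul_one]
  have hsnd : ∫ z in S, f z.2 = ℓ₁ * (∫ y in B, f y) := by
    rw [hS, Measure.volume_eq_prod]
    have h := setIntegral_prod_mul (μ := (volume : Measure ℝ)) (ν := (volume : Measure ℝ))
      (fun _ => (1:ℝ)) f A B
    simp only [one_mul] at h
    rw [h, setIntegral_const, hA, Real.volume_real_Icc_of_le hcd'.le, smul_eq_mul, mul_one]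
  have key1 : ∫ z in S, (f z.1 - f z.2) = (∫ x in A, f x) * ℓ₂ - ℓ₁ * (∫ y in B, f y) := by
    rw [integral_sub hint1 hint2, hfst, hsnd]
  have key2 : (∫ x in A, f x) / ℓ₁ - (∫ x in B, f x) / ℓ₂ =
      (∫ z in S, (f z.1 - f z.2)) / (ℓ₁ * ℓ₂) := by
    rw [key1]; field_simp
  -- Hölder
  have hGm : AEStronglyMeasurable (fun z : ℝ × ℝ => f z.1 - f z.2) (volume.restrict S) :=
    hfS.aestronglyMeasurable hSm
  have hMae : ∀ᵐ z ∂(volume.restrict S), ‖f z.1 - f z.2‖ ≤ M + M :=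
    ae_restrict_of_forall_mem hSm (fun z hz => by
      calc ‖f z.1 - f z.2‖ ≤ ‖f z.1‖ + ‖f z.2‖ := norm_sub_le _ _
        _ ≤ M + M := add_le_add (hMb z.1 (hab (hcd hz.1))) (hMb z.2 (hab hz.2)))
  have hHold := grr_holder (volume.restrict S) hGm hMae hp
  have hμuniv : ((volume.restrict S) Set.univ).toReal = ℓ₁ * ℓ₂ := by
    rw [Measure.restrict_apply_univ, hvolS, ENNReal.toReal_mul,
      ENNReal.toReal_ofReal hℓ₁0.le, ENNReal.toReal_ofReal hℓ₂0.le]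
  rw [hμuniv] at hHold
  -- kernel bound
  set K : ℝ × ℝ → ℝ :=
    fun q => |f q.1 - f q.2| ^ p / |q.1 - q.2| ^ (1 + max (γ q.1) (γ q.2) * p) with hK
  set Iv : ℝ := ∫ q in Set.Icc (0:ℝ) T ×ˢ Set.Icc (0:ℝ) T, K q with hIv
  set Wc : ℝ := (max 1 T * C0) ^ p * ℓ₂ ^ (1 + γ u * p) with hWc
  have hKnonneg : ∀ q, 0 ≤ K q := fun q =>
    div_nonneg (Real.rpow_nonneg (abs_nonneg _) _) (Real.rpow_nonneg (abs_nonneg _) _)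
  have hIv0 : 0 ≤ Iv :=
    setIntegral_nonneg (measurableSet_Icc.prod measurableSet_Icc) (fun q _ => hKnonneg q)
  have hWc0 : 0 ≤ Wc := mul_nonneg (Real.rpow_nonneg (by positivity) _)
    (Real.rpow_nonneg hℓ₂0.le _)
  have hu0T : u ∈ Set.Icc (0:ℝ) T := hab hu
  have habs_le : ∀ x ∈ B, ∀ y ∈ B, |x - y| ≤ ℓ₂ := by
    intro x hx y hy
    rw [hB] at hx hy
    rw [abs_le]
    constructor <;> [linarith [hx.1, hy.2]; linarith [hx.2, hy.1]]
  have hpw : ∀ z ∈ S, |f z.1 - f z.2| ^ p ≤ K z * Wc := by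
    intro z hz
    have hz1 : z.1 ∈ B := hcd hz.1
    have hz2 : z.2 ∈ B := hz.2
    have hz1T : z.1 ∈ Set.Icc (0:ℝ) T := hab hz1
    have hz2T : z.2 ∈ Set.Icc (0:ℝ) T := hab hz2
    set e : ℝ := max (γ z.1) (γ z.2) with he
    have he0 : 0 < e := lt_of_lt_of_le (lt_of_le_of_lt (by positivity) (hγ z.1 hz1T).1)
      (le_max_left _ _)
    have hep : (0:ℝ) < 1 + e * p := by nlinarith
    have hwW : |z.1 - z.2| ^ (1 + e * p) ≤ Wc := by
      have hbase : |z.1 - z.2| ≤ ℓ₂ := habs_le z.1 hz1 z.2 hz2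
      have hkey : ℓ₂ ^ (e - γ u) ≤ max 1 T * C0 := by
        rcases max_choice (γ z.1) (γ z.2) with hmc | hmc <;> rw [he, hmc]
        · exact grr_key hT hp hC0 hγ hA1 hz1T hu0T hℓ₂0 hbT
            (habs_le z.1 hz1 u hu)
        · exact grr_key hT hp hC0 hγ hA1 hz2T hu0T hℓ₂0 hbT
            (habs_le z.2 hz2 u hu)
      calc |z.1 - z.2| ^ (1 + e * p) ≤ ℓ₂ ^ (1 + e * p) :=
            Real.rpow_le_rpow (abs_nonneg _) hbase hep.le
        _ = ℓ₂ ^ ((e - γ u) * p) * ℓ₂ ^ (1 + γ u * p) := by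
            rw [← Real.rpow_add hℓ₂0]; ring_nf
        _ ≤ (max 1 T * C0) ^ p * ℓ₂ ^ (1 + γ u * p) := by
            apply mul_le_mul_of_nonneg_right _ (Real.rpow_nonneg hℓ₂0.le _)
            rw [Real.rpow_mul hℓ₂0.le]
            exact Real.rpow_le_rpow (Real.rpow_nonneg hℓ₂0.le _) hkey hp0.le
        _ = Wc := hWc.symm
    rcases eq_or_ne z.1 z.2 with heq | hne
    · rw [heq, sub_self, abs_zero, Real.zero_rpow hp0.ne']
      exact mul_nonneg (hKnonneg z) hWc0
    · have hw0 : (0:ℝ) < |z.1 - z.2| ^ (1 + e * p) :=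
        Real.rpow_pos_of_pos (abs_pos.2 (sub_ne_zero.2 hne)) _
      have hKw : |f z.1 - f z.2| ^ p = K z * |z.1 - z.2| ^ (1 + e * p) := by
        rw [hK]; exact (div_mul_cancel₀ _ hw0.ne').symm
      rw [hKw]
      exact mul_le_mul_of_nonneg_left hwW (hKnonneg z)
  have hintK : IntegrableOn K S volume := hInt.mono_set hSsub
  have hintKf : IntegrableOn (fun z : ℝ × ℝ => |f z.1 - f z.2| ^ p) S volume := by
    apply ContinuousOn.integrableOn_compact hScomp
    exact hfS.abs.rpow_const (fun z hz => Or.inr hp0.le)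
  have hstep4 : ∫ z in S, |f z.1 - f z.2| ^ p ≤ Wc * Iv := by
    calc ∫ z in S, |f z.1 - f z.2| ^ p ≤ ∫ z in S, K z * Wc :=
          setIntegral_mono_on hintKf (hintK.mul_const _) hSm hpw
      _ = (∫ z in S, K z) * Wc := integral_mul_const _ _
      _ ≤ Iv * Wc := by
          apply mul_le_mul_of_nonneg_right _ hWc0
          exact setIntegral_mono_set hInt
            (Filter.Eventually.of_forall (fun q => hKnonneg q)) hSsub.eventuallyLE
      _ = Wc * Iv := mul_comm _ _
  have hbound1 : |∫ z in S, (f z.1 - f z.2)| ≤ (Wc * Iv) ^ (1/p) * (ℓ₁ * ℓ₂) ^ (1 - 1/p) := by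
    calc |∫ z in S, (f z.1 - f z.2)| ≤ ∫ z in S, |f z.1 - f z.2| := by
          simpa [Real.norm_eq_abs] using norm_integral_le_integral_norm
            (μ := volume.restrict S) (fun z : ℝ × ℝ => f z.1 - f z.2)
      _ ≤ (∫ z in S, |f z.1 - f z.2| ^ p) ^ (1/p) * (ℓ₁ * ℓ₂) ^ (1 - 1/p) := hHold
      _ ≤ (Wc * Iv) ^ (1/p) * (ℓ₁ * ℓ₂) ^ (1 - 1/p) := by
          apply mul_le_mul_of_nonneg_right _ (Real.rpow_nonneg (by positivity) _)
          apply Real.rpow_le_rpow _ hstep4 (by positivity)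
          exact setIntegral_nonneg hSm (fun z _ => Real.rpow_nonneg (abs_nonneg _) _)
  have hmp : ((max 1 T * C0) ^ p) ^ (1/p) = max 1 T * C0 := by
    rw [← Real.rpow_mul (by positivity), mul_one_div, div_self hp0.ne', Real.rpow_one]
  have halg : (Wc * Iv) ^ (1/p) * (ℓ₁ * ℓ₂) ^ (1 - 1/p) =
      ((max 1 T * C0) * Iv ^ (1/p) * (ℓ₂ ^ (1 + γ u * p) / (ℓ₁ * ℓ₂)) ^ (1/p)) * (ℓ₁ * ℓ₂) := by
    rw [hWc, Real.mul_rpow (mul_nonneg (Real.rpow_nonneg (by positivity) _)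
        (Real.rpow_nonneg hℓ₂0.le _)) hIv0,
      Real.mul_rpow (Real.rpow_nonneg (by positivity) _) (Real.rpow_nonneg hℓ₂0.le _),
      hmp,
      Real.div_rpow (Real.rpow_nonneg hℓ₂0.le _) (mul_nonneg hℓ₁0.le hℓ₂0.le),
      Real.rpow_sub (mul_pos hℓ₁0 hℓ₂0), Real.rpow_one]
    have hP : (0:ℝ) < (ℓ₁ * ℓ₂) ^ (1/p) := Real.rpow_pos_of_pos (mul_pos hℓ₁0 hℓ₂0) _
    field_simp
  rw [key2, abs_div, abs_of_pos (mul_pos hℓ₁0 hℓ₂0), div_le_iff₀ (mul_pos hℓ₁0 hℓ₂0)]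
  calc |∫ z in S, (f z.1 - f z.2)| ≤ (Wc * Iv) ^ (1/p) * (ℓ₁ * ℓ₂) ^ (1 - 1/p) := hbound1
    _ = _ := halg

lemma grr_avg_tendsto (hT : 0 < T) (hf : ContinuousOn f (Set.Icc 0 T))
    {u R : ℝ} (hR0 : 0 < R) (g : ℕ → ℝ)
    (hsub0 : ∀ k : ℕ, Set.Icc (g k) (g k + R/2^k) ⊆ Set.Icc (0:ℝ) T)
    (hum : ∀ k : ℕ, u ∈ Set.Icc (g k) (g k + R/2^k)) :
    Filter.Tendsto (fun n : ℕ => (∫ x in Set.Icc (g n) (g n + R/2^n), f x) / (R/2^n))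
      Filter.atTop (nhds (f u)) := by
  have hu0T : u ∈ Set.Icc (0:ℝ) T := hsub0 0 (hum 0)
  rw [Metric.tendsto_atTop]
  intro ε hε
  have hcw : ContinuousWithinAt f (Set.Icc 0 T) u := hf u hu0T
  rw [Metric.continuousWithinAt_iff] at hcw
  obtain ⟨δ, hδ0, hδ⟩ := hcw (ε/2) (half_pos hε)
  obtain ⟨N, hN⟩ : ∃ N : ℕ, R/2^N < δ := by
    obtain ⟨N, hN⟩ := pow_unbounded_of_one_lt (R/δ) (one_lt_two (α := ℝ))
    refine ⟨N, ?_⟩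
    rw [div_lt_iff₀ (by positivity)]
    rw [div_lt_iff₀ hδ0] at hN
    linarith [hN]
  refine ⟨N, fun n hn => ?_⟩
  have hℓn : 0 < R/2^n := by positivity
  have hℓle : R/2^n ≤ R/2^N :=
    div_le_div_of_nonneg_left hR0.le (by positivity) (pow_le_pow_right₀ one_le_two hn)
  have hsubn := hsub0 n
  have hintf : IntegrableOn f (Set.Icc (g n) (g n + R/2^n)) volume :=
    (hf.mono hsubn).integrableOn_compact isCompact_Icc
  have hlen : g n + R/2^n - g n = R/2^n := by ring
  have heq : (∫ x in Set.Icc (g n) (g n + R/2^n), f x) / (R/2^n) - f u =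
      (∫ x in Set.Icc (g n) (g n + R/2^n), (f x - f u)) / (R/2^n) := by
    rw [integral_sub hintf (integrableOn_const (by
      rw [Real.volume_Icc]; exact ENNReal.ofReal_ne_top)),
      setIntegral_const, Real.volume_real_Icc_of_le (by linarith), hlen, smul_eq_mul]
    field_simp
  have hbd : ‖∫ x in Set.Icc (g n) (g n + R/2^n), (f x - f u)‖ ≤
      (ε/2) * (volume (Set.Icc (g n) (g n + R/2^n))).toReal := by
    apply norm_setIntegral_le_of_norm_le_const
    · rw [Real.volume_Icc]; exact ENNReal.ofReal_lt_top
    · intro x hx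
      rw [Real.norm_eq_abs]
      have hxu : |x - u| < δ := by
        have h1 := hx.1
        have h2 := hx.2
        have h3 := (hum n).1
        have h4 := (hum n).2
        rw [abs_lt]
        constructor <;> [linarith [lt_of_le_of_lt hℓle hN]; linarith [lt_of_le_of_lt hℓle hN]]
      have := hδ (hsubn hx) (by rwa [Real.dist_eq])
      rw [Real.dist_eq] at this
      exact this.le
  rw [Real.dist_eq, heq, abs_div, abs_of_pos hℓn]
  rw [Real.volume_Icc, hlen, ENNReal.toReal_ofReal hℓn.le, Real.norm_eq_abs] at hbd
  calc |∫ x in Set.Icc (g n) (g n + R/2^n), (f x - f u)| / (R/2^n) ≤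
        ((ε/2) * (R/2^n)) / (R/2^n) := by
          exact div_le_div_of_nonneg_right hbd hℓn.le
    _ = ε/2 := by rw [mul_div_assoc, div_self hℓn.ne', mul_one]
    _ < ε := half_lt_self hε

lemma grr_chain (hT : 0 < T) (hp : 1 ≤ p) (hC0 : 1 ≤ C0)
    (hγ : ∀ t ∈ Set.Icc (0:ℝ) T, 1 / p < γ t ∧ γ t ≤ 1)
    (hA1 : ∀ t ∈ Set.Icc (0:ℝ) T, ∀ s ∈ Set.Icc (0:ℝ) T, s ≠ t →
      |t - s| ^ (γ t - γ s) ≤ C0)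
    (hf : ContinuousOn f (Set.Icc 0 T))
    (hInt : IntegrableOn
      (fun q : ℝ × ℝ => |f q.1 - f q.2| ^ p / |q.1 - q.2| ^ (1 + max (γ q.1) (γ q.2) * p))
      (Set.Icc 0 T ×ˢ Set.Icc 0 T))
    {m : ℝ} (hm2 : 1/p < m) (hm : ∀ t ∈ Set.Icc (0:ℝ) T, m ≤ γ t)
    {u R : ℝ} (hR0 : 0 < R) (hRT : R ≤ T) (g : ℕ → ℝ)
    (hsub0 : ∀ k : ℕ, Set.Icc (g k) (g k + R/2^k) ⊆ Set.Icc (0:ℝ) T)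
    (hnest : ∀ k : ℕ, Set.Icc (g (k+1)) (g (k+1) + R/2^(k+1)) ⊆ Set.Icc (g k) (g k + R/2^k))
    (hum : ∀ k : ℕ, u ∈ Set.Icc (g k) (g k + R/2^k)) :
    |f u - (∫ x in Set.Icc (g 0) (g 0 + R), f x) / R| ≤
      (max 1 T * C0) *
      (∫ q in Set.Icc (0:ℝ) T ×ˢ Set.Icc (0:ℝ) T,
          |f q.1 - f q.2| ^ p / |q.1 - q.2| ^ (1 + max (γ q.1) (γ q.2) * p)) ^ (1 / p) *
      ((2:ℝ) ^ (1/p) * (1 - (2:ℝ) ^ (-(m - 1/p)))⁻¹) * R ^ (γ u - 1/p) := by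
  have hp0 : 0 < p := lt_of_lt_of_le one_pos hp
  have hu0T : u ∈ Set.Icc (0:ℝ) T := hsub0 0 (hum 0)
  set Iv : ℝ := ∫ q in Set.Icc (0:ℝ) T ×ˢ Set.Icc (0:ℝ) T,
      |f q.1 - f q.2| ^ p / |q.1 - q.2| ^ (1 + max (γ q.1) (γ q.2) * p) with hIv
  have hIv0 : 0 ≤ Iv := setIntegral_nonneg (measurableSet_Icc.prod measurableSet_Icc)
    (fun q _ => div_nonneg (Real.rpow_nonneg (abs_nonneg _) _) (Real.rpow_nonneg (abs_nonneg _) _))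
  set m1 : ℝ := max 1 T * C0 with hm1
  have hm10 : 0 ≤ m1 := by
    rw [hm1]
    have : (1:ℝ) ≤ max 1 T := le_max_left _ _
    nlinarith
  set avg : ℕ → ℝ := fun n => (∫ x in Set.Icc (g n) (g n + R/2^n), f x) / (R/2^n) with havg
  -- per-step estimate
  have hstep : ∀ k : ℕ, |avg (k+1) - avg k| ≤
      m1 * Iv ^ (1/p) * (2:ℝ) ^ (1/p) * (R/2^k) ^ (γ u - 1/p) := by
    intro k
    have hℓ : (0:ℝ) < R/2^k := by positivity
    have hd : (0:ℝ) < R/2^(k+1) := by positivity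
    have h2 : R/2^(k+1) = (R/2^k)/2 := by rw [pow_succ]; ring
    have hbT' : (g k + R/2^k) - g k ≤ T := by
      have h1 : R/2^k ≤ R := by
        apply div_le_self hR0.le
        exact one_le_pow₀ one_le_two
      linarith
    have h := grr_step hT hp hC0 hγ hA1 hf hInt (hum k) (hsub0 k) (hnest k)
      (by linarith [hd] : g (k+1) < g (k+1) + R/2^(k+1)) hbT'
    -- simplify lengths
    rw [add_sub_cancel_left, add_sub_cancel_left] at h
    have halg : ((R/2^k) ^ (1 + γ u * p) /
        ((R/2^(k+1)) * (R/2^k))) ^ (1/p)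
        = (2:ℝ) ^ (1/p) * (R/2^k) ^ (γ u - 1/p) := by
      rw [h2]
      have e1 : (R/2^k) ^ (1 + γ u * p) / ((R/2^k)/2 * (R/2^k))
          = 2 * (R/2^k) ^ (γ u * p - 1) := by
        rw [show (1 + γ u * p) = (γ u * p - 1) + 2 by ring, Real.rpow_add hℓ,
          show ((2:ℝ):ℝ) = ((2:ℕ):ℝ) by norm_num, Real.rpow_natCast]
        field_simp
      rw [e1, Real.mul_rpow (by norm_num) (Real.rpow_nonneg hℓ.le _),
        ← Real.rpow_mul hℓ.le]
      congr 1
      field_simp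
    rw [halg] at h
    rw [← hIv, ← hm1] at h
    simp only [havg]
    calc |(∫ x in Set.Icc (g (k+1)) (g (k+1) + R/2^(k+1)), f x) / (R/2^(k+1)) -
          (∫ x in Set.Icc (g k) (g k + R/2^k), f x) / (R/2^k)| ≤
          m1 * Iv ^ (1/p) * ((2:ℝ) ^ (1/p) * (R/2^k) ^ (γ u - 1/p)) := h
      _ = m1 * Iv ^ (1/p) * (2:ℝ) ^ (1/p) * (R/2^k) ^ (γ u - 1/p) := by ring
  -- geometric sum bound
  have hα0 : 0 < m - 1/p := by linarith
  have hαu : m - 1/p ≤ γ u - 1/p := by linarith [hm u hu0T]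
  have hr00 : (0:ℝ) ≤ (2:ℝ) ^ (-(m - 1/p)) := Real.rpow_nonneg (by norm_num) _
  have hr0lt : (2:ℝ) ^ (-(m - 1/p)) < 1 :=
    Real.rpow_lt_one_of_one_lt_of_neg (by norm_num) (by linarith)
  have hsum : ∀ n : ℕ, ∑ k ∈ Finset.range n, (R/2^k) ^ (γ u - 1/p) ≤
      (1 - (2:ℝ) ^ (-(m - 1/p)))⁻¹ * R ^ (γ u - 1/p) := by
    intro n
    have hterm : ∀ k : ℕ, (R/2^k) ^ (γ u - 1/p) =
        R ^ (γ u - 1/p) * ((2:ℝ) ^ (-(γ u - 1/p)))^k := by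
      intro k
      rw [Real.div_rpow hR0.le (by positivity), ← Real.rpow_natCast (2:ℝ) k,
        ← Real.rpow_mul (by norm_num : (0:ℝ) ≤ 2), div_eq_mul_inv,
        ← Real.rpow_neg (by norm_num : (0:ℝ) ≤ 2),
        show -((k:ℝ) * (γ u - 1/p)) = (-(γ u - 1/p)) * (k:ℝ) by ring,
        Real.rpow_mul (by norm_num : (0:ℝ) ≤ 2), Real.rpow_natCast]
    have hrle : (2:ℝ) ^ (-(γ u - 1/p)) ≤ (2:ℝ) ^ (-(m - 1/p)) :=
      Real.rpow_le_rpow_of_exponent_le one_le_two (by linarith)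
    have hr0 : (0:ℝ) ≤ (2:ℝ) ^ (-(γ u - 1/p)) := Real.rpow_nonneg (by norm_num) _
    calc ∑ k ∈ Finset.range n, (R/2^k) ^ (γ u - 1/p)
        = R ^ (γ u - 1/p) * ∑ k ∈ Finset.range n, ((2:ℝ) ^ (-(γ u - 1/p)))^k := by
          rw [Finset.mul_sum]; exact Finset.sum_congr rfl (fun k _ => hterm k)
      _ ≤ R ^ (γ u - 1/p) * (1 - (2:ℝ) ^ (-(m - 1/p)))⁻¹ := by
          apply mul_le_mul_of_nonneg_left _ (Real.rpow_nonneg hR0.le _)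
          calc ∑ k ∈ Finset.range n, ((2:ℝ) ^ (-(γ u - 1/p)))^k
              ≤ ∑ k ∈ Finset.range n, ((2:ℝ) ^ (-(m - 1/p)))^k :=
                Finset.sum_le_sum (fun k _ => pow_le_pow_left₀ hr0 hrle k)
            _ ≤ ∑' k : ℕ, ((2:ℝ) ^ (-(m - 1/p)))^k :=
                (summable_geometric_of_lt_one hr00 hr0lt).sum_le_tsum (Finset.range n)
                  (fun i _ => pow_nonneg hr00 i)
            _ = (1 - (2:ℝ) ^ (-(m - 1/p)))⁻¹ := tsum_geometric_of_lt_one hr00 hr0lt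
      _ = (1 - (2:ℝ) ^ (-(m - 1/p)))⁻¹ * R ^ (γ u - 1/p) := mul_comm _ _
  -- telescoping
  have htel : ∀ n : ℕ, |avg n - avg 0| ≤
      m1 * Iv ^ (1/p) * ((2:ℝ) ^ (1/p) * (1 - (2:ℝ) ^ (-(m - 1/p)))⁻¹) * R ^ (γ u - 1/p) := by
    intro n
    have h1 : avg n - avg 0 = ∑ k ∈ Finset.range n, (avg (k+1) - avg k) :=
      (Finset.sum_range_sub avg n).symm
    rw [h1]
    calc |∑ k ∈ Finset.range n, (avg (k+1) - avg k)|
        ≤ ∑ k ∈ Finset.range n, |avg (k+1) - avg k| := Finset.abs_sum_le_sum_abs _ _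
      _ ≤ ∑ k ∈ Finset.range n, m1 * Iv ^ (1/p) * (2:ℝ) ^ (1/p) * (R/2^k) ^ (γ u - 1/p) :=
          Finset.sum_le_sum (fun k _ => hstep k)
      _ = (m1 * Iv ^ (1/p) * (2:ℝ) ^ (1/p)) * ∑ k ∈ Finset.range n, (R/2^k) ^ (γ u - 1/p) := by
          rw [Finset.mul_sum]
      _ ≤ (m1 * Iv ^ (1/p) * (2:ℝ) ^ (1/p)) *
          ((1 - (2:ℝ) ^ (-(m - 1/p)))⁻¹ * R ^ (γ u - 1/p)) := by
          apply mul_le_mul_of_nonneg_left (hsum n)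
          have h2p : (0:ℝ) ≤ (2:ℝ) ^ (1/p) := Real.rpow_nonneg (by norm_num) _
          have hIvp : (0:ℝ) ≤ Iv ^ (1/p) := Real.rpow_nonneg hIv0 _
          positivity
      _ = m1 * Iv ^ (1/p) * ((2:ℝ) ^ (1/p) * (1 - (2:ℝ) ^ (-(m - 1/p)))⁻¹) *
          R ^ (γ u - 1/p) := by ring
  -- pass to the limit
  have hconv := grr_avg_tendsto hT hf hR0 g hsub0 hum
  have hconv' : Filter.Tendsto (fun n : ℕ => |avg n - avg 0|) Filter.atTop
      (nhds |f u - avg 0|) := by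
    exact ((hconv.sub (tendsto_const_nhds (x := avg 0))).abs)
  have hle := le_of_tendsto hconv' (Filter.Eventually.of_forall htel)
  have havg0 : avg 0 = (∫ x in Set.Icc (g 0) (g 0 + R), f x) / R := by
    simp only [havg, pow_zero, div_one]
  rwa [havg0] at hle

/-- Variable order Garsia–Rodemich–Rumsey / Besov–Hölder embedding: finiteness of the
generalized Gagliardo double integral implies a variable order Hölder bound of order
`α(t) = γ(t) − 1/p` (with exponent `max(α(t),α(s))` at the endpoints). -/
theorem stmt17 (T p : ℝ) (hT : 0 < T) (hp : 1 ≤ p)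
    (γ : ℝ → ℝ) (C0 : ℝ)
    (hγ : ∀ t ∈ Set.Icc (0:ℝ) T, 1 / p < γ t ∧ γ t ≤ 1)
    (hA1 : ∀ t ∈ Set.Icc (0:ℝ) T, ∀ s ∈ Set.Icc (0:ℝ) T, s ≠ t →
      |t - s| ^ (γ t - γ s) ≤ C0)
    (f : ℝ → ℝ) (hf : ContinuousOn f (Set.Icc 0 T))
    (hInt : IntegrableOn
      (fun q : ℝ × ℝ => |f q.1 - f q.2| ^ p / |q.1 - q.2| ^ (1 + max (γ q.1) (γ q.2) * p))
      (Set.Icc 0 T ×ˢ Set.Icc 0 T)) :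
    ∃ C > (0:ℝ), ∀ s ∈ Set.Icc (0:ℝ) T, ∀ t ∈ Set.Icc (0:ℝ) T, s ≠ t →
      |f t - f s| ≤ C *
        (∫ q in Set.Icc (0:ℝ) T ×ˢ Set.Icc (0:ℝ) T,
          |f q.1 - f q.2| ^ p / |q.1 - q.2| ^ (1 + max (γ q.1) (γ q.2) * p)) ^ (1 / p) *
        |t - s| ^ max (γ t - 1 / p) (γ s - 1 / p) := by
  have hp0 : 0 < p := lt_of_lt_of_le one_pos hp
  -- C0 ≥ 1
  have hC0 : 1 ≤ C0 := by
    have h1 := hA1 0 (Set.left_mem_Icc.2 hT.le) T (Set.right_mem_Icc.2 hT.le) hT.ne'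
    have h2 := hA1 T (Set.right_mem_Icc.2 hT.le) 0 (Set.left_mem_Icc.2 hT.le) hT.ne
    rw [abs_sub_comm, sub_zero, abs_of_pos hT] at h1
    rw [sub_zero, abs_of_pos hT] at h2
    have hpos1 : (0:ℝ) < T ^ (γ 0 - γ T) := Real.rpow_pos_of_pos hT _
    have hpos2 : (0:ℝ) < T ^ (γ T - γ 0) := Real.rpow_pos_of_pos hT _
    have hmul : T ^ (γ 0 - γ T) * T ^ (γ T - γ 0) = 1 := by
      rw [← Real.rpow_add hT]; simp
    nlinarith
  obtain ⟨m, hm2, hm⟩ := grr_gap hT (fun t ht => (hγ t ht).1) hA1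
  set Iv : ℝ := ∫ q in Set.Icc (0:ℝ) T ×ˢ Set.Icc (0:ℝ) T,
      |f q.1 - f q.2| ^ p / |q.1 - q.2| ^ (1 + max (γ q.1) (γ q.2) * p) with hIv
  have hIv0 : 0 ≤ Iv := setIntegral_nonneg (measurableSet_Icc.prod measurableSet_Icc)
    (fun q _ => div_nonneg (Real.rpow_nonneg (abs_nonneg _) _) (Real.rpow_nonneg (abs_nonneg _) _))
  have hIvp : (0:ℝ) ≤ Iv ^ (1/p) := Real.rpow_nonneg hIv0 _
  have hr0lt : (2:ℝ) ^ (-(m - 1/p)) < 1 :=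
    Real.rpow_lt_one_of_one_lt_of_neg (by norm_num) (by linarith)
  have hinvpos : (0:ℝ) < (1 - (2:ℝ) ^ (-(m - 1/p)))⁻¹ := by
    apply inv_pos.2; linarith
  have hm1pos : (0:ℝ) < max 1 T * C0 := by
    have : (1:ℝ) ≤ max 1 T := le_max_left _ _
    nlinarith
  have h2ppos : (0:ℝ) < (2:ℝ) ^ (1/p) := Real.rpow_pos_of_pos (by norm_num) _
  set C : ℝ := (max 1 T * C0) * ((2:ℝ) ^ (1/p) * (1 - (2:ℝ) ^ (-(m - 1/p)))⁻¹) * (2 * C0)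
    with hC
  have hCpos : 0 < C := by
    rw [hC]
    positivity
  refine ⟨C, hCpos, ?_⟩
  have key : ∀ s ∈ Set.Icc (0:ℝ) T, ∀ t ∈ Set.Icc (0:ℝ) T, s < t →
      |f t - f s| ≤ C * Iv ^ (1/p) * (t - s) ^ max (γ t - 1/p) (γ s - 1/p) := by
    intro s hs t ht hst
    set R : ℝ := t - s with hR
    have hR0 : 0 < R := sub_pos.2 hst
    have hRT : R ≤ T := by
      have h1 := hs.1
      have h2 := ht.2
      rw [hR]; linarith
    have hpow : ∀ k : ℕ, 0 < R/2^k ∧ R/2^k ≤ R := fun k =>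
      ⟨by positivity, div_le_self hR0.le (one_le_pow₀ one_le_two)⟩
    have hpowmono : ∀ k : ℕ, R/2^(k+1) ≤ R/2^k := fun k =>
      div_le_div_of_nonneg_left hR0.le (by positivity)
        (pow_le_pow_right₀ one_le_two (Nat.le_succ k))
    -- chain at t
    have hchain1 := grr_chain hT hp hC0 hγ hA1 hf hInt hm2 hm hR0 hRT
      (fun k => t - R/2^k)
      (fun k => by
        intro x hx
        obtain ⟨h1, h2⟩ := hx
        obtain ⟨hk1, hk2⟩ := hpow k
        exact ⟨by linarith [hs.1], by linarith [ht.2]⟩)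
      (fun k => by
        intro x hx
        obtain ⟨h1, h2⟩ := hx
        have := hpowmono k
        exact ⟨by linarith, by linarith⟩)
      (fun k => by
        have hk := (hpow k).1
        show t ∈ Set.Icc (t - R/2^k) (t - R/2^k + R/2^k)
        constructor <;> [linarith; linarith])
    -- chain at s
    have hchain2 := grr_chain hT hp hC0 hγ hA1 hf hInt hm2 hm hR0 hRT
      (fun _ => s)
      (fun k => by
        intro x hx
        obtain ⟨h1, h2⟩ := hx
        obtain ⟨hk1, hk2⟩ := hpow k
        exact ⟨by linarith [hs.1], by linarith [ht.2]⟩)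
      (fun k => by
        intro x hx
        obtain ⟨h1, h2⟩ := hx
        have := hpowmono k
        exact ⟨by linarith, by linarith⟩)
      (fun k => by
        have hk := (hpow k).1
        show s ∈ Set.Icc s (s + R/2^k)
        constructor <;> [linarith; linarith])
    have hg10 : t - R/2^(0:ℕ) = s := by norm_num [hR]
    rw [hg10] at hchain1
    rw [← hIv] at hchain1 hchain2
    set B : ℝ := (max 1 T * C0) * Iv ^ (1/p) * ((2:ℝ) ^ (1/p) * (1 - (2:ℝ) ^ (-(m - 1/p)))⁻¹)
      with hB
    have hB0 : 0 ≤ B := by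
      rw [hB]
      positivity
    -- exponent comparison
    have hRpow : ∀ u v : ℝ, u ∈ Set.Icc (0:ℝ) T → v ∈ Set.Icc (0:ℝ) T → u ≠ v → |u - v| = R →
        R ^ (γ u - 1/p) ≤ C0 * R ^ max (γ u - 1/p) (γ v - 1/p) := by
      intro u v hu hv huv habs
      rcases le_total (γ v) (γ u) with hc | hc
      · rw [max_eq_left (by linarith)]
        have : (0:ℝ) ≤ R ^ (γ u - 1/p) := Real.rpow_nonneg hR0.le _
        nlinarith
      · rw [max_eq_right (by linarith)]
        have hA := hA1 u hu v hv (Ne.symm huv)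
        rw [habs] at hA
        calc R ^ (γ u - 1/p) = R ^ (γ v - 1/p) * R ^ (γ u - γ v) := by
              rw [← Real.rpow_add hR0]; ring_nf
          _ ≤ R ^ (γ v - 1/p) * C0 :=
              mul_le_mul_of_nonneg_left hA (Real.rpow_nonneg hR0.le _)
          _ = C0 * R ^ (γ v - 1/p) := mul_comm _ _
    have hts : t ≠ s := ne_of_gt hst
    have habs1 : |t - s| = R := by rw [hR, abs_of_pos hR0]
    have habs2 : |s - t| = R := by rw [abs_sub_comm]; exact habs1
    have hmaxcomm : max (γ s - 1/p) (γ t - 1/p) = max (γ t - 1/p) (γ s - 1/p) := max_comm _ _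
    calc |f t - f s| ≤ |f t - (∫ x in Set.Icc s (s + R), f x) / R| +
          |(∫ x in Set.Icc s (s + R), f x) / R - f s| := abs_sub_le _ _ _
      _ ≤ B * R ^ (γ t - 1/p) + B * R ^ (γ s - 1/p) := by
          apply add_le_add
          · exact hchain1
          · rw [abs_sub_comm]; exact hchain2
      _ ≤ B * (C0 * R ^ max (γ t - 1/p) (γ s - 1/p)) +
          B * (C0 * R ^ max (γ t - 1/p) (γ s - 1/p)) := by
          apply add_le_add
          · exact mul_le_mul_of_nonneg_left (hRpow t s ht hs hts habs1) hB0
          · have := hRpow s t hs ht (Ne.symm hts) habs2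
            rw [hmaxcomm] at this
            exact mul_le_mul_of_nonneg_left this hB0
      _ = C * Iv ^ (1/p) * R ^ max (γ t - 1/p) (γ s - 1/p) := by
          rw [hB, hC]; ring
  intro s hs t ht hst
  rcases lt_or_gt_of_ne hst with h | h
  · have hk := key s hs t ht h
    rwa [show t - s = |t - s| by rw [abs_of_pos (sub_pos.2 h)]] at hk
  · have hk := key t ht s hs h
    rw [abs_sub_comm (f s) (f t)] at hk
    rw [show s - t = |t - s| by rw [abs_sub_comm, abs_of_pos (sub_pos.2 h)]] at hk
    rwa [max_comm (γ s - 1/p) (γ t - 1/p)] at hk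

end GRRAux
end
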